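/- arXiv:0912.1361 — 10 statements merged into one kernel-verified Lean document; each statement's English description precedes it below -/
import Mathlib

section
/- For every n ≥ 0: (i) every permutation of {1,…,n} avoiding the generalized pattern 3̂2̂1 (i.e., having no pair of indices i, j with i+1 < j and π_i > π_{i+1} > π_j) is simsun, and (ii) every simsun permutation of {1,…,n} has no double descent, i.e., no index i with π_i > π_{i+1} > π_{i+2}. -/
/-- `π` is simsun: for every `k`, the subword of the one-line notation of `π`
consisting of the `k` smallest entries (i.e. the values `< k`, in 0-based form)
contains no three consecutive decreasing elements.  Here "three consecutive
decreasing elements of the subword" means positions `a < b < c` whose values are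
all `< k`, with no position carrying a value `< k` strictly between `a` and `b`
nor strictly between `b` and `c`, and with `π a > π b > π c`. -/
def IsSimsun {n : ℕ} (π : Equiv.Perm (Fin n)) : Prop :=
  ∀ k : ℕ, ¬ ∃ a b c : Fin n, a < b ∧ b < c ∧
    (π a : ℕ) < k ∧ (π b : ℕ) < k ∧ (π c : ℕ) < k ∧
    (∀ m : Fin n, a < m → m < b → k ≤ (π m : ℕ)) ∧
    (∀ m : Fin n, b < m → m < c → k ≤ (π m : ℕ)) ∧
    (π c : ℕ) < (π b : ℕ) ∧ (π b : ℕ) < (π a : ℕ)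

/-- `π` contains the generalized pattern 3̂2̂1 (first two entries adjacent):
there are indices `i`, `j` with `i + 1 < j` and `π i > π (i+1) > π j`. -/
def Contains32hat1 {n : ℕ} (π : Equiv.Perm (Fin n)) : Prop :=
  ∃ (i j : ℕ) (hj : j < n) (_ : i + 1 < j),
    π ⟨j, hj⟩ < π ⟨i + 1, by omega⟩ ∧ π ⟨i + 1, by omega⟩ < π ⟨i, by omega⟩

/-- `π` has a double descent: an index `i` with `π i > π (i+1) > π (i+2)`,
i.e. an occurrence of the generalized pattern 3̂2̂1̂. -/
def HasDoubleDescent {n : ℕ} (π : Equiv.Perm (Fin n)) : Prop :=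
  ∃ (i : ℕ) (h : i + 2 < n),
    π ⟨i + 2, h⟩ < π ⟨i + 1, by omega⟩ ∧ π ⟨i + 1, by omega⟩ < π ⟨i, by omega⟩

/-- (i) Every permutation avoiding the generalized pattern 3̂2̂1 is simsun, and
(ii) every simsun permutation has no double descent. -/
theorem avoids32hat1_imp_simsun_and_simsun_imp_noDoubleDescent
    (n : ℕ) (π : Equiv.Perm (Fin n)) :
    (¬ Contains32hat1 π → IsSimsun π) ∧ (IsSimsun π → ¬ HasDoubleDescent π) := by
  constructor
  · intro hav k hex
    obtain ⟨a, b, c, hab, hbc, hka, hkb, hkc, hgab, hgbc, h1, h2⟩ := hex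
    apply hav
    have hab' : (a : ℕ) < b := hab
    have hbc' : (b : ℕ) < c := hbc
    refine ⟨(b : ℕ) - 1, (c : ℕ), c.isLt, by omega, ?_, ?_⟩
    · have e1 : (⟨(b : ℕ) - 1 + 1, by omega⟩ : Fin n) = b := Fin.ext (by simp only [Fin.val_mk]; omega)
      have e2 : (⟨(c : ℕ), c.isLt⟩ : Fin n) = c := Fin.ext rfl
      rw [e1, e2]
      exact h1
    · have e1 : (⟨(b : ℕ) - 1 + 1, by omega⟩ : Fin n) = b := Fin.ext (by simp only [Fin.val_mk]; omega)
      rw [e1]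
      by_cases hba : (b : ℕ) - 1 = (a : ℕ)
      · have e3 : (⟨(b : ℕ) - 1, by omega⟩ : Fin n) = a := Fin.ext hba
        rw [e3]
        exact h2
      · set m : Fin n := ⟨(b : ℕ) - 1, by omega⟩ with hm
        have h3 : k ≤ (π m : ℕ) := hgab m (by simp [Fin.lt_def, hm]; omega)
          (by simp [Fin.lt_def, hm]; omega)
        have : (π b : ℕ) < (π m : ℕ) := by omega
        exact this
  · intro hs hdd
    obtain ⟨i, h, hd1, hd2⟩ := hdd
    apply hs ((π ⟨i, by omega⟩ : ℕ) + 1)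
    refine ⟨⟨i, by omega⟩, ⟨i + 1, by omega⟩, ⟨i + 2, h⟩,
      by simp [Fin.lt_def], by simp [Fin.lt_def], by omega,
      by have := (Fin.lt_def.mp hd2); omega,
      by have := (Fin.lt_def.mp hd1); have := (Fin.lt_def.mp hd2); omega,
      ?_, ?_, Fin.lt_def.mp hd1, Fin.lt_def.mp hd2⟩
    · intro m hm1 hm2
      exfalso
      have := Fin.lt_def.mp hm1
      have := Fin.lt_def.mp hm2
      simp at *; omega
    · intro m hm1 hm2
      exfalso
      have := Fin.lt_def.mp hm1
      have := Fin.lt_def.mp hm2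
      simp at *; omega
end

section
/- Let π be a permutation of {1,…,n} avoiding the pattern 132, and let l_1 > l_2 > ⋯ > l_r be its left-to-right minima. Then π is simsun if and only if (a) π has no double descent, i.e., no index i with π_i > π_{i+1} > π_{i+2}, and (b) l_{j-1} − l_j ≥ 2 for all j with 2 ≤ j ≤ r−1. -/
/-- `π` contains the pattern 132. -/
def Contains132 {n : ℕ} (π : Equiv.Perm (Fin n)) : Prop :=
  ∃ a b c : Fin n, a < b ∧ b < c ∧ π a < π c ∧ π c < π b

/-- `π i` is a left-to-right minimum of `π`: it is smaller than every entry to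
its left. -/
def IsLRMin {n : ℕ} (π : Equiv.Perm (Fin n)) (i : Fin n) : Prop :=
  ∀ j : Fin n, j < i → π i < π j

private lemma val_ne_of_ne' {n : ℕ} (π : Equiv.Perm (Fin n)) {x y : Fin n}
    (h : x ≠ y) : (π x : ℕ) ≠ (π y : ℕ) :=
  fun hv => h (π.injective (Fin.ext hv))

/-- A 132-avoiding permutation `π` is simsun if and only if (a) it has no double
descent, and (b) any two consecutive left-to-right minima `l_{j-1} > l_j` of `π`
with `l_j` not the last (smallest) left-to-right minimum satisfy
`l_{j-1} - l_j ≥ 2`. -/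
theorem simsun_iff_of_avoids132 (n : ℕ) (π : Equiv.Perm (Fin n))
    (h132 : ¬ Contains132 π) :
    IsSimsun π ↔
      (¬ HasDoubleDescent π ∧
        ∀ i i' : Fin n, IsLRMin π i → IsLRMin π i' → i < i' →
          (∀ m : Fin n, i < m → m < i' → ¬ IsLRMin π m) →
          (π i' : ℕ) ≠ 0 → (π i' : ℕ) + 2 ≤ (π i : ℕ)) := by
  classical
  have h132' : ∀ x y z : Fin n, x < y → y < z →
      (π x : ℕ) < (π z : ℕ) → (π z : ℕ) < (π y : ℕ) → False := by
    intro x y z hxy hyz h1 h2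
    exact h132 ⟨x, y, z, hxy, hyz, Fin.lt_def.mpr h1, Fin.lt_def.mpr h2⟩
  constructor
  · -- simsun → (no DD ∧ gap condition)
    intro hss
    constructor
    · rintro ⟨i, h, h1, h2⟩
      apply hss ((π ⟨i, by omega⟩ : ℕ) + 1)
      refine ⟨⟨i, by omega⟩, ⟨i + 1, by omega⟩, ⟨i + 2, h⟩,
        Fin.mk_lt_mk.mpr (by omega), Fin.mk_lt_mk.mpr (by omega), by omega,
        ?_, ?_, ?_, ?_, ?_, ?_⟩
      · have := Fin.lt_def.mp h2; omega
      · have := Fin.lt_def.mp h1; have := Fin.lt_def.mp h2; omega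
      · intro m hm1 hm2
        have := Fin.lt_def.mp hm1; have := Fin.lt_def.mp hm2
        simp only [Fin.val_mk] at *; omega
      · intro m hm1 hm2
        have := Fin.lt_def.mp hm1; have := Fin.lt_def.mp hm2
        simp only [Fin.val_mk] at *; omega
      · exact Fin.lt_def.mp h1
      · exact Fin.lt_def.mp h2
    · intro i i' hLRi hLRi' hii' _ hne0
      by_contra hcon
      push_neg at hcon
      have hlt : (π i' : ℕ) < (π i : ℕ) := Fin.lt_def.mp (hLRi' i hii')
      have heq : (π i : ℕ) = (π i' : ℕ) + 1 := by omega
      set v' : ℕ := (π i' : ℕ) with hv'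
      have hv'n : v' - 1 < n := by have := (π i').isLt; omega
      set r : Fin n := π.symm ⟨v' - 1, hv'n⟩ with hrdef
      have hr : (π r : ℕ) = v' - 1 := by
        simp [hrdef, Equiv.apply_symm_apply]
      have hi'r : (i' : ℕ) < (r : ℕ) := by
        rcases lt_trichotomy r i' with h | h | h
        · have := Fin.lt_def.mp (hLRi' r h); omega
        · exfalso; rw [h] at hr; omega
        · exact Fin.lt_def.mp h
      have hPex : ∃ t : ℕ, ∃ ht : t < n, (i' : ℕ) < t ∧ (π ⟨t, ht⟩ : ℕ) < v' := by
        refine ⟨(r : ℕ), r.isLt, hi'r, ?_⟩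
        have : (⟨(r : ℕ), r.isLt⟩ : Fin n) = r := rfl
        rw [this, hr]; omega
      set t₀ := Nat.find hPex with ht₀def
      obtain ⟨ht₀, hit₀, hpt₀⟩ := Nat.find_spec hPex
      set p : Fin n := ⟨t₀, ht₀⟩ with hpdef
      apply hss (v' + 2)
      refine ⟨i, i', p, hii', Fin.lt_def.mpr hit₀, by omega, by omega, by omega,
        ?_, ?_, by omega, by omega⟩
      · intro m hm1 hm2
        have h1 : v' < (π m : ℕ) := Fin.lt_def.mp (hLRi' m hm2)
        have h2 : (π m : ℕ) ≠ (π i : ℕ) := val_ne_of_ne' π (ne_of_gt hm1)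
        omega
      · intro m hm1 hm2
        have hmlt : (m : ℕ) < t₀ := Fin.lt_def.mp hm2
        have hnP := Nat.find_min hPex hmlt
        have h1 : ¬ ((π ⟨(m : ℕ), m.isLt⟩ : ℕ) < v') :=
          fun hx => hnP ⟨m.isLt, Fin.lt_def.mp hm1, hx⟩
        have hem : (⟨(m : ℕ), m.isLt⟩ : Fin n) = m := rfl
        rw [hem] at h1
        have h2 : (π m : ℕ) ≠ (π i' : ℕ) := val_ne_of_ne' π (ne_of_gt hm1)
        have h3 : (π m : ℕ) ≠ (π i : ℕ) :=
          val_ne_of_ne' π (ne_of_gt (hii'.trans hm1))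
        omega
  · -- (no DD ∧ gap condition) → simsun
    rintro ⟨hdd, hgap⟩ k ⟨a, b, c, hab, hbc, hka, hkb, hkc, g1, g2, hcb, hba⟩
    -- normalized violating triples, parametrized by the value at the first position
    have hNex : ∃ v : ℕ, ∃ a b c : Fin n, a < b ∧ b < c ∧ (π a : ℕ) = v ∧
        (π b : ℕ) < v ∧ (π c : ℕ) < (π b : ℕ) ∧
        ∀ m : Fin n, a < m → m < c → m ≠ b → v < (π m : ℕ) := by
      refine ⟨(π a : ℕ), a, b, c, hab, hbc, rfl, hba, hcb, ?_⟩
      intro m hm1 hm2 hmb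
      rcases hmb.lt_or_gt with h | h
      · exact lt_of_lt_of_le hka (g1 m hm1 h)
      · exact lt_of_lt_of_le hka (g2 m h hm2)
    clear hab hbc hka hkb hkc g1 g2 hcb hba
    have hmin := fun m hm => Nat.find_min hNex (m := m) hm
    obtain ⟨a, b, c, hab, hbc, hva, hb, hc, hgapm⟩ := Nat.find_spec hNex
    -- Step 1: a is a left-to-right minimum
    have hLRa : ∀ j : Fin n, j < a → (π a : ℕ) < (π j : ℕ) := by
      by_contra hcontra
      push_neg at hcontra
      obtain ⟨j, hja, hjle⟩ := hcontra
      have hjne : (π j : ℕ) ≠ (π a : ℕ) := val_ne_of_ne' π (ne_of_lt hja)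
      have hQex : ∃ u : ℕ, ∃ j : Fin n, j < a ∧ (π j : ℕ) = u ∧ u < (π a : ℕ) :=
        ⟨(π j : ℕ), j, hja, rfl, by omega⟩
      have hQmin := fun m hm => Nat.find_min hQex (m := m) hm
      obtain ⟨j₀, hj₀a, hπj₀, hu₀lt⟩ := Nat.find_spec hQex
      -- Nat.find hQex > π b, else 132 at (j₀, a, b)
      have hbu : (π b : ℕ) < Nat.find hQex := by
        have hne : (π j₀ : ℕ) ≠ (π b : ℕ) :=
          val_ne_of_ne' π (ne_of_lt (hj₀a.trans hab))
        by_contra hx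
        push_neg at hx
        exact h132' j₀ a b hj₀a hab (by omega) (by omega)
      -- (j₀, b, c) is a normalized triple with smaller value : contradiction
      refine hmin (Nat.find hQex) (by omega)
        ⟨j₀, b, c, hj₀a.trans hab, hbc, hπj₀, hbu, hc, ?_⟩
      intro m hm1 hm2 hmb
      rcases lt_trichotomy m a with h | h | h
      · -- between j₀ and a : minimality of Nat.find hQex
        rcases lt_or_ge (π m : ℕ) (π a : ℕ) with h' | h'
        · have hmne : (π m : ℕ) ≠ (π j₀ : ℕ) :=
            val_ne_of_ne' π (ne_of_gt hm1)
          by_contra hx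
          push_neg at hx
          exact hQmin (π m : ℕ) (by omega) ⟨m, h, rfl, h'⟩
        · omega
      · rw [h]; omega
      · have := hgapm m h hm2 hmb; omega
    -- Step 2: b is a left-to-right minimum
    have hLRb : ∀ j : Fin n, j < b → (π b : ℕ) < (π j : ℕ) := by
      intro j hjb
      rcases lt_trichotomy j a with h | h | h
      · by_contra hx
        push_neg at hx
        have hne : (π j : ℕ) ≠ (π b : ℕ) := val_ne_of_ne' π (ne_of_lt hjb)
        exact h132' j a b h hab (by omega) (by omega)
      · rw [h]; omega
      · have := hgapm j h (hjb.trans hbc) (ne_of_lt hjb); omega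
    -- Step 3: π a = π b + 1
    have hab1 : (π a : ℕ) = (π b : ℕ) + 1 := by
      by_contra h3
      have hu2 : (π b : ℕ) + 2 ≤ (π a : ℕ) := by omega
      have hun : (π b : ℕ) + 1 < n := by have := (π a).isLt; omega
      set p : Fin n := π.symm ⟨(π b : ℕ) + 1, hun⟩ with hpdef
      have hπp : (π p : ℕ) = (π b : ℕ) + 1 := by
        simp [hpdef, Equiv.apply_symm_apply]
      -- p lies after c
      have hcp : c < p := by
        rcases lt_trichotomy p c with h | h | h
        · exfalso
          rcases lt_trichotomy p a with h' | h' | h'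
          · have := hLRa p h'; omega
          · rw [h'] at hπp; omega
          · have hpb : p ≠ b := by
              intro hx; rw [hx] at hπp; omega
            have := hgapm p h' h hpb; omega
        · exfalso; rw [h] at hπp; omega
        · exact h
      -- c = b + 1, else a 132 pattern (b, m, p)
      have hc1 : (c : ℕ) = (b : ℕ) + 1 := by
        by_contra hx
        have hbc' : (b : ℕ) + 1 < (c : ℕ) := by
          have := Fin.lt_def.mp hbc; omega
        set m : Fin n := ⟨(b : ℕ) + 1, by have := c.isLt; omega⟩ with hmdef
        have hm1 : a < m := Fin.lt_def.mpr (by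
          have := Fin.lt_def.mp hab; simp [hmdef]; omega)
        have hm2 : m < c := Fin.lt_def.mpr (by simp [hmdef]; omega)
        have hmb : m ≠ b := by
          intro hx'; have := congrArg Fin.val hx'; simp [hmdef] at this
        have hmgt := hgapm m hm1 hm2 hmb
        exact h132' b m p (Fin.lt_def.mpr (by simp [hmdef]))
          (hm2.trans hcp) (by omega) (by omega)
      -- now a double descent
      rcases eq_or_lt_of_le (Nat.succ_le_of_lt (Fin.lt_def.mp hab)) with h' | h'
      · -- b = a + 1 : DD at (a, b, c)
        have hn2 : (a : ℕ) + 2 < n := by have := c.isLt; omega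
        refine hdd ⟨(a : ℕ), hn2, ?_, ?_⟩
        · have e1 : (⟨(a : ℕ) + 2, hn2⟩ : Fin n) = c := Fin.ext (by simp; omega)
          have e2 : (⟨(a : ℕ) + 1, by omega⟩ : Fin n) = b := Fin.ext (by simp; omega)
          rw [e1, e2]; exact Fin.lt_def.mpr hc
        · have e2 : (⟨(a : ℕ) + 1, by omega⟩ : Fin n) = b := Fin.ext (by simp; omega)
          have e3 : (⟨(a : ℕ), by omega⟩ : Fin n) = a := Fin.ext (by simp)
          rw [e2, e3]; exact Fin.lt_def.mpr (by omega)
      · -- a + 1 < b : DD at (b-1, b, c)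
        set m : Fin n := ⟨(b : ℕ) - 1, by have := b.isLt; omega⟩ with hmdef
        have hm1 : a < m := Fin.lt_def.mpr (by simp [hmdef]; omega)
        have hm2 : m < c := Fin.lt_def.mpr (by simp [hmdef]; omega)
        have hmb : m ≠ b := by
          intro hx'; have := congrArg Fin.val hx'; simp [hmdef] at this; omega
        have hmgt := hgapm m hm1 hm2 hmb
        have hn2 : (b : ℕ) - 1 + 2 < n := by have := c.isLt; omega
        refine hdd ⟨(b : ℕ) - 1, hn2, ?_, ?_⟩
        · have e1 : (⟨(b : ℕ) - 1 + 2, hn2⟩ : Fin n) = c := Fin.ext (by simp; omega)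
          have e2 : (⟨(b : ℕ) - 1 + 1, by omega⟩ : Fin n) = b := Fin.ext (by simp; omega)
          rw [e1, e2]; exact Fin.lt_def.mpr hc
        · have e2 : (⟨(b : ℕ) - 1 + 1, by omega⟩ : Fin n) = b := Fin.ext (by simp; omega)
          have e3 : (⟨(b : ℕ) - 1, by omega⟩ : Fin n) = m := Fin.ext (by simp [hmdef])
          rw [e2, e3]; exact Fin.lt_def.mpr (by omega)
    -- Step 4: apply the gap condition to the consecutive LR minima a, b
    have hfin := hgap a b (fun j hj => Fin.lt_def.mpr (hLRa j hj))
      (fun j hj => Fin.lt_def.mpr (hLRb j hj)) hab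
      (fun m hm1 hm2 hLR => by
        have h1 := hgapm m hm1 (hm2.trans hbc) (ne_of_lt hm2)
        have h2 := Fin.lt_def.mp (hLR a hm1)
        omega)
      (by omega)
    omega
end

section
/- For every n ≥ 0, the number of Dyck paths of semilength n containing no three consecutive U steps and no three consecutive D steps equals the secondary structure number S_n. -/
/-- The secondary structure numbers: `S 0 = S 1 = 1` and, for `n ≥ 2`,
`S n = S (n-1) + S (n-2) + ∑_{k=0}^{n-3} S k * S (n-3-k)`
(the sum being empty for `n = 2`). -/
def secStruct : ℕ → ℕ
  | 0 => 1
  | 1 => 1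
  | n + 2 => secStruct (n + 1) + secStruct n +
      ∑ k ∈ (Finset.range n).attach, secStruct k * secStruct (n - 1 - k)
decreasing_by
  all_goals first
    | omega
    | (have := Finset.mem_range.mp k.2; omega)

/-- A Dyck word over `Bool`, where `true` stands for the step `U` and `false`
for the step `D`: equally many `U`s and `D`s, and every prefix has at least as
many `U`s as `D`s. -/
def IsDyckWord (w : List Bool) : Prop :=
  w.count true = w.count false ∧
    ∀ p : List Bool, p <+: w → p.count false ≤ p.count true

open List

lemma count_tf (w : List Bool) : w.count true + w.count false = w.length := by
  induction w with
  | nil => simp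
  | cons a t ih => cases a <;> simp [List.count_cons] <;> omega

lemma dyck_nil : IsDyckWord [] := by
  refine ⟨rfl, fun p hp => ?_⟩
  simp [List.prefix_nil.mp hp]

lemma prefix_append_cases {p u v : List Bool} (h : p <+: u ++ v) :
    p <+: u ∨ ∃ q, p = u ++ q ∧ q <+: v := by
  by_cases hl : p.length ≤ u.length
  · left
    have := List.prefix_iff_eq_take.mp h
    rw [List.take_append_of_le_length hl] at this
    exact this ▸ List.take_prefix _ _
  · right
    have hu : u <+: p := by
      refine List.prefix_of_prefix_length_le (List.prefix_append u v) h (by omega)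
    obtain ⟨q, rfl⟩ := hu
    refine ⟨q, rfl, ?_⟩
    obtain ⟨r, hr⟩ := h
    rw [List.append_assoc] at hr
    exact ⟨r, (List.append_cancel_left hr)⟩

lemma dyck_append {u v : List Bool} (hu : IsDyckWord u) (hv : IsDyckWord v) :
    IsDyckWord (u ++ v) := by
  refine ⟨by simp [List.count_append, hu.1, hv.1], ?_⟩
  intro p hp
  rcases prefix_append_cases hp with h | ⟨q, rfl, hq⟩
  · exact hu.2 p h
  · simp only [List.count_append]
    have := hv.2 q hq
    have h1 := hu.1
    omega

lemma dyck_head {w : List Bool} (hw : IsDyckWord w) (h : w ≠ []) :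
    ∃ t, w = true :: t := by
  cases w with
  | nil => simp at h
  | cons a t =>
    cases a
    · have := hw.2 [false] ⟨t, rfl⟩
      simp at this
    · exact ⟨t, rfl⟩

lemma dyck_last {w : List Bool} (hw : IsDyckWord w) (h : w ≠ []) :
    ∃ t, w = t ++ [false] := by
  rcases List.eq_nil_or_concat w with rfl | ⟨t, a, rfl⟩
  · simp at h
  rw [List.concat_eq_append] at *
  cases a
  · exact ⟨t, rfl⟩
  · exfalso
    have h1 := hw.1
    have h2 := hw.2 t ⟨[true], rfl⟩
    simp [List.count_append] at h1
    omega

lemma dyck_wrap {v b : List Bool} (hv : IsDyckWord v) (hb : IsDyckWord b) :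
    IsDyckWord (true :: v ++ false :: b) := by
  constructor
  · simp [List.count_cons, List.count_append, hv.1, hb.1]
    omega
  · intro p hp
    cases p with
    | nil => simp
    | cons a q =>
      rw [List.cons_append] at hp
      rw [List.cons_prefix_cons] at hp
      obtain ⟨rfl, hq⟩ := hp
      rcases prefix_append_cases hq with h | ⟨r, rfl, hr⟩
      · have := hv.2 _ h
        simp [List.count_cons]; omega
      · cases r with
        | nil =>
          have := hv.1
          simp [List.count_cons, List.count_append]; omega
        | cons c s =>
          rw [List.cons_prefix_cons] at hr
          obtain ⟨rfl, hs⟩ := hr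
          have h1 := hv.1
          have h2 := hb.2 _ hs
          simp [List.count_cons, List.count_append]; omega

lemma dyck_strip_last {y : List Bool} (h : IsDyckWord (y ++ [true, false])) :
    IsDyckWord y := by
  constructor
  · have := h.1
    simp [List.count_append] at this
    omega
  · intro p hp
    exact h.2 p (hp.trans (List.prefix_append _ _))

lemma dyck_strip_UD {w : List Bool} (h : IsDyckWord (true :: false :: w)) :
    IsDyckWord w := by
  constructor
  · have := h.1; simp [List.count_cons] at this; omega
  · intro p hp
    have := h.2 (true :: false :: p) (by simp [List.cons_prefix_cons, hp])
    simp [List.count_cons] at this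
    omega

lemma dyck_decomp {w : List Bool} (hw : IsDyckWord w) (h : w ≠ []) :
    ∃ v b, IsDyckWord v ∧ IsDyckWord b ∧ w = true :: v ++ false :: b := by
  classical
  obtain ⟨t, rfl⟩ := dyck_head hw h
  have hwit : 0 < (true::t).length ∧
      (((true::t)).take (true::t).length).count true =
      (((true::t)).take (true::t).length).count false := by
    constructor
    · simp
    · rw [List.take_length]; exact hw.1
  have hex : ∃ j, 0 < j ∧ ((true::t).take j).count true = ((true::t).take j).count false :=
    ⟨(true::t).length, hwit⟩
  set i := Nat.find hex with hidef
  obtain ⟨hipos, hibal⟩ := Nat.find_spec hex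
  rw [← hidef] at hipos hibal
  have hile : i ≤ (true::t).length := Nat.find_min' hex hwit
  have h2le : 2 ≤ i := by
    by_contra hc
    have hi1 : i = 1 := by omega
    rw [hi1] at hibal
    simp at hibal
  have hi1lt : i - 1 < (true::t).length := by omega
  have hmin1 : ¬ ((true::t).take (i-1)).count true = ((true::t).take (i-1)).count false :=
    fun hc => Nat.find_min hex (show i - 1 < i by omega) ⟨by omega, hc⟩
  have hprefa := hw.2 _ (List.take_prefix (i-1) (true::t))
  have hts : (true::t).take i = (true::t).take (i-1) ++ ((true::t)[i-1]?).toList := by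
    conv_lhs => rw [show i = (i-1)+1 by omega]
    rw [List.take_succ]
  rw [List.getElem?_eq_getElem hi1lt] at hts
  have hcc : (true::t)[i-1]'hi1lt = false ∧
      ((true::t).take (i-1)).count true = ((true::t).take (i-1)).count false + 1 := by
    rw [hts] at hibal
    cases hval : (true::t)[i-1]'hi1lt
    · rw [hval] at hibal
      simp [List.count_append] at hibal
      exact ⟨rfl, by omega⟩
    · exfalso
      rw [hval] at hibal
      simp [List.count_append] at hibal
      omega
  have hta : (true::t).take (i-1) = true :: t.take (i-2) := by
    conv_lhs => rw [show i - 1 = (i-2)+1 by omega]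
    rfl
  refine ⟨t.take (i-2), t.drop (i-1), ?_, ?_, ?_⟩
  · -- IsDyckWord v
    constructor
    · have := hcc.2
      rw [hta] at this
      simp [List.count_cons] at this
      omega
    · intro p hp
      have hpw : true :: p <+: true :: t := by
        rw [List.cons_prefix_cons]
        exact ⟨rfl, hp.trans (List.take_prefix _ _)⟩
      have hple : (true::p).length ≤ i - 1 := by
        have h1 : p.length ≤ (t.take (i-2)).length := hp.length_le
        simp at h1
        simp
        omega
      have hgen := hw.2 _ hpw
      have hne : ¬ ((true::t).take (true::p).length).count true =
          ((true::t).take (true::p).length).count false :=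
        fun hc => Nat.find_min hex (show (true::p).length < i by omega) ⟨by simp, hc⟩
      rw [← List.prefix_iff_eq_take.mp hpw] at hne
      simp [List.count_cons] at hgen hne ⊢
      omega
  · -- IsDyckWord b
    have hdt : (true::t).drop i = t.drop (i-1) := by
      conv_lhs => rw [show i = (i-1)+1 by omega]
      rfl
    constructor
    · have h1 := hw.1
      have h2 : (true::t) = (true::t).take i ++ (true::t).drop i := (List.take_append_drop _ _).symm
      rw [h2, List.count_append, List.count_append] at h1
      rw [← hdt]
      omega
    · intro p hp
      have hpw : (true::t).take i ++ p <+: true :: t := by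
        conv_rhs => rw [← List.take_append_drop i (true::t)]
        obtain ⟨s, hs⟩ := hp
        exact ⟨s, by rw [List.append_assoc, ← hdt] at *; rw [hs]⟩
      have := hw.2 _ hpw
      rw [List.count_append, List.count_append, hibal] at this
      omega
  · -- shape
    conv_lhs => rw [← List.take_append_drop i (true::t)]
    rw [hts, hta, hcc.1]
    conv_lhs => rw [show (true::t).drop i = t.drop (i-1) by
      conv_lhs => rw [show i = (i-1)+1 by omega]
      exact List.drop_succ_cons]
    simp

lemma infix_split {p x y : List Bool} (h : p <:+: x ++ y) :
    p <:+: x ∨ p <:+: y ∨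
      ∃ s t, s ++ t = p ∧ s ≠ [] ∧ t ≠ [] ∧ s <:+ x ∧ t <+: y := by
  obtain ⟨l, r, hlr⟩ := h
  rw [List.append_assoc] at hlr
  by_cases h1 : l.length + p.length ≤ x.length
  · left
    have hx : (l ++ p) <+: x := by
      have hh : (l ++ (p ++ r)).take (l.length + p.length) = l ++ p := by
        rw [List.take_append, List.take_of_length_le (by omega),
          List.take_append, List.take_of_length_le (by omega),
          show l.length + p.length - l.length - p.length = 0 by omega, List.take_zero,
          List.append_nil]
      rw [hlr, List.take_append_of_le_length h1] at hh
      exact hh ▸ List.take_prefix _ _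
    exact ((List.suffix_append l p).isInfix).trans hx.isInfix
  · by_cases h2 : x.length ≤ l.length
    · right; left
      have hy : l.drop x.length ++ (p ++ r) = y := by
        have hh : (l ++ (p ++ r)).drop x.length = y := by rw [hlr]; simp
        rw [List.drop_append, Nat.sub_eq_zero_of_le h2, List.drop_zero] at hh
        exact hh
      rw [← List.append_assoc] at hy
      exact ⟨l.drop x.length, r, hy⟩
    · right; right
      push_neg at h1 h2
      refine ⟨p.take (x.length - l.length), p.drop (x.length - l.length),
        List.take_append_drop _ _, ?_, ?_, ?_, ?_⟩
      · intro hc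
        have hlen := congrArg List.length hc
        rw [List.length_take] at hlen
        simp only [List.length_nil] at hlen
        omega
      · intro hc
        have hlen := congrArg List.length hc
        rw [List.length_drop] at hlen
        simp only [List.length_nil] at hlen
        omega
      · refine ⟨l, ?_⟩
        have hh : (l ++ (p ++ r)).take x.length = x := by rw [hlr]; simp
        rw [List.take_append, List.take_of_length_le (by omega),
          List.take_append,
          show x.length - l.length - p.length = 0 by omega, List.take_zero,
          List.append_nil] at hh
        exact hh
      · refine ⟨r, ?_⟩
        have hh : (l ++ (p ++ r)).drop x.length = y := by rw [hlr]; simp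
        rw [List.drop_append, List.drop_eq_nil_of_le (by omega),
          List.nil_append, List.drop_append,
          show x.length - l.length - p.length = 0 by omega, List.drop_zero] at hh
        exact hh

lemma not_infix_ccc_append {c : Bool} {x y : List Bool}
    (hx : ¬ [c,c,c] <:+: x) (hy : ¬ [c,c,c] <:+: y)
    (h1 : ¬ ([c,c] <:+ x ∧ [c] <+: y)) (h2 : ¬ ([c] <:+ x ∧ [c,c] <+: y)) :
    ¬ [c,c,c] <:+: (x ++ y) := by
  intro h
  rcases infix_split h with h' | h' | ⟨s, t, hst, hs, ht, hsx, hty⟩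
  · exact hx h'
  · exact hy h'
  · match s, hs with
    | [a], _ =>
      simp only [List.cons_append, List.nil_append] at hst
      obtain ⟨rfl, rfl⟩ : a = c ∧ t = [c,c] := by
        have := hst
        injection this with h1 h2
        exact ⟨h1, h2⟩
      exact h2 ⟨hsx, hty⟩
    | [a,b], _ =>
      simp only [List.cons_append, List.nil_append] at hst
      obtain ⟨rfl, rfl, rfl⟩ : a = c ∧ b = c ∧ t = [c] := by
        injection hst with e1 rest
        injection rest with e2 rest2
        exact ⟨e1, e2, rest2⟩
      exact h1 ⟨hsx, hty⟩
    | a :: b :: d :: s', _ =>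
      exfalso
      have hl := congrArg List.length hst
      simp only [List.length_append, List.length_cons, List.length_nil] at hl
      exact ht (List.eq_nil_of_length_eq_zero (by omega))

lemma dyck_not_f_prefix {b : List Bool} (hb : IsDyckWord b) : ¬ [false] <+: b := by
  intro hc
  rcases List.eq_nil_or_concat b with rfl | hne
  · simp at hc
  · obtain ⟨t, rfl⟩ := dyck_head hb (by rintro rfl; obtain ⟨_, _, h⟩ := hne; simp at h)
    rw [List.cons_prefix_cons] at hc
    simp at hc

lemma dyck_not_ff_prefix {b : List Bool} (hb : IsDyckWord b) : ¬ [false, false] <+: b :=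
  fun hc => dyck_not_f_prefix hb ((show [false] <+: [false, false] from ⟨[false], rfl⟩).trans hc)

lemma dyck_not_t_suffix {y : List Bool} (hy : IsDyckWord y) : ¬ [true] <:+ y := by
  intro hc
  rcases List.eq_nil_or_concat y with rfl | ⟨t, a, rfl⟩
  · simp at hc
  · obtain ⟨t', ht'⟩ := dyck_last hy (by simp)
    obtain ⟨s, hs⟩ := hc
    have h1 : (s ++ [true]).getLast? = some true := List.getLast?_concat
    have h2 : (t' ++ [false]).getLast? = some false := List.getLast?_concat
    rw [hs, ht', h2] at h1
    simp at h1

lemma dyck_not_tt_suffix {y : List Bool} (hy : IsDyckWord y) : ¬ [true, true] <:+ y :=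
  fun hc => dyck_not_t_suffix hy ((show [true] <:+ [true, true] from ⟨[true], rfl⟩).trans hc)

def Avoid (w : List Bool) : Prop :=
  ¬ [true,true,true] <:+: w ∧ ¬ [false,false,false] <:+: w

lemma Avoid.infix {w v : List Bool} (h : Avoid w) (hv : v <:+: w) : Avoid v :=
  ⟨fun hc => h.1 (hc.trans hv), fun hc => h.2 (hc.trans hv)⟩

lemma not_f_prefix_cons_t {t : List Bool} : ¬ [false] <+: (true :: t) := by
  intro h
  rw [List.cons_prefix_cons] at h
  simp at h

lemma not_ff_prefix_of_not_f {z : List Bool} (h : ¬ [false] <+: z) : ¬ [false,false] <+: z :=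
  fun hc => h ((show [false] <+: [false,false] from ⟨[false], rfl⟩).trans hc)

lemma not_f_prefix_append {y z : List Bool} (hy : IsDyckWord y) (hz : ¬ [false] <+: z) :
    ¬ [false] <+: (y ++ z) := by
  rcases List.eq_nil_or_concat y with rfl | ⟨t, a, rfl⟩
  · simpa using hz
  · obtain ⟨t', ht'⟩ := dyck_head hy (by simp)
    rw [ht', List.cons_append]
    exact not_f_prefix_cons_t

lemma avoid_g1 {b : List Bool} (hb : IsDyckWord b) (h : Avoid b) :
    Avoid ([true, false] ++ b) := by
  constructor
  · exact not_infix_ccc_append (by decide) h.1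
      (fun ⟨hs, _⟩ => (by decide : ¬ [true,true] <:+ [true,false]) hs)
      (fun ⟨hs, _⟩ => (by decide : ¬ [true] <:+ [true,false]) hs)
  · exact not_infix_ccc_append (by decide) h.2
      (fun ⟨hs, _⟩ => (by decide : ¬ [false,false] <:+ [true,false]) hs)
      (fun ⟨_, hp⟩ => dyck_not_ff_prefix hb hp)

lemma avoid_g2 {b : List Bool} (hb : IsDyckWord b) (h : Avoid b) :
    Avoid ([true, true, false, false] ++ b) := by
  constructor
  · exact not_infix_ccc_append (by decide) h.1
      (fun ⟨hs, _⟩ => (by decide : ¬ [true,true] <:+ [true,true,false,false]) hs)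
      (fun ⟨hs, _⟩ => (by decide : ¬ [true] <:+ [true,true,false,false]) hs)
  · exact not_infix_ccc_append (by decide) h.2
      (fun ⟨_, hp⟩ => dyck_not_f_prefix hb hp)
      (fun ⟨_, hp⟩ => dyck_not_ff_prefix hb hp)

lemma avoid_g3 {y b : List Bool} (hy : IsDyckWord y) (hb : IsDyckWord b)
    (hay : Avoid y) (hab : Avoid b) :
    Avoid ([true, true, false] ++ (y ++ ([true, false, false] ++ b))) := by
  have hZ : Avoid ([true, false, false] ++ b) := by
    constructor
    · exact not_infix_ccc_append (by decide) hab.1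
        (fun ⟨hs, _⟩ => (by decide : ¬ [true,true] <:+ [true,false,false]) hs)
        (fun ⟨hs, _⟩ => (by decide : ¬ [true] <:+ [true,false,false]) hs)
    · exact not_infix_ccc_append (by decide) hab.2
        (fun ⟨_, hp⟩ => dyck_not_f_prefix hb hp)
        (fun ⟨_, hp⟩ => dyck_not_ff_prefix hb hp)
  have hfZ : ¬ [false] <+: ([true, false, false] ++ b) := not_f_prefix_cons_t
  have hYZ : Avoid (y ++ ([true, false, false] ++ b)) := by
    constructor
    · exact not_infix_ccc_append hay.1 hZ.1
        (fun ⟨hs, _⟩ => dyck_not_tt_suffix hy hs)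
        (fun ⟨hs, _⟩ => dyck_not_t_suffix hy hs)
    · exact not_infix_ccc_append hay.2 hZ.2
        (fun ⟨_, hp⟩ => hfZ hp)
        (fun ⟨_, hp⟩ => not_ff_prefix_of_not_f hfZ hp)
  constructor
  · exact not_infix_ccc_append (by decide) hYZ.1
      (fun ⟨hs, _⟩ => (by decide : ¬ [true,true] <:+ [true,true,false]) hs)
      (fun ⟨hs, _⟩ => (by decide : ¬ [true] <:+ [true,true,false]) hs)
  · exact not_infix_ccc_append (by decide) hYZ.2
      (fun ⟨hs, _⟩ => (by decide : ¬ [false,false] <:+ [true,true,false]) hs)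
      (fun ⟨_, hp⟩ => not_ff_prefix_of_not_f (not_f_prefix_append hy hfZ) hp)

lemma dyck_length_even {w : List Bool} (hw : IsDyckWord w) : ∃ k, w.length = 2 * k := by
  refine ⟨w.count true, ?_⟩
  have h1 := count_tf w
  have h2 := hw.1
  omega

abbrev SS (m : ℕ) : Type := {w : List Bool // w.length = 2 * m ∧ IsDyckWord w ∧
  ¬ [true, true, true] <:+: w ∧ ¬ [false, false, false] <:+: w}

lemma dyck_UD : IsDyckWord [true, false] := dyck_wrap dyck_nil dyck_nil

def glue (n : ℕ) : (SS (n+1) ⊕ (SS n ⊕ (Σ k : Fin n, SS k × SS (n-1-k)))) → SS (n+2) :=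
  fun z => match z with
  | .inl ⟨b, hb⟩ => ⟨[true, false] ++ b, by
      have ha := avoid_g1 hb.2.1 ⟨hb.2.2.1, hb.2.2.2⟩
      refine ⟨by simp [hb.1]; omega, dyck_wrap dyck_nil hb.2.1, ha.1, ha.2⟩⟩
  | .inr (.inl ⟨b, hb⟩) => ⟨[true, true, false, false] ++ b, by
      have ha := avoid_g2 hb.2.1 ⟨hb.2.2.1, hb.2.2.2⟩
      refine ⟨by simp [hb.1]; omega, dyck_wrap dyck_UD hb.2.1, ha.1, ha.2⟩⟩
  | .inr (.inr ⟨k, ⟨y, hy⟩, ⟨b, hb⟩⟩) =>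
      ⟨[true, true, false] ++ (y ++ ([true, false, false] ++ b)), by
      have ha := avoid_g3 hy.2.1 hb.2.1 ⟨hy.2.2.1, hy.2.2.2⟩ ⟨hb.2.2.1, hb.2.2.2⟩
      refine ⟨?_, ?_, ha.1, ha.2⟩
      · have h1 := hy.1
        have h2 := hb.1
        have h3 := k.isLt
        simp
        omega
      · have hd : IsDyckWord (true :: (([true, false] ++ y) ++ [true, false]) ++ false :: b) :=
          dyck_wrap (dyck_append (dyck_append dyck_UD hy.2.1) dyck_UD) hb.2.1
        have hshape : true :: (([true, false] ++ y) ++ [true, false]) ++ false :: b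
            = [true, true, false] ++ (y ++ ([true, false, false] ++ b)) := by simp
        rwa [hshape] at hd⟩

lemma g3_core_half {y y' b b' : List Bool} (hy : IsDyckWord y) (hy' : IsDyckWord y')
    (hle : y.length ≤ y'.length)
    (h : y ++ ([true,false,false] ++ b) = y' ++ ([true,false,false] ++ b')) :
    y = y' := by
  have hpy : y <+: y' ++ ([true,false,false] ++ b') := h ▸ List.prefix_append _ _
  have hp : y <+: y' := List.prefix_of_prefix_length_le hpy (List.prefix_append _ _) hle
  obtain ⟨d, rfl⟩ := hp
  rw [List.append_assoc] at h
  have hz : [true,false,false] ++ b = d ++ ([true,false,false] ++ b') :=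
    List.append_cancel_left h
  rcases eq_or_ne d [] with rfl | hd
  · simp
  exfalso
  obtain ⟨ky, hky⟩ := dyck_length_even hy
  obtain ⟨ky', hky'⟩ := dyck_length_even hy'
  have hdlen : ∃ m, d.length = 2 * m := by
    rw [List.length_append] at hky'
    exact ⟨ky' - ky, by omega⟩
  obtain ⟨m, hm⟩ := hdlen
  have hmpos : 0 < m := by
    have := List.length_pos_iff.mpr hd
    omega
  have hdp : d <+: [true,false,false] ++ b := ⟨[true,false,false] ++ b', hz.symm⟩
  rcases Nat.lt_or_ge d.length 3 with hlt | hge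
  · -- d.length = 2, so d = [true,false]
    have hd2 : d.length = 2 := by omega
    have hdeq : d = [true, false] := by
      have := List.prefix_iff_eq_take.mp hdp
      rw [hd2] at this
      simpa using this
    rw [hdeq] at hz
    simp at hz
  · -- [true,false,false] <+: d, so y ++ [true,false,false] <+: y', bad counts
    have htfd : [true,false,false] <+: d :=
      List.prefix_of_prefix_length_le (List.prefix_append _ _) hdp (by simpa using hge)
    obtain ⟨e, he⟩ := htfd
    have hpre : y ++ [true,false,false] <+: y ++ d := by
      refine ⟨e, ?_⟩
      rw [List.append_assoc, he]
    have hcnt := hy'.2 _ hpre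
    have h1 := hy.1
    simp [List.count_append] at hcnt
    omega

lemma glue_injective (n : ℕ) : Function.Injective (glue n) := by
  rintro z1 z2 h
  have hval : (glue n z1).1 = (glue n z2).1 := congrArg Subtype.val h
  match z1, z2 with
  | .inl ⟨b, hb⟩, .inl ⟨b', hb'⟩ =>
    simp only [glue] at hval
    simp at hval
    subst hval
    rfl
  | .inl ⟨b, hb⟩, .inr (.inl ⟨b', hb'⟩) => simp [glue] at hval
  | .inr (.inl ⟨b, hb⟩), .inl ⟨b', hb'⟩ => simp [glue] at hval
  | .inl ⟨b, hb⟩, .inr (.inr ⟨k, ⟨y, hy⟩, ⟨b', hb'⟩⟩) => simp [glue] at hval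
  | .inr (.inr ⟨k, ⟨y, hy⟩, ⟨b', hb'⟩⟩), .inl ⟨b, hb⟩ => simp [glue] at hval
  | .inr (.inl ⟨b, hb⟩), .inr (.inr ⟨k, ⟨y, hy⟩, ⟨b', hb'⟩⟩) =>
    exfalso
    simp only [glue] at hval
    simp at hval
    rcases eq_or_ne y [] with rfl | hne
    · simp at hval
    · obtain ⟨t, rfl⟩ := dyck_head hy.2.1 hne
      simp at hval
  | .inr (.inr ⟨k, ⟨y, hy⟩, ⟨b', hb'⟩⟩), .inr (.inl ⟨b, hb⟩) =>
    exfalso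
    simp only [glue] at hval
    simp at hval
    rcases eq_or_ne y [] with rfl | hne
    · simp at hval
    · obtain ⟨t, rfl⟩ := dyck_head hy.2.1 hne
      simp at hval
  | .inr (.inl ⟨b, hb⟩), .inr (.inl ⟨b', hb'⟩) =>
    simp only [glue] at hval
    simp at hval
    subst hval
    rfl
  | .inr (.inr ⟨k, ⟨y, hy⟩, ⟨b, hb⟩⟩), .inr (.inr ⟨k', ⟨y', hy'⟩, ⟨b', hb'⟩⟩) =>
    simp only [glue] at hval
    simp only [List.cons_append, List.cons.injEq, true_and] at hval
    have hcore : y ++ ([true,false,false] ++ b) = y' ++ ([true,false,false] ++ b') := by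
      simpa using hval
    have hyy : y = y' := by
      rcases Nat.le_total y.length y'.length with hle | hle
      · exact g3_core_half hy.2.1 hy'.2.1 hle hcore
      · exact (g3_core_half hy'.2.1 hy.2.1 hle hcore.symm).symm
    subst hyy
    have hbb : b = b' := by
      have := List.append_cancel_left hcore
      simpa using this
    subst hbb
    have hkk : k = k' := by
      have h1 := hy.1
      have h2 := hy'.1
      ext
      omega
    subst hkk
    rfl

lemma glue_surjective (n : ℕ) : Function.Surjective (glue n) := by
  rintro ⟨w, hlen, hdy, ht3, hf3⟩
  have hav : Avoid w := ⟨ht3, hf3⟩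
  have hwne : w ≠ [] := by
    intro hc
    rw [hc] at hlen
    simp at hlen
  obtain ⟨v, b, hv, hb, rfl⟩ := dyck_decomp hdy hwne
  obtain ⟨kv, hkv⟩ := dyck_length_even hv
  obtain ⟨kb, hkb⟩ := dyck_length_even hb
  have hlen' : v.length + b.length = 2 * n + 2 := by
    simp at hlen
    omega
  have hbinf : b <:+: true :: v ++ false :: b := ⟨true :: v ++ [false], [], by simp⟩
  have havb : Avoid b := hav.infix hbinf
  rcases eq_or_ne v [] with rfl | hvne
  · -- form 1
    refine ⟨.inl ⟨b, ⟨by simp at hlen'; omega, hb, havb.1, havb.2⟩⟩, ?_⟩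
    apply Subtype.ext
    simp [glue]
  · obtain ⟨v₁, rfl⟩ := dyck_head hv hvne
    have hv1ne : v₁ ≠ [] := by
      rintro rfl
      simp at hkv
      omega
    rcases v₁ with _ | ⟨c, v₂⟩
    · exact absurd rfl hv1ne
    rcases c with _ | _
    · -- v = true :: false :: v₂
      have hv2 : IsDyckWord v₂ := dyck_strip_UD hv
      rcases eq_or_ne v₂ [] with rfl | hv2ne
      · -- form 2
        refine ⟨.inr (.inl ⟨b, ⟨by simp at hlen' ⊢; omega, hb, havb.1, havb.2⟩⟩), ?_⟩
        apply Subtype.ext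
        simp [glue]
      · -- form 3
        obtain ⟨u, a, hua⟩ := (List.eq_nil_or_concat v₂).resolve_left hv2ne
        rw [List.concat_eq_append] at hua
        have ha : a = false := by
          obtain ⟨t', ht'⟩ := dyck_last hv2 hv2ne
          have h1 : (u ++ [a]).getLast? = some a := List.getLast?_concat
          have h2 : (t' ++ [false]).getLast? = some false := List.getLast?_concat
          rw [← hua, ht'] at h1
          rw [h2] at h1
          simpa using h1.symm
        subst ha
        have hune : u ≠ [] := by
          rintro rfl
          simp at hua
          subst hua
          have := hv2.2 [false] (by simp)
          simp at this
        obtain ⟨u', a', hu'⟩ := (List.eq_nil_or_concat u).resolve_left hune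
        rw [List.concat_eq_append] at hu'
        have ha' : a' = true := by
          by_contra hc
          have ha'f : a' = false := by cases a' <;> simp_all
          subst ha'f
          -- w contains [false,false,false]
          apply hf3
          refine ⟨true :: true :: false :: u', b, ?_⟩
          subst hu'
          subst hua
          simp
        subst ha'
        -- v₂ = u' ++ [true, false], u' Dyck
        have hy : IsDyckWord u' := by
          apply dyck_strip_last
          have hveq : v₂ = u' ++ [true, false] := by rw [hua, hu']; simp
          rwa [hveq] at hv2
        obtain ⟨ky, hky⟩ := dyck_length_even hy
        have hylt : ky < n := by
          subst hua hu'
          simp at hlen'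
          omega
        have hblen : b.length = 2 * (n - 1 - ky) := by
          subst hua hu'
          simp at hlen'
          omega
        have hshape : true :: (true :: false :: v₂) ++ false :: b
            = [true, true, false] ++ (u' ++ ([true, false, false] ++ b)) := by
          subst hua hu'
          simp
        have hyinf : u' <:+: true :: (true :: false :: v₂) ++ false :: b := by
          rw [hshape]
          exact ⟨[true, true, false], [true, false, false] ++ b, by simp⟩
        have havy : Avoid u' := hav.infix hyinf
        refine ⟨.inr (.inr ⟨⟨ky, hylt⟩, ⟨u', ⟨hky, hy, havy.1, havy.2⟩⟩,
          ⟨b, ⟨hblen, hb, havb.1, havb.2⟩⟩⟩), ?_⟩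
        apply Subtype.ext
        simp only [glue]
        rw [hshape]
    · -- v = true :: true :: v₂ : contradiction with no TTT
      exfalso
      apply ht3
      exact ⟨[], v₂ ++ false :: b, by simp⟩

instance ssFinite (m : ℕ) : Finite (SS m) := by
  have h : Finite {l : List Bool // l.length = 2*m} := (List.finite_length_eq Bool (2*m)).to_subtype
  refine Finite.of_injective
    (fun w : SS m => (⟨w.1, w.2.1⟩ : {l : List Bool // l.length = 2*m})) ?_
  intro a b h
  apply Subtype.ext
  have := congrArg (fun z : {l : List Bool // l.length = 2*m} => z.1) h
  simpa using this

lemma card_sigma' {m : ℕ} (f : Fin m → Type) [∀ i, Finite (f i)] :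
    Nat.card ((i : Fin m) × f i) = ∑ i, Nat.card (f i) := by
  letI : ∀ i, Fintype (f i) := fun i => Fintype.ofFinite _
  rw [Nat.card_eq_fintype_card]
  simp [Nat.card_eq_fintype_card]

lemma ss0 : Nat.card (SS 0) = 1 := by
  haveI : Unique (SS 0) := {
    default := ⟨[], by refine ⟨by simp, dyck_nil, by decide, by decide⟩⟩
    uniq := fun z => by
      apply Subtype.ext
      have := z.2.1
      simpa using List.length_eq_zero_iff.mp (by simpa using this) }
  exact Nat.card_unique

lemma ss1 : Nat.card (SS 1) = 1 := by
  haveI : Unique (SS 1) := {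
    default := ⟨[true, false], by refine ⟨by simp, dyck_UD, by decide, by decide⟩⟩
    uniq := fun z => by
      apply Subtype.ext
      obtain ⟨w, hlen, hdy, _, _⟩ := z
      have hwne : w ≠ [] := by rintro rfl; simp at hlen
      obtain ⟨t, rfl⟩ := dyck_head hdy hwne
      rcases t with _ | ⟨x, t'⟩
      · simp at hlen
      rcases t' with _ | ⟨x', t''⟩
      · cases x
        · rfl
        · have := hdy.1
          simp at this
      · simp at hlen }
  exact Nat.card_unique

lemma card_rec (n : ℕ) : Nat.card (SS (n+2)) =
    Nat.card (SS (n+1)) + Nat.card (SS n) +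
      ∑ k : Fin n, Nat.card (SS k) * Nat.card (SS (n-1-k)) := by
  have hbij : Function.Bijective (glue n) := ⟨glue_injective n, glue_surjective n⟩
  rw [← Nat.card_eq_of_bijective _ hbij, Nat.card_sum, Nat.card_sum, card_sigma']
  have : ∀ k : Fin n, Nat.card (SS k × SS (n-1-k)) = Nat.card (SS k) * Nat.card (SS (n-1-k)) :=
    fun k => Nat.card_prod _ _
  rw [Finset.sum_congr rfl (fun k _ => this k)]
  omega

theorem dyck_no_UUU_no_DDD_count' (n : ℕ) : Nat.card (SS n) = secStruct n := by
  induction n using Nat.strong_induction_on with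
  | _ n ih =>
    match n with
    | 0 => rw [ss0, secStruct]
    | 1 => rw [ss1, secStruct]
    | (m+2) =>
      rw [card_rec m, ih (m+1) (by omega), ih m (by omega)]
      have hs : secStruct (m+2) = secStruct (m+1) + secStruct m +
          ∑ k ∈ (Finset.range m).attach, secStruct k * secStruct (m - 1 - k) := by
        rw [secStruct]
      rw [hs, Finset.sum_attach (Finset.range m) (fun k => secStruct k * secStruct (m-1-k)),
        ← Fin.sum_univ_eq_sum_range]
      congr 1
      refine Finset.sum_congr rfl (fun k _ => ?_)
      rw [ih k (by omega), ih (m-1-k) (by omega)]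


/-- The number of Dyck paths of semilength `n` with no three consecutive `U`
steps and no three consecutive `D` steps equals the secondary structure number
`S n`. -/
theorem dyck_no_UUU_no_DDD_count (n : ℕ) :
    Nat.card {w : List Bool // w.length = 2 * n ∧ IsDyckWord w ∧
      ¬ [true, true, true] <:+: w ∧ ¬ [false, false, false] <:+: w} =
      secStruct n :=
  dyck_no_UUU_no_DDD_count' n
end

section
/- For every n ≥ 0, the number of Dyck paths of semilength n+2 containing no factor UDU and no factor DUD equals the secondary structure number S_n. -/
open List DyckStep

namespace SecProof

/-- crossing lemma for length-3 patterns in an append -/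
lemma cross3 {α : Type*} {a b c : α} {l₁ l₂ : List α} (h : [a,b,c] <:+: l₁ ++ l₂) :
    [a,b,c] <:+: l₁ ∨ [a,b,c] <:+: l₂ ∨ ([a,b] <:+ l₁ ∧ [c] <+: l₂) ∨
      ([a] <:+ l₁ ∧ [b,c] <+: l₂) := by
  obtain ⟨s, t, hst⟩ := h
  rcases le_or_gt (s.length + 3) l₁.length with hle | hlt
  · left
    have hpre : s ++ [a,b,c] <+: l₁ ++ l₂ := ⟨t, by simpa [append_assoc] using hst⟩
    have h1 : s ++ [a,b,c] <+: l₁ := by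
      have := prefix_iff_eq_take.mp hpre
      rw [take_append_of_le_length (by simp; omega)] at this
      rw [this]; exact take_prefix _ _
    obtain ⟨r, hr⟩ := h1
    exact ⟨s, r, by rw [← hr, append_assoc]⟩
  · rcases le_or_gt l₁.length s.length with hle2 | hlt2
    · right; left
      have h2 : l₂ = s.drop l₁.length ++ ([a,b,c] ++ t) := by
        have := congrArg (List.drop l₁.length) hst
        rw [drop_left, append_assoc, drop_append_of_le_length hle2] at this
        exact this.symm
      exact ⟨drop l₁.length s, t, by rw [append_assoc, ← h2]⟩
    · -- l₁.length = s.length + 1 or s.length + 2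
      have htake : l₁ = take l₁.length (s ++ ([a,b,c] ++ t)) := by
        rw [← append_assoc, hst]; exact take_left.symm
      have hdrop : l₂ = drop l₁.length (s ++ ([a,b,c] ++ t)) := by
        rw [← append_assoc, hst]; exact drop_left.symm
      rw [take_append, take_of_length_le (by omega),
        show l₁.length - s.length = (l₁.length - s.length) by rfl] at htake
      rw [drop_append, drop_of_length_le (by omega)] at hdrop
      rcases (by omega : l₁.length - s.length = 1 ∨ l₁.length - s.length = 2) with h1 | h1
      · right; right; right
        rw [h1] at htake hdrop
        simp only [take, drop, nil_append] at htake hdrop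
        constructor
        · exact ⟨s, by rw [htake]; rfl⟩
        · exact ⟨t, by rw [hdrop]; rfl⟩
      · right; right; left
        rw [h1] at htake hdrop
        simp only [take, drop, nil_append] at htake hdrop
        constructor
        · exact ⟨s, by rw [htake]; rfl⟩
        · exact ⟨t, by rw [hdrop]; rfl⟩


lemma getLast?_suffix {α : Type*} {l r : List α} (h : r <:+ l) (hr : r ≠ []) :
    l.getLast? = r.getLast? := by
  obtain ⟨s, rfl⟩ := h
  rw [getLast?_append]
  obtain ⟨a, ha⟩ := Option.isSome_iff_exists.mp (List.getLast?_isSome.mpr hr)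
  rw [ha]; rfl

/-- The avoidance predicate: no `UDU` and no `DUD` factor. -/
def Good (p : DyckWord) : Prop :=
  ¬ [U, D, U] <:+: p.toList ∧ ¬ [D, U, D] <:+: p.toList

lemma good_zero : Good 0 := by
  constructor <;> · rw [show (0 : DyckWord).toList = [] from rfl, infix_nil]; simp

lemma good_of_infix {p q : DyckWord} (h : q.toList <:+: p.toList) (hp : Good p) : Good q :=
  ⟨fun hc => hp.1 (hc.trans h), fun hc => hp.2 (hc.trans h)⟩

lemma semilength_ne_zero {p : DyckWord} (h : p ≠ 0) : p.semilength ≠ 0 := by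
  intro hc
  have hl : 2 * p.semilength = p.toList.length := DyckWord.two_mul_semilength_eq_length
  rw [hc] at hl
  exact h (DyckWord.toList_eq_nil.mp (List.length_eq_zero_iff.mp (by omega)))

lemma suffix_cons_getLast {x : DyckWord} (hx0 : x ≠ 0) {r : List DyckStep}
    (hs : r <:+ U :: x.toList) (h : r.getLast? = some U) : False := by
  have hform := DyckWord.cons_tail_dropLast_concat hx0
  have hsfx : [D] <:+ U :: x.toList := by
    refine ⟨U :: x.toList.dropLast, ?_⟩
    have h1 : x.toList.dropLast ++ [x.toList.getLast (DyckWord.toList_ne_nil.mpr hx0)]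
        = x.toList := dropLast_append_getLast _
    rw [DyckWord.getLast_eq_D] at h1
    conv_rhs => rw [← h1]
    rfl
  have hlast : (U :: x.toList).getLast? = some D := by
    rw [getLast?_suffix hsfx (by simp)]; rfl
  have hr : r ≠ [] := by rintro rfl; simp at h
  rw [getLast?_suffix hs hr, h] at hlast
  simp at hlast

/-- A good Dyck word of semilength ≥ 2 starts with `U U`. -/
lemma startUU {p : DyckWord} (h0 : p ≠ 0) (h2 : 2 ≤ p.semilength)
    (hg : ¬ [U, D, U] <:+: p.toList) : ∃ r, p.toList = U :: U :: r := by
  have hform := DyckWord.cons_tail_dropLast_concat h0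
  have hlen : 2 * p.semilength = p.toList.length := DyckWord.two_mul_semilength_eq_length
  rcases hm : p.toList.dropLast.tail with - | ⟨s, r⟩ <;> rw [hm] at hform
  · have : p.toList.length = 2 := by rw [← hform]; rfl
    omega
  · cases s
    · exact ⟨r ++ [D], by rw [← hform]; rfl⟩
    · rcases r with - | ⟨t, r'⟩
      · have : p.toList.length = 3 := by rw [← hform]; rfl
        omega
      · cases t
        · exfalso; apply hg
          apply List.IsPrefix.isInfix
          rw [← hform]
          exact ⟨r' ++ [D], rfl⟩
        · exfalso
          have hc := p.count_D_le_count_U 3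
          rw [← hform] at hc
          simp [List.count_cons] at hc

/-- soundness of the grammar composition -/
lemma good_compose {x y : DyckWord} (hx : Good x) (hy : Good y)
    (hcond : y = 0 ∨ (x ≠ 0 ∧ 2 ≤ y.semilength)) : Good (x.nest + y) := by
  have hw : (x.nest + y).toList = (U :: x.toList) ++ (D :: y.toList) := by
    show ([U] ++ x.toList ++ [D]) ++ y.toList = _
    simp
  constructor
  · intro hc
    rw [hw] at hc
    rcases cross3 hc with h | h | ⟨h1, h2⟩ | ⟨h1, h2⟩
    · rcases infix_cons_iff.mp h with h | h
      · rw [cons_prefix_cons] at h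
        obtain ⟨-, h⟩ := h
        rcases eq_or_ne x 0 with rfl | hx0
        · simp [show (0:DyckWord).toList = [] from rfl, prefix_nil] at h
        · obtain ⟨t, ht⟩ : ∃ t, x.toList = U :: t :=
            ⟨_, (DyckWord.cons_tail_dropLast_concat hx0).symm⟩
          rw [ht, cons_prefix_cons] at h
          exact absurd h.1 (by simp)
      · exact hx.1 h
    · rcases infix_cons_iff.mp h with h | h
      · rw [cons_prefix_cons] at h
        exact absurd h.1 (by simp)
      · exact hy.1 h
    · rw [cons_prefix_cons] at h2
      exact absurd h2.1 (by simp)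
    · -- [U] <:+ U :: x.toList and [D,U] <+: D :: y.toList
      rw [cons_prefix_cons] at h2
      obtain ⟨-, h2⟩ := h2
      rcases hcond with rfl | ⟨hx0, -⟩
      · simp [show (0:DyckWord).toList = [] from rfl, prefix_nil] at h2
      · exact suffix_cons_getLast hx0 h1 rfl
  · intro hc
    rw [hw] at hc
    rcases cross3 hc with h | h | ⟨h1, h2⟩ | ⟨h1, h2⟩
    · rcases infix_cons_iff.mp h with h | h
      · rw [cons_prefix_cons] at h
        exact absurd h.1 (by simp)
      · exact hx.2 h
    · rcases infix_cons_iff.mp h with h | h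
      · rw [cons_prefix_cons] at h
        obtain ⟨-, h⟩ := h
        rcases hcond with rfl | ⟨-, hy2⟩
        · simp [show (0:DyckWord).toList = [] from rfl, prefix_nil] at h
        · have hy0 : y ≠ 0 := by rintro rfl; simp at hy2
          obtain ⟨r, hr⟩ := startUU hy0 hy2 hy.1
          rw [hr, cons_prefix_cons] at h
          obtain ⟨-, h⟩ := h
          rw [cons_prefix_cons] at h
          exact absurd h.1 (by simp)
      · exact hy.2 h
    · rcases eq_or_ne x 0 with rfl | hx0
      · have := h1.length_le
        simp [show (0:DyckWord).toList = [] from rfl] at this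
      · exact suffix_cons_getLast hx0 h1 rfl
    · rw [cons_prefix_cons] at h2
      exact absurd h2.1 (by simp)


/-- completeness: a good word decomposes into good parts with the grammar side conditions -/
lemma good_decompose {p : DyckWord} (h0 : p ≠ 0) (hg : Good p) :
    Good p.insidePart ∧ Good p.outsidePart ∧
      (p.outsidePart ≠ 0 → p.insidePart ≠ 0 ∧ 2 ≤ p.outsidePart.semilength) := by
  have hdec := DyckWord.nest_insidePart_add_outsidePart h0
  set x := p.insidePart
  set y := p.outsidePart
  have hpl : p.toList = U :: x.toList ++ (D :: y.toList) := by
    rw [← hdec]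
    show ([U] ++ x.toList ++ [D]) ++ y.toList = _
    simp
  have hxin : x.toList <:+: p.toList := by
    rw [hpl]
    exact ⟨[U], D :: y.toList, by simp⟩
  have hyin : y.toList <:+: p.toList := by
    rw [hpl]
    exact ⟨U :: x.toList ++ [D], [], by simp⟩
  refine ⟨good_of_infix hxin hg, good_of_infix hyin hg, fun hy0 => ?_⟩
  have hx0 : x ≠ 0 := by
    rintro hx
    obtain ⟨t, ht⟩ : ∃ t, y.toList = U :: t :=
      ⟨_, (DyckWord.cons_tail_dropLast_concat hy0).symm⟩
    apply hg.1
    apply List.IsPrefix.isInfix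
    rw [hpl, hx, show (0:DyckWord).toList = [] from rfl, ht]
    exact ⟨t, rfl⟩
  refine ⟨hx0, ?_⟩
  have h1 : y.semilength ≠ 0 := semilength_ne_zero hy0
  rcases Nat.lt_or_ge y.semilength 2 with h2 | h2
  · exfalso
    have hsl1 : y.semilength = 1 := by omega
    have hylen : y.toList.length = 2 := by
      have := DyckWord.two_mul_semilength_eq_length (p := y)
      omega
    have hy2 : y.toList = [U, D] := by
      have hform := DyckWord.cons_tail_dropLast_concat hy0
      rcases hm : y.toList.dropLast.tail with - | ⟨s, r⟩ <;> rw [hm] at hform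
      · rw [← hform]; rfl
      · rw [← hform] at hylen; simp at hylen
    apply hg.2
    apply List.IsSuffix.isInfix
    rw [hpl, hy2]
    exact ⟨U :: x.toList, rfl⟩
  · exact h2

abbrev G (n : ℕ) := {p : DyckWord // p.semilength = n ∧ Good p}

instance (n : ℕ) : Finite (G n) := by
  apply Finite.of_injective
    (fun x : G n => (⟨x.1, x.2.1⟩ : {p : DyckWord // p.semilength = n}))
  intro a b h
  apply Subtype.ext
  exact congrArg (Subtype.val : {p : DyckWord // p.semilength = n} → DyckWord) h

/-- the counting function -/
noncomputable def c (n : ℕ) : ℕ := Nat.card (G n)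

lemma c_zero : c 0 = 1 := by
  have : Unique (G 0) := {
    default := ⟨0, by simp, good_zero⟩
    uniq := by
      rintro ⟨p, hp, hgp⟩
      have hl : 2 * p.semilength = p.toList.length := DyckWord.two_mul_semilength_eq_length
      have hp0 : p = 0 := DyckWord.toList_eq_nil.mp (List.length_eq_zero_iff.mp (by omega))
      subst hp0
      rfl }
  exact Nat.card_unique


lemma ne_zero_of_semilength {p : DyckWord} (h : p.semilength ≠ 0) : p ≠ 0 := by
  rintro rfl; exact h DyckWord.semilength_zero

/-- the grammar map -/
def Phi (m : ℕ) :
    (G m ⊕ Σ k : Fin (m - 2), G (k + 1) × G (m - 1 - k)) → G (m + 1)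
  | Sum.inl x => ⟨x.1.nest, by rw [DyckWord.semilength_nest, x.2.1], by
      have := good_compose x.2.2 good_zero (Or.inl rfl)
      rwa [add_zero] at this⟩
  | Sum.inr ⟨k, x, y⟩ => ⟨x.1.nest + y.1, by
      have hk := k.2
      rw [DyckWord.semilength_add, DyckWord.semilength_nest, x.2.1, y.2.1]
      omega,
    good_compose x.2.2 y.2.2 (Or.inr ⟨ne_zero_of_semilength (by rw [x.2.1]; omega),
      by rw [y.2.1]; have hk := k.2; omega⟩)⟩

lemma Phi_bij (m : ℕ) : Function.Bijective (Phi m) := by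
  constructor
  · intro a b h
    have hv := congrArg Subtype.val h
    rcases a with x | ⟨k, x, y⟩ <;> rcases b with x' | ⟨k', x', y'⟩
    · have h3 : x.1.nest = x'.1.nest := hv
      have h2 : x.1 = x'.1 := by
        have := congrArg DyckWord.insidePart h3
        rwa [DyckWord.insidePart_nest, DyckWord.insidePart_nest] at this
      exact congrArg Sum.inl (Subtype.ext h2)
    · exfalso
      have h3 : x.1.nest = x'.1.nest + y'.1 := hv
      have := congrArg DyckWord.outsidePart h3
      rw [DyckWord.outsidePart_nest,
        DyckWord.outsidePart_add (DyckWord.nest_ne_zero),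
        DyckWord.outsidePart_nest, zero_add] at this
      have h2 := y'.2.1
      rw [← this] at h2
      have hk := k'.2
      rw [DyckWord.semilength_zero] at h2
      omega
    · exfalso
      have h3 : x.1.nest + y.1 = x'.1.nest := hv
      have := congrArg DyckWord.outsidePart h3
      rw [DyckWord.outsidePart_nest,
        DyckWord.outsidePart_add (DyckWord.nest_ne_zero),
        DyckWord.outsidePart_nest, zero_add] at this
      have h2 := y.2.1
      rw [this] at h2
      have hk := k.2
      rw [DyckWord.semilength_zero] at h2
      omega
    · have h3 : x.1.nest + y.1 = x'.1.nest + y'.1 := hv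
      have hin : x.1 = x'.1 := by
        have := congrArg DyckWord.insidePart h3
        rwa [DyckWord.insidePart_add (DyckWord.nest_ne_zero),
          DyckWord.insidePart_add (DyckWord.nest_ne_zero),
          DyckWord.insidePart_nest, DyckWord.insidePart_nest] at this
      have hout : y.1 = y'.1 := by
        have := congrArg DyckWord.outsidePart h3
        rwa [DyckWord.outsidePart_add (DyckWord.nest_ne_zero),
          DyckWord.outsidePart_add (DyckWord.nest_ne_zero),
          DyckWord.outsidePart_nest, DyckWord.outsidePart_nest,
          zero_add, zero_add] at this
      have hkk : k = k' := by
        apply Fin.ext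
        have h1 := x.2.1
        have h2 := x'.2.1
        rw [hin, h2] at h1
        omega
      subst hkk
      exact congrArg Sum.inr (Sigma.ext rfl (heq_of_eq
        (Prod.ext (Subtype.ext hin) (Subtype.ext hout))))
  · rintro ⟨p, hsl, hgp⟩
    have hp0 : p ≠ 0 := ne_zero_of_semilength (by rw [hsl]; omega)
    obtain ⟨hgin, hgout, hcond⟩ := good_decompose hp0 hgp
    have hsum := DyckWord.semilength_insidePart_add_semilength_outsidePart_add_one hp0
    by_cases hout : p.outsidePart = 0
    · have hso : p.outsidePart.semilength = 0 := by rw [hout]; exact DyckWord.semilength_zero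
      refine ⟨Sum.inl ⟨p.insidePart, by omega, hgin⟩, Subtype.ext ?_⟩
      show p.insidePart.nest = p
      conv_rhs => rw [← DyckWord.nest_insidePart_add_outsidePart hp0]
      rw [hout, add_zero]
    · obtain ⟨hin0, hout2⟩ := hcond hout
      have h1 : p.insidePart.semilength ≠ 0 := semilength_ne_zero hin0
      refine ⟨Sum.inr ⟨⟨p.insidePart.semilength - 1, by omega⟩,
        ⟨p.insidePart, ?_, hgin⟩, ⟨p.outsidePart, ?_, hgout⟩⟩, Subtype.ext ?_⟩
      · show p.insidePart.semilength = p.insidePart.semilength - 1 + 1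
        omega
      · show p.outsidePart.semilength = m - 1 - (p.insidePart.semilength - 1)
        omega
      · exact DyckWord.nest_insidePart_add_outsidePart hp0

lemma c_succ (m : ℕ) :
    c (m + 1) = c m + ∑ k ∈ Finset.range (m - 2), c (k + 1) * c (m - 1 - k) := by
  have h1 : c (m + 1) = Nat.card (G m ⊕ Σ k : Fin (m - 2), G (k + 1) × G (m - 1 - k)) :=
    (Nat.card_congr (Equiv.ofBijective _ (Phi_bij m))).symm
  rw [h1, Nat.card_sum]
  congr 1
  have h2 : Nat.card (Σ k : Fin (m - 2), G (k + 1) × G (m - 1 - k)) =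
      ∑ k : Fin (m - 2), Nat.card (G (k + 1) × G (m - 1 - k)) := by
    letI : ∀ k : Fin (m - 2), Fintype (G (k + 1) × G (m - 1 - k)) :=
      fun k => Fintype.ofFinite _
    rw [Nat.card_eq_fintype_card, Fintype.card_sigma]
    exact Finset.sum_congr rfl fun k _ => (Nat.card_eq_fintype_card).symm
  rw [h2, ← Fin.sum_univ_eq_sum_range (fun k => c (k + 1) * c (m - 1 - k)) (m - 2)]
  exact Finset.sum_congr rfl fun k _ => by rw [Nat.card_prod]; rfl


lemma c_one : c 1 = 1 := by
  have h := c_succ 0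
  simpa [c_zero] using h

lemma c_two : c 2 = 1 := by
  have h := c_succ 1
  simpa [c_one] using h

lemma c_three : c 3 = 1 := by
  have h := c_succ 2
  simpa [c_two] using h

lemma c_eq : ∀ n : ℕ, c (n + 2) = secStruct n := by
  intro n
  induction n using Nat.strong_induction_on with
  | _ n ih =>
    match n with
    | 0 => rw [c_two, show secStruct 0 = 1 from by rw [secStruct]]
    | 1 => rw [c_three, show secStruct 1 = 1 from by rw [secStruct]]
    | (j + 2) =>
      have hrec := c_succ (j + 3)
      have e1 : j + 3 - 2 = j + 1 := rfl
      have e2 : j + 3 - 1 = j + 2 := rfl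
      rw [e1, e2] at hrec
      rw [show j + 2 + 2 = j + 3 + 1 from rfl, hrec]
      rw [Finset.sum_range_succ' (fun k => c (k + 1) * c (j + 2 - k)) j]
      simp only [Nat.sub_zero]
      rw [secStruct, Finset.sum_attach (Finset.range j)
        (fun k => secStruct k * secStruct (j - 1 - k))]
      have hs : ∑ k ∈ Finset.range j, c (k + 1 + 1) * c (j + 2 - (k + 1)) =
          ∑ k ∈ Finset.range j, secStruct k * secStruct (j - 1 - k) := by
        refine Finset.sum_congr rfl fun k hk => ?_
        have hk' := Finset.mem_range.mp hk
        rw [show k + 1 + 1 = k + 2 from rfl, ih k (by omega),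
          show j + 2 - (k + 1) = (j - 1 - k) + 2 by omega, ih (j - 1 - k) (by omega)]
      rw [hs, c_one, one_mul, ih (j + 1) (by omega), ih j (by omega)]
      ring

/-- step encoding -/
def f : Bool → DyckStep := fun b => if b then U else D

/-- step decoding -/
def g : DyckStep → Bool := fun s => match s with | U => true | D => false

lemma finj : Function.Injective f := by
  intro a b hab
  cases a <;> cases b <;> simp [f] at hab ⊢

lemma ginj : Function.Injective g := by
  intro a b hab
  cases a <;> cases b <;> simp [g] at hab ⊢

lemma gf : ∀ b, g (f b) = b := by decide

lemma fg : ∀ s, f (g s) = s := by intro s; cases s <;> rfl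

lemma map_gf (w : List Bool) : (w.map f).map g = w := by
  rw [map_map, show g ∘ f = id from funext gf, map_id]

lemma map_fg (l : List DyckStep) : (l.map g).map f = l := by
  rw [map_map, show f ∘ g = id from funext fg, map_id]

end SecProof

namespace SecProof

lemma count_UD (l : List DyckStep) : l.count U + l.count D = l.length := by
  induction l with
  | nil => rfl
  | cons a t ih => cases a <;> simp [List.count_cons] <;> omega

/-- transfer equivalence -/
noncomputable def transfer (n : ℕ) :
    {w : List Bool // w.length = 2 * (n + 2) ∧ IsDyckWord w ∧
      ¬ [true, false, true] <:+: w ∧ ¬ [false, true, false] <:+: w} ≃ G (n + 2) where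
  toFun w :=
    ⟨⟨w.1.map f,
      by
        obtain ⟨w, hlen, ⟨hcnt, hpre⟩, h1, h2⟩ := w
        show (w.map f).count (f true) = (w.map f).count (f false)
        rw [count_map_of_injective w f finj, count_map_of_injective w f finj, hcnt],
      by
        obtain ⟨w, hlen, ⟨hcnt, hpre⟩, h1, h2⟩ := w
        intro i
        rw [← map_take, show D = f false from rfl, show U = f true from rfl,
          count_map_of_injective _ f finj, count_map_of_injective _ f finj]
        exact hpre _ (take_prefix i w)⟩,
    by
      obtain ⟨w, hlen, ⟨hcnt, hpre⟩, h1, h2⟩ := w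
      refine ⟨?_, ?_, ?_⟩
      · show (w.map f).count U = n + 2
        have h4 := count_UD (w.map f)
        have h5 : (w.map f).count U = w.count true := count_map_of_injective w f finj true
        have h6 : (w.map f).count D = w.count false := count_map_of_injective w f finj false
        have h7 : (w.map f).length = w.length := length_map f
        omega
      · intro hc
        apply h1
        have := hc.map g
        rwa [show [U, D, U].map g = [true, false, true] from rfl, map_gf] at this
      · intro hc
        apply h2
        have := hc.map g
        rwa [show [D, U, D].map g = [false, true, false] from rfl, map_gf] at this⟩
  invFun p :=
    ⟨p.1.toList.map g,
    by
      obtain ⟨p, hsl, hg1, hg2⟩ := p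
      refine ⟨?_, ⟨?_, ?_⟩, ?_, ?_⟩
      · rw [length_map, ← DyckWord.two_mul_semilength_eq_length, hsl]
      · show (p.toList.map g).count (g U) = (p.toList.map g).count (g D)
        rw [count_map_of_injective _ g ginj, count_map_of_injective _ g ginj,
          p.count_U_eq_count_D]
      · intro q hq
        rw [prefix_iff_eq_take] at hq
        rw [hq, ← map_take, show (false : Bool) = g D from rfl,
          show (true : Bool) = g U from rfl,
          count_map_of_injective _ g ginj, count_map_of_injective _ g ginj]
        exact p.count_D_le_count_U _
      · intro hc
        apply hg1
        have := hc.map f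
        rwa [show [true, false, true].map f = [U, D, U] from rfl, map_fg] at this
      · intro hc
        apply hg2
        have := hc.map f
        rwa [show [false, true, false].map f = [D, U, D] from rfl, map_fg] at this⟩
  left_inv w := Subtype.ext (map_gf w.1)
  right_inv p := Subtype.ext (DyckWord.ext (map_fg p.1.toList))

end SecProof

/-- The number of Dyck paths of semilength `n + 2` with no factor `UDU` and no
factor `DUD` equals the secondary structure number `S n`. -/
theorem dyck_no_UDU_no_DUD_count (n : ℕ) :
    Nat.card {w : List Bool // w.length = 2 * (n + 2) ∧ IsDyckWord w ∧
      ¬ [true, false, true] <:+: w ∧ ¬ [false, true, false] <:+: w} =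
      secStruct n :=
  (Nat.card_congr (SecProof.transfer n)).trans (SecProof.c_eq n)
end

section
/- For every n ≥ 0, the number of simsun permutations of {1,…,n} that avoid the pattern 213 equals the Motzkin number M_n. -/
/-- `π` contains the pattern 213. -/
def Contains213 {n : ℕ} (π : Equiv.Perm (Fin n)) : Prop :=
  ∃ a b c : Fin n, a < b ∧ b < c ∧ π b < π a ∧ π a < π c

/-- The Motzkin numbers: `M 0 = 1` and
`M (n+1) = M n + ∑_{k=0}^{n-1} M k * M (n-1-k)`. -/
def motzkin : ℕ → ℕ
  | 0 => 1
  | n + 1 => motzkin n + ∑ k ∈ (Finset.range n).attach, motzkin k * motzkin (n - 1 - k)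
decreasing_by
  all_goals first
    | omega
    | (have := Finset.mem_range.mp k.2; omega)


namespace SimsunProof

open List

def val (l : List ℕ) (i : ℕ) : ℕ := l.getD i 0

def A213 (l : List ℕ) : Prop :=
  ∀ i j k, i < j → j < k → k < l.length →
    ¬ (val l j < val l i ∧ val l i < val l k)

def NoDD (l : List ℕ) : Prop :=
  ∀ i, i + 2 < l.length →
    ¬ (val l (i+2) < val l (i+1) ∧ val l (i+1) < val l i)

def NoED (l : List ℕ) : Prop :=
  ∀ i, i + 2 = l.length → val l i < val l (i+1)

def Good (n : ℕ) (l : List ℕ) : Prop := l.Perm (List.range n) ∧ A213 l ∧ NoDD l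

def GoodE (n : ℕ) (l : List ℕ) : Prop := Good n l ∧ NoED l

abbrev Lset (n : ℕ) := {l : List ℕ // Good n l}

lemma val_mem {l : List ℕ} {i : ℕ} (h : i < l.length) : val l i ∈ l := by
  rw [val, List.getD_eq_getElem _ _ h]; exact List.getElem_mem h

lemma val_append_left {l₁ l₂ : List ℕ} {i : ℕ} (h : i < l₁.length) :
    val (l₁ ++ l₂) i = val l₁ i := List.getD_append _ _ _ _ h

lemma val_append_right {l₁ l₂ : List ℕ} {i : ℕ} (h : l₁.length ≤ i) :
    val (l₁ ++ l₂) i = val l₂ (i - l₁.length) := List.getD_append_right _ _ _ _ h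

lemma val_map {f : ℕ → ℕ} {l : List ℕ} {i : ℕ} (h : i < l.length) :
    val (l.map f) i = f (val l i) := by
  rw [val, val, List.getD_eq_getElem _ _ h, List.getD_eq_getElem _ _ (by simpa using h),
    List.getElem_map]

lemma val_inj {l : List ℕ} (hn : l.Nodup) {i j : ℕ} (hi : i < l.length) (hj : j < l.length)
    (h : val l i = val l j) : i = j := by
  rw [val, val, List.getD_eq_getElem _ _ hi, List.getD_eq_getElem _ _ hj] at h
  exact (hn.getElem_inj_iff).mp h

lemma mem_iff_val {l : List ℕ} {a : ℕ} : a ∈ l ↔ ∃ i, i < l.length ∧ val l i = a := by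
  constructor
  · intro h
    obtain ⟨i, hi, he⟩ := List.mem_iff_getElem.mp h
    exact ⟨i, hi, by rw [val, List.getD_eq_getElem _ _ hi]; exact he⟩
  · rintro ⟨i, hi, rfl⟩; exact val_mem hi

lemma perm_range_of {l : List ℕ} {n : ℕ} (hn : l.Nodup) (hlen : l.length = n)
    (hb : ∀ x ∈ l, x < n) : l.Perm (List.range n) := by
  have hsub : l ⊆ List.range n := fun x hx => List.mem_range.mpr (hb x hx)
  exact (List.subperm_of_subset hn hsub).perm_of_length_le (by simp [hlen])

lemma good_nodup {n : ℕ} {l : List ℕ} (h : l.Perm (List.range n)) : l.Nodup :=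
  h.nodup_iff.mpr (List.nodup_range (n := n))

lemma good_length {n : ℕ} {l : List ℕ} (h : l.Perm (List.range n)) : l.length = n := by
  simpa using h.length_eq

lemma good_lt {n : ℕ} {l : List ℕ} (h : l.Perm (List.range n)) : ∀ x ∈ l, x < n := by
  intro x hx
  exact List.mem_range.mp (h.mem_iff.mp hx)

/-- relabelling by a map that preserves order on elements of `l` -/
lemma a213_map {f : ℕ → ℕ} {l : List ℕ}
    (hf : ∀ x ∈ l, ∀ y ∈ l, (x < y ↔ f x < f y)) :
    A213 (l.map f) ↔ A213 l := by
  have hlen : (l.map f).length = l.length := by simp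
  constructor
  · intro H i j k hij hjk hk hc
    refine H i j k hij hjk (by omega) ?_
    rw [val_map (by omega), val_map (by omega), val_map (by omega)]
    have h1 := hf _ (val_mem (show j < l.length by omega)) _ (val_mem (show i < l.length by omega))
    have h2 := hf _ (val_mem (show i < l.length by omega)) _ (val_mem (show k < l.length by omega))
    exact ⟨h1.mp hc.1, h2.mp hc.2⟩
  · intro H i j k hij hjk hk hc
    rw [hlen] at hk
    rw [val_map (by omega), val_map (by omega), val_map (by omega)] at hc
    refine H i j k hij hjk hk ?_
    have h1 := hf _ (val_mem (show j < l.length by omega)) _ (val_mem (show i < l.length by omega))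
    have h2 := hf _ (val_mem (show i < l.length by omega)) _ (val_mem (show k < l.length by omega))
    exact ⟨h1.mpr hc.1, h2.mpr hc.2⟩

lemma nodd_map {f : ℕ → ℕ} {l : List ℕ}
    (hf : ∀ x ∈ l, ∀ y ∈ l, (x < y ↔ f x < f y)) :
    NoDD (l.map f) ↔ NoDD l := by
  have hlen : (l.map f).length = l.length := by simp
  constructor
  · intro H i hi hc
    refine H i (by omega) ?_
    rw [val_map (by omega), val_map (by omega), val_map (by omega)]
    have h1 := hf _ (val_mem (show i+2 < l.length by omega)) _ (val_mem (show i+1 < l.length by omega))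
    have h2 := hf _ (val_mem (show i+1 < l.length by omega)) _ (val_mem (show i < l.length by omega))
    exact ⟨h1.mp hc.1, h2.mp hc.2⟩
  · intro H i hi hc
    rw [hlen] at hi
    rw [val_map (by omega), val_map (by omega), val_map (by omega)] at hc
    refine H i hi ?_
    have h1 := hf _ (val_mem (show i+2 < l.length by omega)) _ (val_mem (show i+1 < l.length by omega))
    have h2 := hf _ (val_mem (show i+1 < l.length by omega)) _ (val_mem (show i < l.length by omega))
    exact ⟨h1.mpr hc.1, h2.mpr hc.2⟩

lemma noed_map {f : ℕ → ℕ} {l : List ℕ}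
    (hf : ∀ x ∈ l, ∀ y ∈ l, (x < y ↔ f x < f y)) :
    NoED (l.map f) ↔ NoED l := by
  have hlen : (l.map f).length = l.length := by simp
  constructor
  · intro H i hi
    have := H i (by omega)
    rw [val_map (by omega), val_map (by omega)] at this
    exact (hf _ (val_mem (show i < l.length by omega)) _ (val_mem (show i+1 < l.length by omega))).mpr this
  · intro H i hi
    rw [hlen] at hi
    rw [val_map (by omega), val_map (by omega)]
    exact (hf _ (val_mem (show i < l.length by omega)) _ (val_mem (show i+1 < l.length by omega))).mp (H i hi)

lemma a213_append {l₁ l₂ : List ℕ} (h : A213 (l₁ ++ l₂)) : A213 l₁ ∧ A213 l₂ := by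
  constructor
  · intro i j k hij hjk hk hc
    refine h i j k hij hjk (by simp; omega) ?_
    rw [val_append_left (by omega), val_append_left (by omega), val_append_left (by omega)]
    exact hc
  · intro i j k hij hjk hk hc
    refine h (l₁.length + i) (l₁.length + j) (l₁.length + k) (by omega) (by omega)
      (by simp; omega) ?_
    rw [val_append_right (by omega), val_append_right (by omega), val_append_right (by omega)]
    simpa using hc

lemma nodd_append {l₁ l₂ : List ℕ} (h : NoDD (l₁ ++ l₂)) : NoDD l₁ ∧ NoDD l₂ := by
  constructor
  · intro i hi hc
    refine h i (by simp; omega) ?_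
    rw [val_append_left (by omega), val_append_left (by omega), val_append_left (by omega)]
    exact hc
  · intro i hi hc
    refine h (l₁.length + i) (by simp; omega) ?_
    rw [val_append_right (by omega), val_append_right (by omega), val_append_right (by omega)]
    have e1 : l₁.length + i + 2 - l₁.length = i + 2 := by omega
    have e2 : l₁.length + i + 1 - l₁.length = i + 1 := by omega
    have e3 : l₁.length + i - l₁.length = i := by omega
    rw [e1, e2, e3]; exact hc


/-- value of `A ++ 0 :: B` at each position -/
lemma val_mid {A B : List ℕ} : val (A ++ 0 :: B) A.length = 0 := by
  rw [val_append_right le_rfl]; simp [val]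

lemma val_right {A B : List ℕ} {i : ℕ} (h : A.length < i) :
    val (A ++ 0 :: B) i = val B (i - A.length - 1) := by
  rw [val_append_right (by omega)]
  have : i - A.length = (i - A.length - 1) + 1 := by omega
  rw [this]; simp [val]

lemma good_assemble {A B : List ℕ}
    (hA2 : A213 A) (hAnd : NoDD A) (hAne : NoED A)
    (hB2 : A213 B) (hBnd : NoDD B)
    (hApos : ∀ a ∈ A, 0 < a) (hBpos : ∀ b ∈ B, 0 < b)
    (hAB : ∀ a ∈ A, ∀ b ∈ B, b < a) :
    A213 (A ++ 0 :: B) ∧ NoDD (A ++ 0 :: B) := by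
  have hlen : (A ++ 0 :: B).length = A.length + 1 + B.length := by simp; omega
  constructor
  · intro i j k hij hjk hk hc
    rw [hlen] at hk
    rcases Nat.lt_trichotomy k A.length with hk1 | hk1 | hk1
    · -- all inside A
      rw [val_append_left (by omega), val_append_left (by omega),
        val_append_left (by omega)] at hc
      exact hA2 i j k hij hjk hk1 hc
    · -- k is the 0 position : val k = 0, but val i < val k
      subst hk1
      rw [val_mid] at hc
      omega
    · -- k inside B
      rcases Nat.lt_trichotomy i A.length with hi1 | hi1 | hi1
      · -- i in A : val i > val k, contradiction with val i < val k
        rw [val_append_left hi1, val_right hk1] at hc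
        have hmA : val A i ∈ A := val_mem hi1
        have hmB : val B (k - A.length - 1) ∈ B := val_mem (by omega)
        exact absurd hc.2 (not_lt.mpr (le_of_lt (hAB _ hmA _ hmB)))
      · -- i is 0 position: val j < 0 impossible… val i = 0, val j < val i
        subst hi1
        rw [val_mid] at hc
        omega
      · -- all in B
        rw [val_right hi1, val_right (by omega), val_right hk1] at hc
        refine hB2 (i - A.length - 1) (j - A.length - 1) (k - A.length - 1)
          (by omega) (by omega) (by omega) hc
  · intro i hi hc
    rw [hlen] at hi
    rcases Nat.lt_trichotomy (i+2) A.length with h1 | h1 | h1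
    · rw [val_append_left (by omega), val_append_left (by omega),
        val_append_left (by omega)] at hc
      exact hAnd i (by omega) hc
    · -- triple ends at position of 0 : (A[i], A[i+1], 0) needs A[i] < A[i+1] : NoED
      rw [h1, val_mid, val_append_left (by omega), val_append_left (by omega)] at hc
      have := hAne i h1
      omega
    · rcases Nat.lt_trichotomy (i+1) A.length with h2 | h2 | h2
      · omega
      · -- middle is 0 : first conj val (i+2) < 0 impossible
        rw [h2, val_mid] at hc
        omega
      · rcases Nat.lt_trichotomy i A.length with h3 | h3 | h3
        · omega
        · -- i is the 0 position : second conj val (i+1) < 0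
          rw [h3, val_mid] at hc
          omega
        · rw [val_right h3, val_right (by omega), val_right (by omega)] at hc
          have e1 : i + 1 - A.length - 1 = (i - A.length - 1) + 1 := by omega
          have e2 : i + 2 - A.length - 1 = (i - A.length - 1) + 2 := by omega
          rw [e1, e2] at hc
          exact hBnd (i - A.length - 1) (by omega) hc

lemma exists_split {l : List ℕ} (h0 : (0:ℕ) ∈ l) :
    ∃ A B, l = A ++ 0 :: B ∧ (0:ℕ) ∉ A := by
  induction l with
  | nil => simp at h0
  | cons x t ih =>
    rcases eq_or_ne x 0 with rfl | hx
    · exact ⟨[], t, rfl, by simp⟩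
    · have h0t : (0:ℕ) ∈ t := by
        rcases List.mem_cons.mp h0 with h | h
        · exact absurd h.symm hx
        · exact h
      obtain ⟨A, B, rfl, hA⟩ := ih h0t
      exact ⟨x :: A, B, rfl, by simp [hx, hA]; omega⟩

lemma split_unique : ∀ {A₁ : List ℕ} {B₁ A₂ B₂ : List ℕ},
    A₁ ++ 0 :: B₁ = A₂ ++ 0 :: B₂ → (0:ℕ) ∉ A₁ → (0:ℕ) ∉ A₂ → A₁ = A₂ ∧ B₁ = B₂ := by
  intro A₁
  induction A₁ with
  | nil =>
    intro B₁ A₂ B₂ h h1 h2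
    cases A₂ with
    | nil => simpa using h
    | cons a t =>
      simp only [List.nil_append, List.cons_append, List.cons.injEq] at h
      exact absurd (h.1 ▸ List.mem_cons_self (a := a) (l := t)) (h.1 ▸ h2)
  | cons a t ih =>
    intro B₁ A₂ B₂ h h1 h2
    cases A₂ with
    | nil =>
      simp only [List.nil_append, List.cons_append, List.cons.injEq] at h
      exact absurd (h.1 ▸ List.mem_cons_self (a := a) (l := t)) (h.1 ▸ h1)
    | cons a' t' =>
      simp only [List.cons_append, List.cons.injEq] at h
      obtain ⟨rfl, h⟩ := h
      have := ih h (fun hm => h1 (List.mem_cons_of_mem _ hm))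
        (fun hm => h2 (List.mem_cons_of_mem _ hm))
      exact ⟨by rw [this.1], this.2⟩


lemma split_good {n : ℕ} {A B : List ℕ} (hg : Good (n+1) (A ++ 0 :: B)) (h0A : (0:ℕ) ∉ A) :
    (∀ a ∈ A, B.length + 1 ≤ a ∧ a ≤ n) ∧ (∀ b ∈ B, 1 ≤ b ∧ b ≤ B.length) ∧
    A.length + B.length = n ∧
    A213 A ∧ NoDD A ∧ NoED A ∧ A213 B ∧ NoDD B := by
  obtain ⟨hperm, h2, hdd⟩ := hg
  have hnd : (A ++ 0 :: B).Nodup := good_nodup hperm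
  have hlt : ∀ x ∈ A ++ 0 :: B, x < n + 1 := good_lt hperm
  have hlen : A.length + 1 + B.length = n + 1 := by
    have := good_length hperm; simp at this; omega
  have h0B : (0:ℕ) ∉ B := by
    rcases List.nodup_append.mp hnd with ⟨_, h2', _⟩
    exact (List.nodup_cons.mp h2').1
  have hAmem : ∀ a ∈ A, 1 ≤ a := by
    intro a ha
    rcases Nat.eq_zero_or_pos a with rfl | h
    · exact absurd ha h0A
    · exact h
  have hBmem : ∀ b ∈ B, 1 ≤ b := by
    intro b hb
    rcases Nat.eq_zero_or_pos b with rfl | h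
    · exact absurd hb h0B
    · exact h
  have hdisj : ∀ a ∈ A, ∀ b ∈ B, a ≠ b := by
    rcases List.nodup_append'.mp hnd with ⟨_, _, hd⟩
    intro a ha b hb heq
    exact hd ha (heq ▸ List.mem_cons_of_mem _ hb)
  -- cross inequality from A213
  have hAB : ∀ a ∈ A, ∀ b ∈ B, b < a := by
    intro a ha b hb
    obtain ⟨i, hi, hvi⟩ := mem_iff_val.mp ha
    obtain ⟨p, hp, hvp⟩ := mem_iff_val.mp hb
    by_contra hc
    have hab : a < b := lt_of_le_of_ne (not_lt.mp hc) (hdisj a ha b hb)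
    refine h2 i A.length (A.length + 1 + p) hi (by omega) (by simp; omega) ?_
    rw [val_mid, val_append_left hi, val_right (by omega), hvi]
    have : A.length + 1 + p - A.length - 1 = p := by omega
    rw [this, hvp]
    exact ⟨hAmem a ha, hab⟩
  have hAnodup : A.Nodup := (List.nodup_append.mp hnd).1
  have hBnodup : B.Nodup := (List.nodup_cons.mp (List.nodup_append.mp hnd).2.1).2
  -- bounds
  have hBub : ∀ b ∈ B, b ≤ B.length := by
    intro b hb
    have hsub : A.toFinset ⊆ Finset.Ioc b n := by
      intro a ha
      rw [List.mem_toFinset] at ha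
      refine Finset.mem_Ioc.mpr ⟨hAB a ha b hb, ?_⟩
      have := hlt a (by simp [ha])
      omega
    have hcard := Finset.card_le_card hsub
    rw [List.toFinset_card_of_nodup hAnodup, Nat.card_Ioc] at hcard
    have hbn : b < n + 1 := hlt b (by simp [hb])
    omega
  have hAlb : ∀ a ∈ A, B.length + 1 ≤ a := by
    intro a ha
    have hsub : (insert 0 B.toFinset) ⊆ Finset.Iio a := by
      intro x hx
      rcases Finset.mem_insert.mp hx with rfl | hx
      · exact Finset.mem_Iio.mpr (hAmem a ha)
      · rw [List.mem_toFinset] at hx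
        exact Finset.mem_Iio.mpr (hAB a ha x hx)
    have hcard := Finset.card_le_card hsub
    rw [Finset.card_insert_of_notMem (by simp [h0B]), List.toFinset_card_of_nodup hBnodup,
      Nat.card_Iio] at hcard
    omega
  have hA2 := (a213_append h2).1
  have hA2 := (a213_append h2).1
  have h2' : A213 ([0] ++ B) := (a213_append h2).2
  have hB2 := (a213_append h2').2
  have hAnd := (nodd_append hdd).1
  have hdd' : NoDD ([0] ++ B) := (nodd_append hdd).2
  have hBnd := (nodd_append hdd').2
  have hAne : NoED A := by
    intro i hi
    by_contra hc
    have hne : val A (i+1) ≠ val A i := fun h =>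
      by have := val_inj hAnodup (by omega) (by omega) h; omega
    have h1 : val A (i+1) < val A i := by omega
    have h0 : 0 < val A (i+1) := hAmem _ (val_mem (by omega))
    refine hdd i (by simp; omega) ?_
    rw [show i + 2 = A.length from hi, val_mid, val_append_left (by omega),
      val_append_left (by omega)]
    exact ⟨h0, h1⟩
  exact ⟨fun a ha => ⟨hAlb a ha, by have := hlt a (by simp [ha]); omega⟩,
    fun b hb => ⟨hBmem b hb, hBub b hb⟩, by omega, hA2, hAnd, hAne, hB2, hBnd⟩


def lift (v x : ℕ) : ℕ := if v ≤ x then x + 1 else x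

def nv (s : List ℕ) : ℕ := if s.length = 0 then 0 else val s (s.length - 1) + 1

def sig (s : List ℕ) : List ℕ := s.map (lift (nv s)) ++ [nv s]

lemma lift_lt_iff {v x y : ℕ} : lift v x < lift v y ↔ x < y := by
  unfold lift; split <;> split <;> omega

lemma sig_length {s : List ℕ} : (sig s).length = s.length + 1 := by simp [sig]

lemma sig_goodE {k : ℕ} {s : List ℕ} (hs : Good k s) : GoodE (k+1) (sig s) := by
  obtain ⟨hperm, h2, hdd⟩ := hs
  have hlen := good_length hperm
  have hnd := good_nodup hperm
  have hlt := good_lt hperm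
  obtain ⟨v, hv⟩ : ∃ v, nv s = v := ⟨_, rfl⟩
  have hsig : sig s = s.map (lift v) ++ [v] := by rw [sig, hv]
  have hvk : v ≤ k := by
    rcases Nat.eq_zero_or_pos s.length with h0 | h0
    · rw [← hv]; unfold nv; split <;> omega
    · have : val s (s.length - 1) < k := hlt _ (val_mem (by omega))
      rw [← hv]; unfold nv; split <;> omega
  have hlast : 0 < s.length → val s (s.length - 1) + 1 = v := by
    intro h
    rw [← hv]; unfold nv; split <;> omega
  have hliftle : ∀ x, x < k → lift v x ≤ k ∧ lift v x ≠ v := by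
    intro x hx; unfold lift; split <;> omega
  have hperm' : (sig s).Perm (List.range (k+1)) := by
    rw [hsig]
    refine perm_range_of ?_ (by simp [hlen]) ?_
    · rw [List.nodup_append']
      refine ⟨hnd.map_on ?_, List.nodup_singleton _, ?_⟩
      · intro x hx y hy hxy
        have h1 := @lift_lt_iff v x y
        have h2 := @lift_lt_iff v y x
        omega
      · intro x hx hx'
        simp only [List.mem_singleton] at hx'
        obtain ⟨y, hy, rfl⟩ := List.mem_map.mp hx
        exact (hliftle y (by have := hlt y hy; omega)).2 hx'
    · intro x hx
      rcases List.mem_append.mp hx with hx | hx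
      · obtain ⟨y, hy, rfl⟩ := List.mem_map.mp hx
        have h1 := (hliftle y (by have := hlt y hy; omega)).1
        have h2 := (hliftle y (by have := hlt y hy; omega)).2
        omega
      · simp only [List.mem_singleton] at hx
        omega
  have hvalmap : ∀ i, i < s.length → val (sig s) i = lift v (val s i) := by
    intro i hi
    rw [hsig, val_append_left (by simp [hi]), val_map hi]
  have hvallast : val (sig s) s.length = v := by
    rw [hsig, val_append_right (by simp)]
    simp [val]
  have hA : A213 (sig s) := by
    intro i j kk hij hjk hk hc
    rw [sig_length] at hk
    rcases Nat.lt_trichotomy kk s.length with h1 | h1 | h1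
    · rw [hvalmap i (by omega), hvalmap j (by omega), hvalmap kk (by omega)] at hc
      exact h2 i j kk hij hjk h1 ⟨lift_lt_iff.mp hc.1, lift_lt_iff.mp hc.2⟩
    · subst h1
      rw [hvallast, hvalmap i (by omega), hvalmap j (by omega)] at hc
      have hpos : 0 < s.length := by omega
      have hval_last := hlast hpos
      have hsi : val s i < v := by
        have h' := hc.2
        unfold lift at h'; split at h' <;> omega
      have hlifti : lift v (val s i) = val s i := by unfold lift; split <;> omega
      have hsj : val s j < val s i := by
        have h' := hc.1
        rw [hlifti] at h'
        unfold lift at h'; split at h' <;> omega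
      have hine : val s i ≠ val s (s.length - 1) := by
        intro h
        have := val_inj hnd (by omega) (by omega) h
        omega
      rcases Nat.lt_trichotomy j (s.length - 1) with h2' | h2' | h2'
      · exact h2 i j (s.length - 1) hij h2' (by omega) ⟨hsj, by omega⟩
      · rw [h2'] at hsj; omega
      · omega
    · omega
  have hD : NoDD (sig s) := by
    intro i hi hc
    rw [sig_length] at hi
    rcases Nat.lt_trichotomy (i+2) s.length with h1 | h1 | h1
    · rw [hvalmap i (by omega), hvalmap (i+1) (by omega), hvalmap (i+2) (by omega)] at hc
      exact hdd i h1 ⟨lift_lt_iff.mp hc.1, lift_lt_iff.mp hc.2⟩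
    · rw [h1, hvallast, hvalmap (i+1) (by omega)] at hc
      have hpos : 0 < s.length := by omega
      have he : i + 1 = s.length - 1 := by omega
      have hval_last := hlast hpos
      rw [he] at hc
      have h' := hc.1
      unfold lift at h'
      split at h' <;> omega
    · omega
  have hE : NoED (sig s) := by
    intro i hi
    rw [sig_length] at hi
    have hpos : 0 < s.length := by omega
    have he : i = s.length - 1 := by omega
    have he1 : i + 1 = s.length := by omega
    have hval_last := hlast hpos
    rw [he1, hvallast, he, hvalmap (s.length - 1) (by omega)]
    unfold lift; split <;> omega
  exact ⟨⟨hperm', hA, hD⟩, hE⟩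


lemma sig_injective {s t : List ℕ} (h : sig s = sig t) : s = t := by
  have hlen : s.length = t.length := by
    have := congrArg List.length h
    simp only [sig_length] at this
    omega
  have hv : nv s = nv t := by
    have h1 := congrArg (fun l => val l s.length) h
    rw [sig, sig, val_append_right (by simp), val_append_right (by simp [hlen])] at h1
    simpa [val, hlen] using h1
  rw [sig, sig, hv] at h
  have := List.append_inj_left h (by simp [hlen])
  have hinj : Function.Injective (lift (nv t)) := by
    intro x y hxy
    have h1 := @lift_lt_iff (nv t) x y
    have h2 := @lift_lt_iff (nv t) y x
    omega
  exact List.map_injective_iff.mpr hinj this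

lemma sig_surjective {k : ℕ} {t : List ℕ} (ht : GoodE (k+1) t) :
    ∃ s, Good k s ∧ sig s = t := by
  obtain ⟨⟨hperm, h2, hdd⟩, hed⟩ := ht
  have hlen := good_length hperm
  have hnd := good_nodup hperm
  have hlt := good_lt hperm
  rcases Nat.eq_zero_or_pos k with rfl | hk
  · -- t ~ range 1, so t = [0]
    have : t = [0] := by
      have h01 : List.range 1 = [0] := rfl
      rw [h01] at hperm
      exact List.Perm.eq_singleton hperm
    refine ⟨[], ⟨by simp, ?_, ?_⟩, ?_⟩
    · intro i j kk hij hjk hk; simp at hk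
    · intro i hi; simp at hi
    · rw [this, sig]; simp [nv]
  · -- k ≥ 1, length t = k+1 ≥ 2
    have hl2 : 2 ≤ t.length := by omega
    -- v := last value
    have hvlt : val t k < k + 1 := hlt _ (val_mem (by omega))
    have hsecond : val t (k-1) < val t k := by
      have := hed (k-1) (by omega)
      have he : k - 1 + 1 = k := by omega
      rwa [he] at this
    -- no value strictly between val t (k-1) and val t k
    have hbetween : ∀ w ∈ t, ¬ (val t (k-1) < w ∧ w < val t k) := by
      rintro w hw ⟨hw1, hw2⟩
      obtain ⟨p, hp, rfl⟩ := mem_iff_val.mp hw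
      have hpne1 : p ≠ k - 1 := fun h => by rw [h] at hw1; omega
      have hpne2 : p ≠ k := fun h => by rw [h] at hw2; omega
      have hpk : p < k - 1 := by
        rcases Nat.lt_trichotomy p (k-1) with h | h | h
        · exact h
        · exact absurd h hpne1
        · -- p > k-1, p ≠ k, p < k+1 : impossible
          omega
      exact h2 p (k-1) k hpk (by omega) (by omega) ⟨hw1, hw2⟩
    -- the value val t (k-1) + 1 is in t (it's ≤ k)
    have hvk : val t k = val t (k-1) + 1 := by
      by_contra hc
      have hmem : val t (k-1) + 1 ∈ t := by
        have : val t (k-1) + 1 ∈ List.range (k+1) := by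
          rw [List.mem_range]; omega
        exact hperm.mem_iff.mpr this
      exact hbetween _ hmem ⟨by omega, by omega⟩
    -- construct s
    have htd : t = t.dropLast ++ [val t k] := by
      have hne : t ≠ [] := by intro h; rw [h] at hlen; simp at hlen
      have : t.getLast hne = val t k := by
        rw [List.getLast_eq_getElem, val, List.getD_eq_getElem _ _ (by omega)]
        congr 1
        omega
      rw [← this]
      exact (List.dropLast_append_getLast hne).symm
    set w := val t k with hw
    set s : List ℕ := t.dropLast.map (fun x => if w < x then x - 1 else x) with hs
    have hdl : t.dropLast.length = k := by simp [hlen]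
    have hdlnd : t.dropLast.Nodup := by
      rw [htd] at hnd
      exact (List.nodup_append.mp hnd).1
    have hwnot : w ∉ t.dropLast := by
      rw [htd] at hnd
      rcases List.nodup_append'.mp hnd with ⟨_, _, hd⟩
      intro hmem
      exact hd hmem (List.mem_singleton.mpr rfl)
    have hdlmem : ∀ x ∈ t.dropLast, x < k + 1 ∧ x ≠ w := by
      intro x hx
      refine ⟨hlt x ((List.dropLast_sublist t).subset hx), fun h => hwnot (h ▸ hx)⟩
    have hsgood : Good k s := by
      refine ⟨perm_range_of ?_ (by simp [hs]; omega) ?_, ?_, ?_⟩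
      · refine hdlnd.map_on ?_
        intro x hx y hy hxy
        have h1 := hdlmem x hx
        have h2 := hdlmem y hy
        split at hxy <;> split at hxy <;> omega
      · intro x hx
        rw [hs] at hx
        obtain ⟨y, hy, rfl⟩ := List.mem_map.mp hx
        have h1 := hdlmem y hy
        have h2 : w ≤ k := by rw [hw] at hvlt ⊢; omega
        split <;> omega
      · -- A213 s
        have hA : A213 t.dropLast := by
          rw [htd] at h2
          exact (a213_append h2).1
        rw [hs]
        rw [a213_map ?_]
        · exact hA
        · intro x hx y hy
          have h1 := hdlmem x hx
          have h2 := hdlmem y hy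
          constructor
          · intro h; split <;> split <;> omega
          · intro h; split at h <;> split at h <;> omega
      · have hD : NoDD t.dropLast := by
          rw [htd] at hdd
          exact (nodd_append hdd).1
        rw [hs]
        rw [nodd_map ?_]
        · exact hD
        · intro x hx y hy
          have h1 := hdlmem x hx
          have h2 := hdlmem y hy
          constructor
          · intro h; split <;> split <;> omega
          · intro h; split at h <;> split at h <;> omega
    refine ⟨s, hsgood, ?_⟩
    -- sig s = t
    have hslen : s.length = k := by simp [hs]; omega
    have hslast : val s (k - 1) = w - 1 := by
      rw [hs, val_map (by omega)]
      have hvdl : val t.dropLast (k-1) = val t (k-1) := by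
        conv_rhs => rw [htd]
        rw [val_append_left (by omega)]
      rw [hvdl]
      rw [hw] at hvk ⊢
      rw [hvk]
      split <;> omega
    have hnvs : nv s = w := by
      unfold nv
      rw [hslen, hslast]
      have hw1 : 1 ≤ w := by omega
      split <;> omega
    rw [sig, hnvs]
    conv_rhs => rw [htd]
    congr 1
    · -- map lift w s = dropLast
      rw [hs, List.map_map]
      have : ∀ x ∈ t.dropLast, (lift w ∘ fun x => if w < x then x - 1 else x) x = x := by
        intro x hx
        have h1 := hdlmem x hx
        simp only [Function.comp_apply, lift]
        split <;> split <;> omega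
      rw [List.map_congr_left this]; simp


lemma map_add_good {c : ℕ} {l : List ℕ} :
    (A213 (l.map (· + c)) ↔ A213 l) ∧ (NoDD (l.map (· + c)) ↔ NoDD l) ∧
    (NoED (l.map (· + c)) ↔ NoED l) := by
  have hf : ∀ x ∈ l, ∀ y ∈ l, (x < y ↔ x + c < y + c) := by intro x _ y _; omega
  exact ⟨a213_map hf, nodd_map hf, noed_map hf⟩

lemma phi0_good {n : ℕ} {b : List ℕ} (hb : Good n b) :
    Good (n+1) (0 :: b.map (· + 1)) := by
  obtain ⟨hperm, h2, hdd⟩ := hb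
  have hlen := good_length hperm
  have hnd := good_nodup hperm
  have hlt := good_lt hperm
  have hass := good_assemble (A := []) (B := b.map (· + 1))
    (by intro i j k _ _ hk; simp at hk) (by intro i hi; simp at hi)
    (by intro i hi; simp at hi)
    (map_add_good.1.mpr h2) (map_add_good.2.1.mpr hdd)
    (by simp) (by intro x hx; obtain ⟨y, _, rfl⟩ := List.mem_map.mp hx; omega)
    (by simp)
  simp only [List.nil_append] at hass
  refine ⟨?_, hass.1, hass.2⟩
  refine perm_range_of ?_ (by simp [hlen]) ?_
  · rw [List.nodup_cons]
    constructor
    · intro hx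
      obtain ⟨y, _, hy⟩ := List.mem_map.mp hx
      omega
    · refine hnd.map_on ?_
      intro x _ y _ h
      omega
  · intro x hx
    rcases List.mem_cons.mp hx with rfl | hx
    · omega
    · obtain ⟨y, hy, rfl⟩ := List.mem_map.mp hx
      have := hlt y hy
      omega

lemma phi1_good {n k : ℕ} (hkn : k < n) {s b : List ℕ}
    (hs : Good k s) (hb : Good (n-1-k) b) :
    Good (n+1) ((sig s).map (· + (n-k)) ++ 0 :: b.map (· + 1)) := by
  obtain ⟨⟨hperm, h2, hdd⟩, hed⟩ := sig_goodE hs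
  obtain ⟨hbperm, hb2, hbdd⟩ := hb
  have hlen := good_length hperm
  have hnd := good_nodup hperm
  have hlt := good_lt hperm
  have hblen := good_length hbperm
  have hbnd := good_nodup hbperm
  have hblt := good_lt hbperm
  have hAmem : ∀ x ∈ (sig s).map (· + (n-k)), n - 1 - k + 1 ≤ x ∧ x ≤ n := by
    intro x hx
    obtain ⟨y, hy, rfl⟩ := List.mem_map.mp hx
    have := hlt y hy
    omega
  have hBmem : ∀ x ∈ b.map (· + 1), 1 ≤ x ∧ x ≤ n - 1 - k := by
    intro x hx
    obtain ⟨y, hy, rfl⟩ := List.mem_map.mp hx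
    have := hblt y hy
    omega
  have hass := good_assemble
    (map_add_good.1.mpr h2) (map_add_good.2.1.mpr hdd) (map_add_good.2.2.mpr hed)
    (map_add_good.1.mpr hb2) (map_add_good.2.1.mpr hbdd)
    (fun a ha => by have := hAmem a ha; omega)
    (fun x hx => by have := hBmem x hx; omega)
    (fun a ha x hx => by have := hAmem a ha; have := hBmem x hx; omega)
  refine ⟨?_, hass.1, hass.2⟩
  refine perm_range_of ?_ (by simp [hlen, hblen]; omega) ?_
  · rw [List.nodup_append']
    refine ⟨hnd.map_on (by intro x _ y _ h; omega), ?_, ?_⟩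
    · rw [List.nodup_cons]
      refine ⟨?_, hbnd.map_on (by intro x _ y _ h; omega)⟩
      intro hx
      have := hBmem _ hx
      omega
    · intro x hxA hxB
      have h1 := hAmem x hxA
      rcases List.mem_cons.mp hxB with rfl | hxB
      · omega
      · have := hBmem x hxB
        omega
  · intro x hx
    rcases List.mem_append.mp hx with hx | hx
    · have := hAmem x hx; omega
    · rcases List.mem_cons.mp hx with rfl | hx
      · omega
      · have := hBmem x hx; omega

def Phi (n : ℕ) : (Lset n ⊕ (Σ k : Fin n, Lset k.1 × Lset (n-1-k.1))) → Lset (n+1)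
  | Sum.inl ⟨b, hb⟩ => ⟨0 :: b.map (· + 1), phi0_good hb⟩
  | Sum.inr ⟨k, ⟨s, hs⟩, ⟨b, hb⟩⟩ =>
      ⟨(sig s).map (· + (n-k.1)) ++ 0 :: b.map (· + 1), phi1_good k.2 hs hb⟩


lemma map_sub_add {c : ℕ} {l : List ℕ} (h : ∀ x ∈ l, c ≤ x) :
    (l.map (fun x => x - c)).map (· + c) = l := by
  rw [List.map_map]
  have : ∀ x ∈ l, ((· + c) ∘ fun x => x - c) x = x := by
    intro x hx
    have := h x hx
    simp only [Function.comp_apply]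
    omega
  rw [List.map_congr_left this]
  simp

lemma good_map_sub {c n : ℕ} {l : List ℕ} (h2 : A213 l) (hdd : NoDD l)
    (hnd : l.Nodup) (hlen : l.length = n) (hmem : ∀ x ∈ l, c ≤ x ∧ x < c + n) :
    Good n (l.map (fun x => x - c)) := by
  have hf : ∀ x ∈ l, ∀ y ∈ l, (x < y ↔ x - c < y - c) := by
    intro x hx y hy
    have := hmem x hx
    have := hmem y hy
    omega
  refine ⟨perm_range_of ?_ (by simp [hlen]) ?_, (a213_map hf).mpr h2, (nodd_map hf).mpr hdd⟩
  · refine hnd.map_on ?_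
    intro x hx y hy h
    have := hmem x hx
    have := hmem y hy
    omega
  · intro x hx
    obtain ⟨y, hy, rfl⟩ := List.mem_map.mp hx
    have := hmem y hy
    omega

lemma phi_injective (n : ℕ) : Function.Injective (Phi n) := by
  have hnotmemA : ∀ (k : ℕ) (s : List ℕ), (0:ℕ) ∉ (sig s).map (· + (n-k)) ∧
      0 < ((sig s).map (· + (n-k))).length → True := fun _ _ _ => trivial
  intro x y h
  have hl := congrArg Subtype.val h
  match x, y with
  | Sum.inl ⟨b₁, hb₁⟩, Sum.inl ⟨b₂, hb₂⟩ =>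
    simp only [Phi, List.cons.injEq] at hl
    have := List.map_injective_iff.mpr (show Function.Injective (· + 1) from fun a b h => by simp at h; omega) hl.2
    subst this
    rfl
  | Sum.inl ⟨b₁, hb₁⟩, Sum.inr ⟨k, ⟨s, hs⟩, ⟨b₂, hb₂⟩⟩ =>
    exfalso
    simp only [Phi] at hl
    have h0 : (0:ℕ) ∉ (sig s).map (· + (n-k.1)) := by
      intro hm
      obtain ⟨y, hy, hy'⟩ := List.mem_map.mp hm
      have hlty := good_lt (sig_goodE hs).1.1 y hy
      have hk2 := k.2
      simp at hy'
      omega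
    have := split_unique (A₁ := []) (B₁ := b₁.map (· + 1)) hl (by simp) h0
    have hlen := congrArg List.length this.1
    simp [sig_length] at hlen
  | Sum.inr ⟨k, ⟨s, hs⟩, ⟨b₂, hb₂⟩⟩, Sum.inl ⟨b₁, hb₁⟩ =>
    exfalso
    simp only [Phi] at hl
    have h0 : (0:ℕ) ∉ (sig s).map (· + (n-k.1)) := by
      intro hm
      obtain ⟨y, hy, hy'⟩ := List.mem_map.mp hm
      have hlty := good_lt (sig_goodE hs).1.1 y hy
      have hk2 := k.2
      simp at hy'
      omega
    have := split_unique (A₂ := []) (B₂ := b₁.map (· + 1)) hl h0 (by simp)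
    have hlen := congrArg List.length this.1
    simp [sig_length] at hlen
  | Sum.inr ⟨⟨k₁, hk₁⟩, ⟨s₁, hs₁⟩, ⟨b₁, hb₁⟩⟩, Sum.inr ⟨⟨k₂, hk₂⟩, ⟨s₂, hs₂⟩, ⟨b₂, hb₂⟩⟩ =>
    simp only [Phi] at hl
    have h01 : (0:ℕ) ∉ (sig s₁).map (· + (n-k₁)) := by
      intro hm
      obtain ⟨y, hy, hy'⟩ := List.mem_map.mp hm
      have hlty := good_lt (sig_goodE hs₁).1.1 y hy
      simp only [Fin.val_mk] at hlty
      simp at hy'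
      omega
    have h02 : (0:ℕ) ∉ (sig s₂).map (· + (n-k₂)) := by
      intro hm
      obtain ⟨y, hy, hy'⟩ := List.mem_map.mp hm
      have hlty := good_lt (sig_goodE hs₂).1.1 y hy
      simp only [Fin.val_mk] at hlty
      simp at hy'
      omega
    obtain ⟨hA, hB⟩ := split_unique hl h01 h02
    have hk : k₁ = k₂ := by
      have hlen := congrArg List.length hA
      have e1 := good_length (sig_goodE hs₁).1.1
      have e2 := good_length (sig_goodE hs₂).1.1
      simp only [List.length_map] at hlen
      simp only [Fin.val_mk] at e1 e2
      omega
    subst hk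
    have hsig : sig s₁ = sig s₂ :=
      List.map_injective_iff.mpr (show Function.Injective (· + (n-k₁)) from fun a b h => by simp at h; omega) hA
    have hs12 := sig_injective hsig
    subst hs12
    have hb12 : b₁ = b₂ :=
      List.map_injective_iff.mpr (show Function.Injective (· + 1) from fun a b h => by simp at h; omega)
        hB
    subst hb12
    rfl

lemma phi_surjective (n : ℕ) : Function.Surjective (Phi n) := by
  rintro ⟨l, hl⟩
  have h0 : (0:ℕ) ∈ l := hl.1.mem_iff.mpr (List.mem_range.mpr (by omega))
  obtain ⟨A, B, rfl, h0A⟩ := exists_split h0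
  obtain ⟨hAbd, hBbd, hlen, hA2, hAnd, hAne, hB2, hBnd⟩ := split_good hl h0A
  have hnd := good_nodup hl.1
  have hAnodup : A.Nodup := (List.nodup_append.mp hnd).1
  have hBnodup : B.Nodup := (List.nodup_cons.mp (List.nodup_append.mp hnd).2.1).2
  have hgoodB : Good B.length (B.map (fun x => x - 1)) :=
    good_map_sub hB2 hBnd hBnodup rfl (fun x hx => ⟨(hBbd x hx).1, by have := (hBbd x hx).2; omega⟩)
  rcases List.eq_nil_or_concat A with rfl | hAne'
  · -- A = []
    have hBlen : B.length = n := by simpa using hlen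
    refine ⟨Sum.inl ⟨B.map (fun x => x - 1), hBlen ▸ hgoodB⟩, ?_⟩
    apply Subtype.ext
    simp only [Phi, List.nil_append]
    rw [map_sub_add (fun x hx => (hBbd x hx).1)]
  · have hAlen : 0 < A.length := by
      obtain ⟨l', a, rfl⟩ := hAne'
      simp
    set j := A.length with hj
    set m := B.length with hm
    have hkn : j - 1 < n := by omega
    -- A'' ∈ GoodE j
    have hgoodA : Good j (A.map (fun x => x - (m+1))) :=
      good_map_sub hA2 hAnd hAnodup rfl
        (fun x hx => ⟨(hAbd x hx).1, by have := (hAbd x hx).2; omega⟩)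
    have hgoodAE : GoodE (j-1+1) (A.map (fun x => x - (m+1))) := by
      have he : j - 1 + 1 = j := by omega
      rw [he]
      refine ⟨hgoodA, ?_⟩
      have hf : ∀ x ∈ A, ∀ y ∈ A, (x < y ↔ x - (m+1) < y - (m+1)) := by
        intro x hx y hy
        have := hAbd x hx
        have := hAbd y hy
        omega
      exact (noed_map hf).mpr hAne
    obtain ⟨s, hs, hsig⟩ := sig_surjective hgoodAE
    have hmeq : n - 1 - (j-1) = m := by omega
    refine ⟨Sum.inr ⟨⟨j-1, hkn⟩, ⟨s, hs⟩, ⟨B.map (fun x => x - 1), hmeq ▸ hgoodB⟩⟩, ?_⟩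
    apply Subtype.ext
    simp only [Phi]
    rw [hsig, map_sub_add (fun x hx => (hBbd x hx).1)]
    have he2 : n - (j-1) = m + 1 := by omega
    rw [he2, map_sub_add (fun x hx => by have := (hAbd x hx).1; omega)]


instance lset_finite (n : ℕ) : Finite (Lset n) := by
  have hfin : {l : List ℕ | Good n l}.Finite := by
    refine Set.Finite.subset (List.range n).permutations.finite_toSet ?_
    intro l hl
    simpa [List.mem_permutations] using hl.1
  exact hfin.to_subtype

lemma card_sigma_fin {n : ℕ} (β : Fin n → Type) [∀ i, Finite (β i)] :
    Nat.card ((i : Fin n) × β i) = ∑ i : Fin n, Nat.card (β i) := by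
  have : ∀ i, Fintype (β i) := fun i => Fintype.ofFinite (β i)
  classical
  simp only [Nat.card_eq_fintype_card]
  exact Fintype.card_sigma

lemma card_lset : ∀ n : ℕ, Nat.card (Lset n) = motzkin n := by
  intro n
  induction n using Nat.strong_induction_on with
  | _ n ih =>
    match n, ih with
    | 0, _ =>
      have e : Lset 0 ≃ PUnit.{1} := {
        toFun := fun _ => PUnit.unit
        invFun := fun _ => ⟨[], by simp, by intro i j k _ _ hk; simp at hk,
          by intro i hi; simp at hi⟩
        left_inv := by
          rintro ⟨l, hl⟩
          have : l = [] := by simpa using hl.1.symm.nil_eq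
          simp [this]
        right_inv := fun _ => rfl }
      rw [Nat.card_congr e]
      simp [motzkin]
    | n+1, ih =>
      have e := Equiv.ofBijective (Phi n) ⟨phi_injective n, phi_surjective n⟩
      rw [← Nat.card_congr e, Nat.card_sum, card_sigma_fin]
      have hsum : ∑ i : Fin n, Nat.card (Lset i.1 × Lset (n-1-i.1)) =
          ∑ k ∈ Finset.range n, motzkin k * motzkin (n-1-k) := by
        rw [← Fin.sum_univ_eq_sum_range (fun k => motzkin k * motzkin (n-1-k)) n]
        refine Finset.sum_congr rfl ?_
        intro i _
        rw [Nat.card_prod, ih i.1 (by omega), ih (n-1-i.1) (by omega)]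
      rw [hsum, ih n (by omega)]
      rw [motzkin]
      congr 1
      rw [← Finset.sum_attach (Finset.range n) (fun k => motzkin k * motzkin (n-1-k))]


def wlist {n : ℕ} (π : Equiv.Perm (Fin n)) : List ℕ := List.ofFn (fun i => (π i : ℕ))

lemma wlist_length {n : ℕ} (π : Equiv.Perm (Fin n)) : (wlist π).length = n := by
  simp [wlist]

lemma wlist_val {n : ℕ} (π : Equiv.Perm (Fin n)) (i : ℕ) (h : i < n) :
    val (wlist π) i = (π ⟨i, h⟩ : ℕ) := by
  rw [val, List.getD_eq_getElem _ _ (by simp [wlist, h])]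
  simp [wlist]

lemma wlist_perm {n : ℕ} (π : Equiv.Perm (Fin n)) : (wlist π).Perm (List.range n) := by
  refine perm_range_of ?_ (wlist_length π) ?_
  · rw [wlist, List.nodup_ofFn]
    intro i j h
    exact π.injective (Fin.ext h)
  · intro x hx
    rw [wlist, List.mem_ofFn] at hx
    obtain ⟨i, hi⟩ := hx
    rw [← hi]
    exact (π i).2

lemma c213_iff {n : ℕ} (π : Equiv.Perm (Fin n)) : Contains213 π ↔ ¬ A213 (wlist π) := by
  constructor
  · rintro ⟨a, b, c, hab, hbc, h1, h2⟩ hA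
    refine hA a.1 b.1 c.1 (Fin.lt_def.mp hab) (Fin.lt_def.mp hbc)
      (by rw [wlist_length]; exact c.2) ?_
    rw [wlist_val π a.1 a.2, wlist_val π b.1 b.2, wlist_val π c.1 c.2]
    exact ⟨Fin.lt_def.mp h1, Fin.lt_def.mp h2⟩
  · intro hA
    by_contra hC
    apply hA
    intro i j k hij hjk hk hc
    rw [wlist_length] at hk
    have hik : i < n := Nat.lt_trans hij (Nat.lt_trans hjk hk)
    have hjn : j < n := Nat.lt_trans hjk hk
    rw [wlist_val π i hik, wlist_val π j hjn, wlist_val π k hk] at hc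
    exact hC ⟨⟨i, hik⟩, ⟨j, hjn⟩, ⟨k, hk⟩, Fin.lt_def.mpr hij, Fin.lt_def.mpr hjk,
      Fin.lt_def.mpr hc.1, Fin.lt_def.mpr hc.2⟩

lemma simsun_iff {n : ℕ} (π : Equiv.Perm (Fin n)) (hC : ¬ Contains213 π) :
    IsSimsun π ↔ NoDD (wlist π) := by
  constructor
  · intro hS i hi hc
    rw [wlist_length] at hi
    have h0 : i < n := by omega
    have h1 : i + 1 < n := by omega
    rw [wlist_val π (i+2) hi, wlist_val π (i+1) h1, wlist_val π i h0] at hc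
    refine hS n ⟨⟨i, h0⟩, ⟨i+1, h1⟩, ⟨i+2, hi⟩,
      Fin.mk_lt_mk.mpr (by omega), Fin.mk_lt_mk.mpr (by omega),
      (π _).2, (π _).2, (π _).2, ?_, ?_, hc.1, hc.2⟩
    · intro m hm1 hm2
      rw [Fin.lt_def] at hm1 hm2
      simp only [Fin.val_mk] at hm1 hm2
      omega
    · intro m hm1 hm2
      rw [Fin.lt_def] at hm1 hm2
      simp only [Fin.val_mk] at hm1 hm2
      omega
  · intro hD k ⟨a, b, c, hab, hbc, hak, hbk, hck, h1, h2, hcb, hba⟩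
    have hab' := Fin.lt_def.mp hab
    have hbc' := Fin.lt_def.mp hbc
    rcases Nat.lt_or_ge (b.1 + 1) c.1 with h | h
    · -- gap between b and c : 213 pattern (a, b, b+1)
      have hm : b.1 + 1 < n := Nat.lt_trans h c.2
      have hkm := h2 ⟨b.1+1, hm⟩ (Fin.lt_def.mpr (by simp)) (Fin.lt_def.mpr (by simpa))
      refine hC ⟨a, b, ⟨b.1+1, hm⟩, hab, Fin.lt_def.mpr (by simp), hba, ?_⟩
      show (π a : ℕ) < (π ⟨b.1+1, hm⟩ : ℕ)
      omega
    · have hc1 : c.1 = b.1 + 1 := by omega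
      rcases Nat.lt_or_ge (a.1 + 1) b.1 with h' | h' 
      · -- gap between a and b : double descent at positions b-1, b, b+1
        have hm : b.1 - 1 < n := Nat.lt_trans (by omega) b.2
        have hkm := h1 ⟨b.1-1, hm⟩ (Fin.lt_def.mpr (by simp; omega))
          (Fin.lt_def.mpr (by simp; omega))
        refine hD (b.1 - 1) (by rw [wlist_length]; omega) ?_
        have e1 : b.1 - 1 + 1 = b.1 := by omega
        have e2 : b.1 - 1 + 2 = c.1 := by omega
        have hb2 : b.1 < n := b.2
        have hc2 : c.1 < n := c.2
        rw [e1, e2, wlist_val π c.1 hc2, wlist_val π b.1 hb2, wlist_val π (b.1-1) hm]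
        have eb : π ⟨b.1, hb2⟩ = π b := by congr 1
        have ec : π ⟨c.1, hc2⟩ = π c := by congr 1
        rw [eb, ec]
        have hkm' : k ≤ (π ⟨b.1-1, hm⟩ : ℕ) := hkm
        exact ⟨hcb, by omega⟩
      · -- a, b, c consecutive : double descent at a
        have hb1 : b.1 = a.1 + 1 := by omega
        refine hD a.1 (by rw [wlist_length]; have := c.2; omega) ?_
        have ha2 : a.1 < n := a.2
        have hb2 : b.1 < n := b.2
        have hc2 : c.1 < n := c.2
        have e1 : a.1 + 1 = b.1 := by omega
        have e2 : a.1 + 2 = c.1 := by omega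
        have h12 : a.1 + 1 < n := by omega
        have h22 : a.1 + 2 < n := by omega
        rw [wlist_val π (a.1+2) h22, wlist_val π (a.1+1) h12, wlist_val π a.1 ha2]
        have ea : (⟨a.1, ha2⟩ : Fin n) = a := Fin.ext rfl
        have eb : (⟨a.1+1, h12⟩ : Fin n) = b := Fin.ext (by simp only [Fin.val_mk]; omega)
        have ec : (⟨a.1+2, h22⟩ : Fin n) = c := Fin.ext (by simp only [Fin.val_mk]; omega)
        rw [ea, eb, ec]
        exact ⟨hcb, hba⟩

def Psi (n : ℕ) (p : {π : Equiv.Perm (Fin n) // IsSimsun π ∧ ¬ Contains213 π}) : Lset n :=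
  ⟨wlist p.1, wlist_perm p.1, not_not.mp ((c213_iff p.1).not.mp p.2.2),
    (simsun_iff p.1 p.2.2).mp p.2.1⟩

lemma psi_bijective (n : ℕ) : Function.Bijective (Psi n) := by
  constructor
  · rintro ⟨π₁, h₁⟩ ⟨π₂, h₂⟩ h
    have hl : wlist π₁ = wlist π₂ := congrArg Subtype.val h
    rw [wlist, wlist] at hl
    have := List.ofFn_inj.mp hl
    refine Subtype.ext (Equiv.ext fun i => ?_)
    exact Fin.ext (congrFun this i)
  · rintro ⟨l, hperm, h2, hdd⟩
    have hlen := good_length hperm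
    have hnd := good_nodup hperm
    have hlt := good_lt hperm
    have hg : ∀ i : Fin n, val l i.1 < n := fun i => hlt _ (val_mem (by omega))
    have hginj : Function.Injective (fun i : Fin n => (⟨val l i.1, hg i⟩ : Fin n)) := by
      intro i j hij
      have : val l i.1 = val l j.1 := congrArg Fin.val hij
      exact Fin.ext (val_inj hnd (by omega) (by omega) this)
    have hgbij := Finite.injective_iff_bijective.mp hginj
    set π : Equiv.Perm (Fin n) := Equiv.ofBijective _ hgbij with hπ
    have hπval : ∀ i : Fin n, (π i : ℕ) = val l i.1 := fun i => rfl
    have hw : wlist π = l := by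
      refine List.ext_getElem (by rw [wlist_length, hlen]) ?_
      intro i hi hi'
      have hin : i < n := by rwa [wlist_length] at hi
      have hv : val (wlist π) i = val l i := by
        rw [wlist_val π i hin, hπval]
      rw [val, val, List.getD_eq_getElem _ _ hi, List.getD_eq_getElem _ _ hi'] at hv
      exact hv
    have hC : ¬ Contains213 π := by
      rw [c213_iff, hw, not_not]
      exact h2
    have hS : IsSimsun π := by
      rw [simsun_iff π hC, hw]
      exact hdd
    exact ⟨⟨π, hS, hC⟩, Subtype.ext hw⟩

lemma card_perm_eq (n : ℕ) :
    Nat.card {π : Equiv.Perm (Fin n) // IsSimsun π ∧ ¬ Contains213 π} = Nat.card (Lset n) :=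
  Nat.card_congr (Equiv.ofBijective (Psi n) (psi_bijective n))

end SimsunProof

/-- The number of simsun permutations of `{1, …, n}` avoiding the pattern 213
equals the Motzkin number `M n`. -/
theorem simsun_avoid213_count (n : ℕ) :
    Nat.card {π : Equiv.Perm (Fin n) // IsSimsun π ∧ ¬ Contains213 π} = motzkin n := by
  rw [SimsunProof.card_perm_eq n]
  exact SimsunProof.card_lset n
end

section
/- For every n ≥ 0, a permutation of {1,…,n} avoiding the pattern 213 is simsun if and only if it has no double descent. Equivalently, the set of simsun permutations of {1,…,n} avoiding 213 equals the set of permutations of {1,…,n} avoiding both the pattern 213 and the generalized pattern 3̂2̂1̂. -/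
/-- A 213-avoiding permutation is simsun if and only if it has no double
descent; equivalently, the simsun permutations avoiding 213 are exactly the
permutations avoiding both 213 and the generalized pattern 3̂2̂1̂. -/
theorem simsun_iff_noDoubleDescent_of_avoids213 (n : ℕ) :
    (∀ π : Equiv.Perm (Fin n), ¬ Contains213 π →
        (IsSimsun π ↔ ¬ HasDoubleDescent π)) ∧
      {π : Equiv.Perm (Fin n) | IsSimsun π ∧ ¬ Contains213 π} =
        {π : Equiv.Perm (Fin n) | ¬ Contains213 π ∧ ¬ HasDoubleDescent π} := by
  have main : ∀ π : Equiv.Perm (Fin n), ¬ Contains213 π →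
      (IsSimsun π ↔ ¬ HasDoubleDescent π) := by
    intro π h213
    constructor
    · intro hs hdd
      obtain ⟨i, h, h1, h2⟩ := hdd
      exact hs n ⟨⟨i, by omega⟩, ⟨i + 1, by omega⟩, ⟨i + 2, h⟩,
        by simp [Fin.lt_def], by simp [Fin.lt_def],
        (π _).isLt, (π _).isLt, (π _).isLt,
        fun m hm1 hm2 => by simp [Fin.lt_def] at hm1 hm2; omega,
        fun m hm1 hm2 => by simp [Fin.lt_def] at hm1 hm2; omega,
        h1, h2⟩
    · intro hnd k ⟨a, b, c, hab, hbc, hak, hbk, hck, hg1, hg2, h1, h2⟩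
      rw [Fin.lt_def] at hab hbc
      by_cases hc : c.val = b.val + 1
      · by_cases hb : b.val = a.val + 1
        · refine hnd ⟨a.val, by omega, ?_, ?_⟩
          · have e1 : (⟨a.val + 2, by omega⟩ : Fin n) = c := Fin.ext (by simp only [Fin.val_mk]; omega)
            have e2 : (⟨a.val + 1, by omega⟩ : Fin n) = b := Fin.ext (by simp only [Fin.val_mk]; omega)
            rw [e1, e2, Fin.lt_def]; exact h1
          · have e2 : (⟨a.val + 1, by omega⟩ : Fin n) = b := Fin.ext (by simp only [Fin.val_mk]; omega)
            have e3 : (⟨a.val, by omega⟩ : Fin n) = a := Fin.ext rfl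
            rw [e2, e3, Fin.lt_def]; exact h2
        · -- b > a+1; use position b-1 which has value ≥ k
          have hm : k ≤ (π ⟨b.val - 1, by omega⟩ : ℕ) :=
            hg1 _ (by rw [Fin.lt_def]; simp; omega) (by rw [Fin.lt_def]; simp; omega)
          refine hnd ⟨b.val - 1, by omega, ?_, ?_⟩
          · have e1 : (⟨b.val - 1 + 2, by omega⟩ : Fin n) = c := Fin.ext (by simp; omega)
            have e2 : (⟨b.val - 1 + 1, by omega⟩ : Fin n) = b := Fin.ext (by simp; omega)
            rw [e1, e2, Fin.lt_def]; exact h1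
          · have e2 : (⟨b.val - 1 + 1, by omega⟩ : Fin n) = b := Fin.ext (by simp; omega)
            rw [e2, Fin.lt_def]
            exact lt_of_lt_of_le hbk hm
      · -- c > b+1; the position b+1 has value ≥ k, giving a 213 pattern
        have hm : k ≤ (π ⟨b.val + 1, by omega⟩ : ℕ) :=
          hg2 _ (by rw [Fin.lt_def]; simp) (by rw [Fin.lt_def]; simp; omega)
        exact h213 ⟨a, b, ⟨b.val + 1, by omega⟩, by rw [Fin.lt_def]; omega,
          by rw [Fin.lt_def]; simp, by rw [Fin.lt_def]; exact h2,
          by rw [Fin.lt_def]; exact lt_of_lt_of_le hak hm⟩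
  refine ⟨main, ?_⟩
  ext π
  simp only [Set.mem_setOf_eq]
  constructor
  · rintro ⟨hs, h2⟩; exact ⟨h2, (main π h2).mp hs⟩
  · rintro ⟨h2, hnd⟩; exact ⟨(main π h2).mpr hnd, h2⟩
end

section
/- For every n ≥ 1, the number of sequences (a_1, a_2, …, a_n) of nonnegative integers with a_1 = 1 and such that for every i with 1 ≤ i ≤ n−1, either a_{i+1} = a_i + 1 or 0 ≤ a_{i+1} < a_i, equals the Motzkin number M_n. -/
/-- The allowed step: go up by one, or drop to anything smaller. -/
def MStep (a b : ℕ) : Prop := b = a + 1 ∨ b < a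

/-- Valid sequences of length `m`, encoded as lists forming a `MStep`-chain from `0`
(which forces the first entry to be `1`). -/
abbrev MW (m : ℕ) : Type := {l : List ℕ // List.Chain MStep 0 l ∧ l.length = m}

theorem chain_cons' {R : ℕ → ℕ → Prop} {a b : ℕ} {l : List ℕ} :
    List.Chain R a (b :: l) ↔ R a b ∧ List.Chain R b l := List.isChain_cons_cons
theorem chain_singleton' {R : ℕ → ℕ → Prop} {a b : ℕ} :
    List.Chain R a [b] ↔ R a b := by
  rw [chain_cons']; exact ⟨fun h => h.1, fun h => ⟨h, List.Chain.nil⟩⟩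
theorem chain_split' {R : ℕ → ℕ → Prop} {a b : ℕ} {l₁ l₂ : List ℕ} :
    List.Chain R a (l₁ ++ b :: l₂) ↔ List.Chain R a (l₁ ++ [b]) ∧ List.Chain R b l₂ :=
  List.isChain_cons_split
theorem chain_iff_get' {R : ℕ → ℕ → Prop} : ∀ {a : ℕ} {l : List ℕ}, List.Chain R a l ↔
    (∀ h : 0 < List.length l, R a (List.get l ⟨0, h⟩)) ∧
      ∀ (i : ℕ) (h : i < List.length l - 1),
        R (List.get l ⟨i, by omega⟩) (List.get l ⟨i+1, by omega⟩) := by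
  intro a l
  induction l generalizing a with
  | nil => simpa using List.Chain.nil
  | cons b t ih =>
    rw [chain_cons', ih]
    constructor
    · rintro ⟨hab, h0, hi⟩
      refine ⟨fun _ => hab, fun i hi' => ?_⟩
      cases i with
      | zero => simpa using h0 (by simp at hi'; omega)
      | succ j => simpa using hi j (by simp at hi'; omega)
    · rintro ⟨hab, hi⟩
      refine ⟨by simpa using hab (by simp), fun h => by simpa using hi 0 (by simp; omega),
        fun i h => by simpa using hi (i + 1) (by simp; omega)⟩

theorem mstep_zero {a : ℕ} (h : MStep 0 a) : a = 1 := by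
  rcases h with h | h <;> omega

theorem chain_bound {v : ℕ} {l : List ℕ} (h : List.Chain MStep v l) :
    ∀ i (hi : i < l.length), l.get ⟨i, hi⟩ ≤ v + i + 1 := by
  induction l generalizing v with
  | nil => intro i hi; simp at hi
  | cons x t ih =>
    rw [chain_cons'] at h
    intro i hi
    cases i with
    | zero =>
      simp only [List.get]
      rcases h.1 with h1 | h1 <;> omega
    | succ j =>
      have := ih h.2 j (by simpa using hi)
      simp only [List.get]
      rcases h.1 with h1 | h1 <;> omega

instance MW.finite (m : ℕ) : Finite (MW m) := by
  apply Finite.of_injective (β := Fin m → Fin (m + 2))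
    (fun l i => ⟨l.val.get ⟨i.1, by rw [l.2.2]; exact i.2⟩, by
      have := chain_bound l.2.1 i.1 (by rw [l.2.2]; exact i.2)
      have hi := i.2
      omega⟩)
  intro a b hab
  apply Subtype.ext
  apply List.ext_get (by rw [a.2.2, b.2.2])
  intro i h1 h2
  have := congrFun hab ⟨i, by rw [← a.2.2]; exact h1⟩
  simpa using congrArg Fin.val this

theorem chain_succ {v : ℕ} {l : List ℕ} (h : List.Chain MStep v l) :
    List.Chain MStep (v + 1) (l.map (· + 1)) := by
  induction l generalizing v with
  | nil => exact List.Chain.nil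
  | cons x t ih =>
    rw [chain_cons'] at h
    rw [List.map_cons, chain_cons']
    exact ⟨by rcases h.1 with h1 | h1 <;> [left; right] <;> omega, ih h.2⟩

theorem chain_pred {v : ℕ} {l : List ℕ} (h : List.Chain MStep (v + 1) l)
    (h0 : ∀ x ∈ l, x ≠ 0) : List.Chain MStep v (l.map (· - 1)) := by
  induction l generalizing v with
  | nil => exact List.Chain.nil
  | cons x t ih =>
    rw [chain_cons'] at h
    rw [List.map_cons, chain_cons']
    have hx : x ≠ 0 := h0 x (by simp)
    refine ⟨by rcases h.1 with h1 | h1 <;> [left; right] <;> omega, ?_⟩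
    have hx1 : x - 1 + 1 = x := by omega
    exact ih (v := x - 1) (by rw [hx1]; exact h.2) (fun y hy => h0 y (List.mem_cons_of_mem _ hy))

theorem map_pred_succ {l : List ℕ} (h0 : ∀ x ∈ l, x ≠ 0) :
    (l.map (· - 1)).map (· + 1) = l := by
  rw [List.map_map]
  conv_rhs => rw [← List.map_id l]
  refine List.map_congr_left fun x hx => ?_
  have := h0 x hx
  simp only [Function.comp_apply, id]
  omega

theorem chain_succ_append_zero {v : ℕ} {l : List ℕ} (h : List.Chain MStep v l) :
    List.Chain MStep (v + 1) (l.map (· + 1) ++ [0]) := by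
  induction l generalizing v with
  | nil =>
    simp only [List.map_nil, List.nil_append]
    exact chain_singleton'.2 (Or.inr (Nat.succ_pos v))
  | cons x t ih =>
    rw [chain_cons'] at h
    rw [List.map_cons, List.cons_append, chain_cons']
    exact ⟨by rcases h.1 with h1 | h1 <;> [left; right] <;> omega, ih h.2⟩

theorem chain_of_append {R : ℕ → ℕ → Prop} {a : ℕ} {l₁ l₂ : List ℕ}
    (h : List.Chain R a (l₁ ++ l₂)) : List.Chain R a l₁ := by
  induction l₁ generalizing a with
  | nil => exact List.Chain.nil
  | cons x t ih =>
    rw [List.cons_append, chain_cons'] at h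
    exact List.chain_cons.2 ⟨h.1, ih h.2⟩

theorem eq_of_append_zero : ∀ {A A' q q' : List ℕ}, 0 ∉ A → 0 ∉ A' →
    A ++ 0 :: q = A' ++ 0 :: q' → A = A' ∧ q = q' := by
  intro A
  induction A with
  | nil =>
    intro A' q q' _ hA' h
    cases A' with
    | nil => simpa using h
    | cons x t =>
      simp only [List.nil_append, List.cons_append, List.cons.injEq] at h
      exact absurd (h.1 ▸ List.mem_cons_self (a := x) (l := t)) (h.1 ▸ hA')
  | cons x t ih =>
    intro A' q q' hA hA' h
    cases A' with
    | nil =>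
      simp only [List.cons_append, List.nil_append, List.cons.injEq] at h
      exact absurd (h.1 ▸ List.mem_cons_self (a := x) (l := t)) (by rw [h.1] at hA; exact hA)
    | cons y s =>
      simp only [List.cons_append, List.cons.injEq] at h
      obtain ⟨rfl, h2⟩ := h
      have := ih (fun hm => hA (List.mem_cons_of_mem _ hm))
        (fun hm => hA' (List.mem_cons_of_mem _ hm)) h2
      exact ⟨by rw [this.1], this.2⟩

theorem exists_split_zero : ∀ {t : List ℕ}, 0 ∈ t →
    ∃ A q, 0 ∉ A ∧ t = A ++ 0 :: q := by
  intro t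
  induction t with
  | nil => intro h; simp at h
  | cons x s ih =>
    intro h
    by_cases hx : x = 0
    · exact ⟨[], s, by simp, by simp [hx]⟩
    · have : 0 ∈ s := by
        rcases List.mem_cons.1 h with h1 | h1
        · exact absurd h1.symm hx
        · exact h1
      obtain ⟨A, q, hA, rfl⟩ := ih this
      exact ⟨x :: A, q, by simp [hA, Ne.symm hx], by simp⟩

/-- The structure map realizing the Motzkin recurrence. -/
def Psi (n : ℕ) :
    (MW (n + 1) ⊕ (Σ k : Fin (n + 1), MW k × MW (n - k))) → MW (n + 2)
  | .inl ⟨l, hc, hl⟩ =>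
    ⟨1 :: l.map (· + 1),
      List.chain_cons.2 ⟨Or.inl rfl, chain_succ hc⟩,
      by simp [hl]⟩
  | .inr ⟨k, ⟨p, hpc, hpl⟩, ⟨q, hqc, hql⟩⟩ =>
    ⟨1 :: (p.map (· + 1) ++ 0 :: q),
      List.chain_cons.2 ⟨Or.inl rfl,
        chain_split'.2 ⟨chain_succ_append_zero hpc, hqc⟩⟩,
      by
        have hk : (k : ℕ) ≤ n := Nat.lt_succ_iff.1 k.2
        simp [hpl, hql]
        omega⟩

theorem Psi_injective (n : ℕ) : Function.Injective (Psi n) := by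
  rintro (⟨l, hc, hl⟩ | ⟨k, ⟨p, hpc, hpl⟩, ⟨q, hqc, hql⟩⟩)
    (⟨l', hc', hl'⟩ | ⟨k', ⟨p', hpc', hpl'⟩, ⟨q', hqc', hql'⟩⟩) h <;>
    simp only [Psi, Subtype.mk.injEq, List.cons.injEq, true_and] at h
  · congr 1
    exact Subtype.ext (List.map_injective_iff.2 (fun a b hab => by omega) h)
  · exfalso
    have : (0 : ℕ) ∈ l.map (· + 1) := by
      rw [h]; exact List.mem_append_right _ (List.mem_cons_self (a := 0) (l := q'))
    simp at this
  · exfalso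
    have : (0 : ℕ) ∈ l'.map (· + 1) := by
      rw [← h]; exact List.mem_append_right _ (List.mem_cons_self (a := 0) (l := q))
    simp at this
  · have h0 : (0:ℕ) ∉ p.map (· + 1) := by simp
    have h0' : (0:ℕ) ∉ p'.map (· + 1) := by simp
    obtain ⟨h1, h2⟩ := eq_of_append_zero h0 h0' h
    have hp : p = p' := List.map_injective_iff.2 (fun a b hab => by omega) h1
    have hkk : (k : ℕ) = (k' : ℕ) := by
      rw [← hpl, ← hpl', hp]
    congr 1
    obtain ⟨k, hk⟩ := k
    obtain ⟨k', hk'⟩ := k'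
    simp only at hkk
    subst hkk
    subst hp
    subst h2
    rfl

theorem Psi_surjective (n : ℕ) : Function.Surjective (Psi n) := by
  rintro ⟨l, hc, hl⟩
  obtain ⟨a, t, rfl⟩ : ∃ a t, l = a :: t := by
    cases l with
    | nil => simp at hl
    | cons a t => exact ⟨a, t, rfl⟩
  rw [chain_cons'] at hc
  have ha : a = 1 := mstep_zero hc.1
  subst ha
  have ht : t.length = n + 1 := by simpa using hl
  by_cases h0 : (0 : ℕ) ∈ t
  · obtain ⟨A, q, hA, rfl⟩ := exists_split_zero h0
    have hchain := hc.2
    have hsplit := chain_split'.1 hchain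
    have hq : List.Chain MStep 0 q := hsplit.2
    have hAchain : List.Chain MStep 1 A := chain_of_append hchain
    have hAne : ∀ x ∈ A, x ≠ 0 := fun x hx hx0 => hA (hx0 ▸ hx)
    have hp : List.Chain MStep 0 (A.map (· - 1)) := chain_pred hAchain hAne
    have hkle : A.length ≤ n := by
      simp only [List.length_append, List.length_cons] at ht
      omega
    refine ⟨.inr ⟨⟨A.length, by omega⟩, ⟨A.map (· - 1), hp, by simp⟩,
      ⟨q, hq, ?_⟩⟩, ?_⟩
    · simp only [List.length_append, List.length_cons] at ht
      simp only
      omega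
    · simp only [Psi]
      apply Subtype.ext
      simp only [List.cons.injEq, true_and]
      rw [map_pred_succ hAne]
  · have hne : ∀ x ∈ t, x ≠ 0 := fun x hx hx0 => h0 (hx0 ▸ hx)
    have hp : List.Chain MStep 0 (t.map (· - 1)) := chain_pred hc.2 hne
    refine ⟨.inl ⟨t.map (· - 1), hp, by simp [ht]⟩, ?_⟩
    simp only [Psi]
    apply Subtype.ext
    simp only [List.cons.injEq, true_and]
    exact map_pred_succ hne

theorem nat_card_sigma {ι : Type*} [Fintype ι] (f : ι → Type*) [∀ i, Finite (f i)] :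
    Nat.card (Σ i, f i) = ∑ i, Nat.card (f i) := by
  classical
  letI : ∀ i, Fintype (f i) := fun i => Fintype.ofFinite _
  simp [Nat.card_eq_fintype_card, Fintype.card_sigma]

instance MW.unique0 : Unique (MW 0) where
  default := ⟨[], List.Chain.nil, rfl⟩
  uniq := fun ⟨l, hc, hl⟩ => Subtype.ext (List.length_eq_zero_iff.1 hl)

instance MW.unique1 : Unique (MW 1) where
  default := ⟨[1], List.chain_cons.2 ⟨Or.inl rfl, List.Chain.nil⟩, rfl⟩
  uniq := by
    rintro ⟨l, hc, hl⟩
    obtain ⟨a, rfl⟩ := List.length_eq_one_iff.1 hl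
    rw [chain_singleton'] at hc
    have := mstep_zero hc
    subst this
    rfl

theorem card_MW : ∀ m : ℕ, Nat.card (MW m) = motzkin m := by
  intro m
  induction m using Nat.strong_induction_on with
  | _ m ih =>
    match m with
    | 0 => simp [Nat.card_unique, motzkin]
    | 1 =>
      rw [Nat.card_unique]
      rw [motzkin]
      simp [motzkin]
    | n + 2 =>
      have e : (MW (n + 1) ⊕ (Σ k : Fin (n + 1), MW k × MW (n - k))) ≃ MW (n + 2) :=
        Equiv.ofBijective _ ⟨Psi_injective n, Psi_surjective n⟩
      rw [← Nat.card_congr e, Nat.card_sum, nat_card_sigma]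
      have hterm : ∀ k : Fin (n + 1), Nat.card (MW k × MW (n - k)) =
          motzkin k * motzkin (n - k) := by
        intro k
        rw [Nat.card_prod, ih k (by omega), ih (n - k) (by omega)]
      rw [Finset.sum_congr rfl (fun k _ => hterm k), ih (n + 1) (by omega)]
      rw [show motzkin (n + 2) = motzkin (n + 1) +
        ∑ k ∈ (Finset.range (n + 1)).attach, motzkin k * motzkin (n + 1 - 1 - k)
        from by rw [motzkin]]
      congr 1
      rw [Finset.sum_attach (Finset.range (n + 1)) (fun k => motzkin k * motzkin (n + 1 - 1 - k))]
      rw [← Fin.sum_univ_eq_sum_range (fun k => motzkin k * motzkin (n + 1 - 1 - k)) (n + 1)]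
      rfl

/-- For `n ≥ 1`, the number of sequences `(a 1, …, a n)` of nonnegative
integers with `a 1 = 1` and, for each `i`, either `a (i+1) = a i + 1` or
`a (i+1) < a i`, equals the Motzkin number `M n`.  (Sequences are indexed
0-based by `Fin n`.) -/
theorem motzkin_sequences_count (n : ℕ) (hn : 1 ≤ n) :
    Nat.card {a : Fin n → ℕ //
      a ⟨0, by omega⟩ = 1 ∧
      ∀ (i : ℕ) (h : i + 1 < n),
        a ⟨i + 1, h⟩ = a ⟨i, by omega⟩ + 1 ∨ a ⟨i + 1, h⟩ < a ⟨i, by omega⟩} =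
      motzkin n := by
  rw [← card_MW n]
  apply Nat.card_congr
  refine
    { toFun := fun a => ⟨List.ofFn a.1, ?_, by simp⟩
      invFun := fun l => ⟨fun i => l.1.get ⟨i.1, by rw [l.2.2]; exact i.2⟩, ?_⟩
      left_inv := ?_
      right_inv := ?_ }
  · obtain ⟨a, h1, h2⟩ := a
    rw [chain_iff_get']
    constructor
    · intro h
      have : (List.ofFn a).get ⟨0, h⟩ = a ⟨0, by omega⟩ := by
        simp [List.get_ofFn]
      rw [this, h1]
      exact Or.inl rfl
    · intro i hi
      simp only [List.length_ofFn] at hi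
      have hi' : i + 1 < n := by omega
      have e1 : (List.ofFn a).get ⟨i, by simp; omega⟩ = a ⟨i, by omega⟩ := by
        simp [List.get_ofFn]
      have e2 : (List.ofFn a).get ⟨i + 1, by simp; omega⟩ = a ⟨i + 1, hi'⟩ := by
        simp [List.get_ofFn]
      rw [e1, e2]
      exact h2 i hi'
  · obtain ⟨l, hc, hl⟩ := l
    rw [chain_iff_get'] at hc
    constructor
    · have h := hc.1 (by rw [hl]; omega)
      exact mstep_zero h
    · intro i hi
      exact hc.2 i (by omega)
  · rintro ⟨a, h1, h2⟩
    apply Subtype.ext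
    funext i
    simp [List.get_ofFn]
  · rintro ⟨l, hc, hl⟩
    apply Subtype.ext
    apply List.ext_get (by simp [hl])
    intro i hi1 hi2
    simp [List.get_ofFn]
end

section
/- For every n ≥ 0, the number of simsun permutations of {1,…,n} that avoid the pattern 231 equals the Motzkin number M_n. -/
/-- `π` contains the pattern 231. -/
def Contains231 {n : ℕ} (π : Equiv.Perm (Fin n)) : Prop :=
  ∃ a b c : Fin n, a < b ∧ b < c ∧ π c < π a ∧ π a < π b

namespace SimsunAux

def nth (l : List ℕ) (i : ℕ) : ℕ := l.getD i 0

def Sim (l : List ℕ) : Prop :=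
  ∀ k : ℕ, ¬ ∃ a b c : ℕ, a < b ∧ b < c ∧ c < l.length ∧
    nth l a < k ∧ nth l b < k ∧ nth l c < k ∧
    (∀ m, a < m → m < b → k ≤ nth l m) ∧
    (∀ m, b < m → m < c → k ≤ nth l m) ∧
    nth l c < nth l b ∧ nth l b < nth l a

def Has231 (l : List ℕ) : Prop :=
  ∃ a b c : ℕ, a < b ∧ b < c ∧ c < l.length ∧ nth l c < nth l a ∧ nth l a < nth l b

def Good (n : ℕ) (l : List ℕ) : Prop := l.Perm (List.range n) ∧ Sim l ∧ ¬ Has231 l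

abbrev T (n : ℕ) := {l : List ℕ // Good n l}

-- basic nth lemmas
lemma nth_eq_getElem (l : List ℕ) (i : ℕ) (h : i < l.length) : nth l i = l[i] := by
  simp [nth, List.getD_eq_getElem?_getD, List.getElem?_eq_getElem h]

lemma nth_cons_succ (x : ℕ) (l : List ℕ) (i : ℕ) : nth (x :: l) (i+1) = nth l i := rfl

lemma nth_cons_zero (x : ℕ) (l : List ℕ) : nth (x :: l) 0 = x := rfl

lemma nth_append_left (l₁ l₂ : List ℕ) (i : ℕ) (h : i < l₁.length) :
    nth (l₁ ++ l₂) i = nth l₁ i := by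
  rw [nth_eq_getElem _ _ (by simp; omega), nth_eq_getElem _ _ h, List.getElem_append_left]

lemma nth_append_right (l₁ l₂ : List ℕ) (i : ℕ) (h : l₁.length ≤ i) (h2 : i < l₁.length + l₂.length) :
    nth (l₁ ++ l₂) i = nth l₂ (i - l₁.length) := by
  rw [nth_eq_getElem _ _ (by simp; omega), nth_eq_getElem _ _ (by omega)]
  exact List.getElem_append_right h

lemma nth_map (f : ℕ → ℕ) (l : List ℕ) (i : ℕ) (h : i < l.length) :
    nth (l.map f) i = f (nth l i) := by
  rw [nth_eq_getElem _ _ (by simpa), nth_eq_getElem _ _ h, List.getElem_map]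

lemma nth_mem (l : List ℕ) (i : ℕ) (h : i < l.length) : nth l i ∈ l := by
  rw [nth_eq_getElem _ _ h]; exact List.getElem_mem h

lemma nth_lt_of_perm_range {l : List ℕ} {n : ℕ} (hp : l.Perm (List.range n)) (i : ℕ)
    (h : i < l.length) : nth l i < n := by
  have := hp.mem_iff.mp (nth_mem l i h)
  simpa using this

def F {n : ℕ} (π : Equiv.Perm (Fin n)) : List ℕ := List.ofFn (fun i => (π i : ℕ))

lemma F_length {n : ℕ} (π : Equiv.Perm (Fin n)) : (F π).length = n := by simp [F]

lemma nth_F {n : ℕ} (π : Equiv.Perm (Fin n)) (i : ℕ) (h : i < n) :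
    nth (F π) i = π ⟨i, h⟩ := by
  rw [nth_eq_getElem _ _ (by simp [F_length, h])]
  simp [F]

lemma isSimsun_iff {n : ℕ} (π : Equiv.Perm (Fin n)) : IsSimsun π ↔ Sim (F π) := by
  constructor
  · intro H k ⟨a, b, c, hab, hbc, hc, ha', hb', hc', g1, g2, d1, d2⟩
    rw [F_length] at hc
    have hb : b < n := by omega
    have ha : a < n := by omega
    rw [nth_F π a ha] at ha' d2
    rw [nth_F π b hb] at hb' d1 d2
    rw [nth_F π c hc] at hc' d1
    exact H k ⟨⟨a, ha⟩, ⟨b, hb⟩, ⟨c, hc⟩, hab, hbc, ha', hb', hc',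
      fun m h1 h2 => by have := g1 m.1 h1 h2; rwa [nth_F π m.1 m.2] at this,
      fun m h1 h2 => by have := g2 m.1 h1 h2; rwa [nth_F π m.1 m.2] at this, d1, d2⟩
  · intro H k ⟨a, b, c, hab, hbc, ha', hb', hc', g1, g2, d1, d2⟩
    refine H k ⟨a.1, b.1, c.1, hab, hbc, by rw [F_length]; exact c.2, ?_, ?_, ?_, ?_, ?_, ?_, ?_⟩
    · rwa [nth_F π a.1 a.2]
    · rwa [nth_F π b.1 b.2]
    · rwa [nth_F π c.1 c.2]
    · intro m h1 h2
      have hm : m < n := lt_trans h2 b.2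
      rw [nth_F π m hm]
      exact g1 ⟨m, hm⟩ h1 h2
    · intro m h1 h2
      have hm : m < n := lt_trans h2 c.2
      rw [nth_F π m hm]
      exact g2 ⟨m, hm⟩ h1 h2
    · rw [nth_F π b.1 b.2, nth_F π c.1 c.2]; exact d1
    · rw [nth_F π a.1 a.2, nth_F π b.1 b.2]; exact d2

lemma contains231_iff {n : ℕ} (π : Equiv.Perm (Fin n)) : Contains231 π ↔ Has231 (F π) := by
  constructor
  · intro ⟨a, b, c, hab, hbc, h1, h2⟩
    exact ⟨a.1, b.1, c.1, hab, hbc, by rw [F_length]; exact c.2, by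
      rw [nth_F π a.1 a.2, nth_F π c.1 c.2]; exact h1, by
      rw [nth_F π a.1 a.2, nth_F π b.1 b.2]; exact h2⟩
  · intro ⟨a, b, c, hab, hbc, hc, h1, h2⟩
    rw [F_length] at hc
    have hb : b < n := by omega
    have ha : a < n := by omega
    rw [nth_F π a ha] at h1 h2
    rw [nth_F π b hb] at h2
    rw [nth_F π c hc] at h1
    exact ⟨⟨a, ha⟩, ⟨b, hb⟩, ⟨c, hc⟩, hab, hbc, h1, h2⟩

lemma F_perm {n : ℕ} (π : Equiv.Perm (Fin n)) : (F π).Perm (List.range n) := by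
  have nd : (F π).Nodup := by
    rw [List.nodup_iff_injective_getElem]
    intro i j hij
    simp only [F, List.getElem_ofFn] at hij
    have : π ⟨i.1, by have := i.2; simpa [F_length] using this⟩ =
        π ⟨j.1, by have := j.2; simpa [F_length] using this⟩ := Fin.val_injective hij
    have := π.injective this
    exact Fin.val_injective (by simpa using congrArg Fin.val this)
  rw [List.perm_ext_iff_of_nodup nd (List.nodup_range (n := n))]
  intro x
  simp only [List.mem_range, F, List.mem_ofFn]
  constructor
  · rintro ⟨i, rfl⟩; exact (π i).2
  · intro hx
    obtain ⟨i, hi⟩ := π.surjective ⟨x, hx⟩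
    exact ⟨i, by simp [hi]⟩

lemma F_inj {n : ℕ} : Function.Injective (@F n) := by
  intro π π' h
  ext i
  have := congrArg (fun l => nth l i.1) h
  rw [nth_F π i.1 i.2, nth_F π' i.1 i.2] at this
  exact this

lemma F_surj {n : ℕ} {l : List ℕ} (hp : l.Perm (List.range n)) : ∃ π : Equiv.Perm (Fin n), F π = l := by
  have hlen : l.length = n := by simpa using hp.length_eq
  have nd : l.Nodup := hp.nodup_iff.mpr (List.nodup_range (n := n))
  have hval : ∀ i : Fin n, nth l i.1 < n := fun i => nth_lt_of_perm_range hp i.1 (by omega)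
  set g : Fin n → Fin n := fun i => ⟨nth l i.1, hval i⟩ with hg
  have ginj : Function.Injective g := by
    intro i j hij
    have hv : nth l i.1 = nth l j.1 := congrArg Fin.val hij
    rw [nth_eq_getElem l i.1 (by omega), nth_eq_getElem l j.1 (by omega)] at hv
    exact Fin.ext ((List.Nodup.getElem_inj_iff nd (hi := by omega) (hj := by omega)).mp hv)
  have gbij : Function.Bijective g := (Finite.injective_iff_bijective).mp ginj
  refine ⟨Equiv.ofBijective g gbij, ?_⟩
  apply List.ext_getElem (by simp [F_length, hlen])
  intro i h1 h2
  rw [← nth_eq_getElem _ _ h1, ← nth_eq_getElem _ _ h2]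
  rw [nth_F _ i (by simpa [F_length] using h1)]
  rfl

lemma card_T (n : ℕ) :
    Nat.card {π : Equiv.Perm (Fin n) // IsSimsun π ∧ ¬ Contains231 π} = Nat.card (T n) := by
  apply Nat.card_eq_of_bijective
    (f := fun x => (⟨F x.1, F_perm x.1, (isSimsun_iff x.1).mp x.2.1,
      fun h => x.2.2 ((contains231_iff x.1).mpr h)⟩ : T n))
  constructor
  · intro x y h
    exact Subtype.ext (F_inj (congrArg Subtype.val h))
  · rintro ⟨l, hp, hs, h2⟩
    obtain ⟨π, rfl⟩ := F_surj hp
    exact ⟨⟨π, (isSimsun_iff π).mpr hs, fun h => h2 ((contains231_iff π).mp h)⟩, rfl⟩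


def consA (s : List ℕ) : List ℕ := 0 :: s.map Nat.succ

lemma consA_length (s : List ℕ) : (consA s).length = s.length + 1 := by simp [consA]

lemma nth_consA (s : List ℕ) (i : ℕ) (hi : i < s.length) :
    nth (consA s) (i+1) = nth s i + 1 := by
  show nth (s.map Nat.succ) i = _
  rw [nth_map _ _ _ hi]

lemma nth_consA_zero (s : List ℕ) : nth (consA s) 0 = 0 := rfl

lemma sim_consA (s : List ℕ) : Sim (consA s) ↔ Sim s := by
  constructor
  · intro H k ⟨a, b, c, hab, hbc, hc, ha', hb', hc', g1, g2, d1, d2⟩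
    refine H (k+1) ⟨a+1, b+1, c+1, by omega, by omega, by rw [consA_length]; omega,
      ?_, ?_, ?_, ?_, ?_, ?_, ?_⟩
    · rw [nth_consA s a (by omega)]; omega
    · rw [nth_consA s b (by omega)]; omega
    · rw [nth_consA s c (by omega)]; omega
    · intro m h1 h2
      obtain ⟨m', rfl⟩ : ∃ m', m = m' + 1 := ⟨m - 1, by omega⟩
      rw [nth_consA s m' (by omega)]
      have := g1 m' (by omega) (by omega); omega
    · intro m h1 h2
      obtain ⟨m', rfl⟩ : ∃ m', m = m' + 1 := ⟨m - 1, by omega⟩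
      rw [nth_consA s m' (by omega)]
      have := g2 m' (by omega) (by omega); omega
    · rw [nth_consA s b (by omega), nth_consA s c (by omega)]; omega
    · rw [nth_consA s a (by omega), nth_consA s b (by omega)]; omega
  · intro H k ⟨a, b, c, hab, hbc, hc, ha', hb', hc', g1, g2, d1, d2⟩
    rw [consA_length] at hc
    -- a cannot be 0
    have ha0 : a ≠ 0 := by
      rintro rfl
      rw [nth_consA_zero] at d2
      omega
    obtain ⟨a', rfl⟩ : ∃ a', a = a' + 1 := ⟨a - 1, by omega⟩
    obtain ⟨b', rfl⟩ : ∃ b', b = b' + 1 := ⟨b - 1, by omega⟩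
    obtain ⟨c', rfl⟩ : ∃ c', c = c' + 1 := ⟨c - 1, by omega⟩
    rw [nth_consA s a' (by omega)] at ha' d2
    rw [nth_consA s b' (by omega)] at hb' d1 d2
    rw [nth_consA s c' (by omega)] at hc' d1
    refine H (k-1) ⟨a', b', c', by omega, by omega, by omega,
      by omega, by omega, by omega, ?_, ?_, by omega, by omega⟩
    · intro m h1 h2
      have := g1 (m+1) (by omega) (by omega)
      rw [nth_consA s m (by omega)] at this; omega
    · intro m h1 h2
      have := g2 (m+1) (by omega) (by omega)
      rw [nth_consA s m (by omega)] at this; omega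

lemma has231_consA (s : List ℕ) : Has231 (consA s) ↔ Has231 s := by
  constructor
  · intro ⟨a, b, c, hab, hbc, hc, h1, h2⟩
    rw [consA_length] at hc
    have ha0 : a ≠ 0 := by
      rintro rfl
      rw [nth_consA_zero] at h1
      omega
    obtain ⟨a', rfl⟩ : ∃ a', a = a' + 1 := ⟨a - 1, by omega⟩
    obtain ⟨b', rfl⟩ : ∃ b', b = b' + 1 := ⟨b - 1, by omega⟩
    obtain ⟨c', rfl⟩ : ∃ c', c = c' + 1 := ⟨c - 1, by omega⟩
    rw [nth_consA s a' (by omega)] at h1 h2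
    rw [nth_consA s b' (by omega)] at h2
    rw [nth_consA s c' (by omega)] at h1
    exact ⟨a', b', c', by omega, by omega, by omega, by omega, by omega⟩
  · intro ⟨a, b, c, hab, hbc, hc, h1, h2⟩
    refine ⟨a+1, b+1, c+1, by omega, by omega, by rw [consA_length]; omega, ?_, ?_⟩
    · rw [nth_consA s a (by omega), nth_consA s c (by omega)]; omega
    · rw [nth_consA s a (by omega), nth_consA s b (by omega)]; omega

lemma consA_perm (s : List ℕ) (n : ℕ) (hp : s.Perm (List.range n)) :
    (consA s).Perm (List.range (n+1)) := by
  rw [List.range_succ_eq_map]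
  exact List.Perm.cons 0 (hp.map Nat.succ)


def consB (K : ℕ) (s t : List ℕ) : List ℕ :=
  (K+1) :: 0 :: (s.map Nat.succ ++ t.map (fun x => x + (K+2)))

lemma consB_length (K : ℕ) (s t : List ℕ) :
    (consB K s t).length = s.length + t.length + 2 := by
  simp [consB]

lemma nth_consB_zero (K : ℕ) (s t : List ℕ) : nth (consB K s t) 0 = K + 1 := rfl

lemma nth_consB_one (K : ℕ) (s t : List ℕ) : nth (consB K s t) 1 = 0 := rfl

lemma nth_consB_A (K : ℕ) (s t : List ℕ) (i : ℕ) (hi : i < s.length) :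
    nth (consB K s t) (i+2) = nth s i + 1 := by
  show nth (s.map Nat.succ ++ t.map (fun x => x + (K+2))) i = _
  rw [nth_append_left _ _ _ (by simpa), nth_map _ _ _ hi]

lemma nth_consB_B (K : ℕ) (s t : List ℕ) (j : ℕ) (hj : j < t.length) :
    nth (consB K s t) (j + s.length + 2) = nth t j + (K+2) := by
  show nth (s.map Nat.succ ++ t.map (fun x => x + (K+2))) (j + s.length) = _
  rw [nth_append_right _ _ _ (by simp) (by simp; omega)]
  have : j + s.length - (s.map Nat.succ).length = j := by simp
  rw [this, nth_map _ _ _ hj]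

lemma sim_consB (K : ℕ) (s t : List ℕ) (hs : ∀ x ∈ s, x < K) :
    Sim (consB K s t) ↔ Sim s ∧ Sim t := by
  have hsv : ∀ i, i < s.length → nth s i < K := fun i hi => hs _ (nth_mem s i hi)
  constructor
  · intro H
    constructor
    · -- Sim s
      intro k ⟨a, b, c, hab, hbc, hc, ha', hb', hc', g1, g2, d1, d2⟩
      refine H (k+1) ⟨a+2, b+2, c+2, by omega, by omega, by rw [consB_length]; omega,
        ?_, ?_, ?_, ?_, ?_, ?_, ?_⟩
      · rw [nth_consB_A K s t a (by omega)]; omega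
      · rw [nth_consB_A K s t b (by omega)]; omega
      · rw [nth_consB_A K s t c (by omega)]; omega
      · intro m h1 h2
        obtain ⟨m', rfl⟩ : ∃ m', m = m' + 2 := ⟨m - 2, by omega⟩
        rw [nth_consB_A K s t m' (by omega)]
        have := g1 m' (by omega) (by omega); omega
      · intro m h1 h2
        obtain ⟨m', rfl⟩ : ∃ m', m = m' + 2 := ⟨m - 2, by omega⟩
        rw [nth_consB_A K s t m' (by omega)]
        have := g2 m' (by omega) (by omega); omega
      · rw [nth_consB_A K s t b (by omega), nth_consB_A K s t c (by omega)]; omega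
      · rw [nth_consB_A K s t a (by omega), nth_consB_A K s t b (by omega)]; omega
    · -- Sim t
      intro k ⟨a, b, c, hab, hbc, hc, ha', hb', hc', g1, g2, d1, d2⟩
      refine H (k+(K+2)) ⟨a + s.length + 2, b + s.length + 2, c + s.length + 2,
        by omega, by omega, by rw [consB_length]; omega, ?_, ?_, ?_, ?_, ?_, ?_, ?_⟩
      · rw [nth_consB_B K s t a (by omega)]; omega
      · rw [nth_consB_B K s t b (by omega)]; omega
      · rw [nth_consB_B K s t c (by omega)]; omega
      · intro m h1 h2
        obtain ⟨m', rfl⟩ : ∃ m', m = m' + s.length + 2 := ⟨m - s.length - 2, by omega⟩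
        rw [nth_consB_B K s t m' (by omega)]
        have := g1 m' (by omega) (by omega); omega
      · intro m h1 h2
        obtain ⟨m', rfl⟩ : ∃ m', m = m' + s.length + 2 := ⟨m - s.length - 2, by omega⟩
        rw [nth_consB_B K s t m' (by omega)]
        have := g2 m' (by omega) (by omega); omega
      · rw [nth_consB_B K s t b (by omega), nth_consB_B K s t c (by omega)]; omega
      · rw [nth_consB_B K s t a (by omega), nth_consB_B K s t b (by omega)]; omega
  · rintro ⟨Hs, Ht⟩ k ⟨a, b, c, hab, hbc, hc, ha', hb', hc', g1, g2, d1, d2⟩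
    rw [consB_length] at hc
    -- case analysis on a
    rcases Nat.lt_or_ge a 2 with ha2 | ha2
    · interval_cases a
      · -- a = 0, value K+1
        rcases Nat.lt_or_ge b 2 with hb2 | hb2
        · interval_cases b
          rw [nth_consB_one] at d1; omega
        · -- b ≥ 2 : gap condition at m = 1 gives k ≤ 0
          have := g1 1 (by omega) (by omega)
          rw [nth_consB_one] at this
          have h0 : (0:ℕ) ≤ nth (consB K s t) c := Nat.zero_le _
          omega
      · -- a = 1, value 0
        rw [nth_consB_one] at d2; omega
    · rcases Nat.lt_or_ge a (s.length + 2) with haA | haB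
      · -- a in A region; then b, c in A region
        obtain ⟨a', rfl⟩ : ∃ a', a = a' + 2 := ⟨a - 2, by omega⟩
        rw [nth_consB_A K s t a' (by omega)] at ha' d2
        have hbA : b < s.length + 2 := by
          by_contra hbB
          obtain ⟨b', rfl⟩ : ∃ b', b = b' + s.length + 2 := ⟨b - s.length - 2, by omega⟩
          rw [nth_consB_B K s t b' (by omega)] at d2
          have := hsv a' (by omega); omega
        obtain ⟨b', rfl⟩ : ∃ b', b = b' + 2 := ⟨b - 2, by omega⟩
        rw [nth_consB_A K s t b' (by omega)] at hb' d1 d2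
        have hcA : c < s.length + 2 := by
          by_contra hcB
          obtain ⟨c', rfl⟩ : ∃ c', c = c' + s.length + 2 := ⟨c - s.length - 2, by omega⟩
          rw [nth_consB_B K s t c' (by omega)] at d1
          have := hsv b' (by omega); omega
        obtain ⟨c', rfl⟩ : ∃ c', c = c' + 2 := ⟨c - 2, by omega⟩
        rw [nth_consB_A K s t c' (by omega)] at hc' d1
        refine Hs (k-1) ⟨a', b', c', by omega, by omega, by omega, by omega, by omega, by omega,
          ?_, ?_, by omega, by omega⟩
        · intro m h1 h2
          have := g1 (m+2) (by omega) (by omega)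
          rw [nth_consB_A K s t m (by omega)] at this; omega
        · intro m h1 h2
          have := g2 (m+2) (by omega) (by omega)
          rw [nth_consB_A K s t m (by omega)] at this; omega
      · -- a in B region, so are b and c
        obtain ⟨a', rfl⟩ : ∃ a', a = a' + s.length + 2 := ⟨a - s.length - 2, by omega⟩
        obtain ⟨b', rfl⟩ : ∃ b', b = b' + s.length + 2 := ⟨b - s.length - 2, by omega⟩
        obtain ⟨c', rfl⟩ : ∃ c', c = c' + s.length + 2 := ⟨c - s.length - 2, by omega⟩
        rw [nth_consB_B K s t a' (by omega)] at ha' d2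
        rw [nth_consB_B K s t b' (by omega)] at hb' d1 d2
        rw [nth_consB_B K s t c' (by omega)] at hc' d1
        refine Ht (k-(K+2)) ⟨a', b', c', by omega, by omega, by omega, by omega, by omega,
          by omega, ?_, ?_, by omega, by omega⟩
        · intro m h1 h2
          have := g1 (m + s.length + 2) (by omega) (by omega)
          rw [nth_consB_B K s t m (by omega)] at this; omega
        · intro m h1 h2
          have := g2 (m + s.length + 2) (by omega) (by omega)
          rw [nth_consB_B K s t m (by omega)] at this; omega

lemma has231_consB (K : ℕ) (s t : List ℕ) (hs : ∀ x ∈ s, x < K) :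
    Has231 (consB K s t) ↔ Has231 s ∨ Has231 t := by
  have hsv : ∀ i, i < s.length → nth s i < K := fun i hi => hs _ (nth_mem s i hi)
  constructor
  · intro ⟨a, b, c, hab, hbc, hc, h1, h2⟩
    rw [consB_length] at hc
    rcases Nat.lt_or_ge a 2 with ha2 | ha2
    · interval_cases a
      · -- a = 0, value K+1; need nth b > K+1 so b in B; then c in B, nth c ≥ K+2 > K+1, contra
        rw [nth_consB_zero] at h1 h2
        exfalso
        have hbB : s.length + 2 ≤ b := by
          by_contra hbA
          rcases Nat.lt_or_ge b 2 with hb2 | hb2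
          · interval_cases b
            rw [nth_consB_one] at h2; omega
          · obtain ⟨b', rfl⟩ : ∃ b', b = b' + 2 := ⟨b - 2, by omega⟩
            rw [nth_consB_A K s t b' (by omega)] at h2
            have := hsv b' (by omega); omega
        obtain ⟨c', rfl⟩ : ∃ c', c = c' + s.length + 2 := ⟨c - s.length - 2, by omega⟩
        rw [nth_consB_B K s t c' (by omega)] at h1
        omega
      · rw [nth_consB_one] at h1; omega
    · rcases Nat.lt_or_ge a (s.length + 2) with haA | haB
      · obtain ⟨a', rfl⟩ : ∃ a', a = a' + 2 := ⟨a - 2, by omega⟩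
        rw [nth_consB_A K s t a' (by omega)] at h1 h2
        have hcA : c < s.length + 2 := by
          by_contra hcB
          obtain ⟨c', rfl⟩ : ∃ c', c = c' + s.length + 2 := ⟨c - s.length - 2, by omega⟩
          rw [nth_consB_B K s t c' (by omega)] at h1
          have := hsv a' (by omega); omega
        obtain ⟨b', rfl⟩ : ∃ b', b = b' + 2 := ⟨b - 2, by omega⟩
        rw [nth_consB_A K s t b' (by omega)] at h2
        obtain ⟨c', rfl⟩ : ∃ c', c = c' + 2 := ⟨c - 2, by omega⟩
        rw [nth_consB_A K s t c' (by omega)] at h1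
        exact Or.inl ⟨a', b', c', by omega, by omega, by omega, by omega, by omega⟩
      · obtain ⟨a', rfl⟩ : ∃ a', a = a' + s.length + 2 := ⟨a - s.length - 2, by omega⟩
        obtain ⟨b', rfl⟩ : ∃ b', b = b' + s.length + 2 := ⟨b - s.length - 2, by omega⟩
        obtain ⟨c', rfl⟩ : ∃ c', c = c' + s.length + 2 := ⟨c - s.length - 2, by omega⟩
        rw [nth_consB_B K s t a' (by omega)] at h1 h2
        rw [nth_consB_B K s t b' (by omega)] at h2
        rw [nth_consB_B K s t c' (by omega)] at h1
        exact Or.inr ⟨a', b', c', by omega, by omega, by omega, by omega, by omega⟩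
  · rintro (⟨a, b, c, hab, hbc, hc, h1, h2⟩ | ⟨a, b, c, hab, hbc, hc, h1, h2⟩)
    · refine ⟨a+2, b+2, c+2, by omega, by omega, by rw [consB_length]; omega, ?_, ?_⟩
      · rw [nth_consB_A K s t a (by omega), nth_consB_A K s t c (by omega)]; omega
      · rw [nth_consB_A K s t a (by omega), nth_consB_A K s t b (by omega)]; omega
    · refine ⟨a + s.length + 2, b + s.length + 2, c + s.length + 2, by omega, by omega,
        by rw [consB_length]; omega, ?_, ?_⟩
      · rw [nth_consB_B K s t a (by omega), nth_consB_B K s t c (by omega)]; omega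
      · rw [nth_consB_B K s t a (by omega), nth_consB_B K s t b (by omega)]; omega


lemma consB_perm (K M : ℕ) (s t : List ℕ) (hps : s.Perm (List.range K))
    (hpt : t.Perm (List.range M)) : (consB K s t).Perm (List.range (K + M + 2)) := by
  rw [show K + M + 2 = (K+2) + M by omega, List.range_add]
  have h2 : List.range (K+2) = 0 :: (List.map Nat.succ (List.range K) ++ [K+1]) := by
    rw [List.range_succ_eq_map, List.range_succ, List.map_append]
    rfl
  rw [h2]
  have hY : (t.map (fun x => x + (K+2))).Perm (List.map (fun x => K+2+x) (List.range M)) := by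
    have := hpt.map (fun x => x + (K+2))
    refine this.trans ?_
    rw [show (List.map (fun x => x + (K+2)) (List.range M)) = List.map (fun x => K+2+x) (List.range M) by
      apply List.map_congr_left; intro x _; omega]
  have hX : (s.map Nat.succ).Perm (List.map Nat.succ (List.range K)) := hps.map Nat.succ
  have p1 : (consB K s t).Perm (0 :: (K+1) :: (s.map Nat.succ ++ t.map (fun x => x + (K+2)))) :=
    List.Perm.swap _ _ _
  have p2 : ((K+1) :: (s.map Nat.succ ++ t.map (fun x => x + (K+2)))).Perm
      (s.map Nat.succ ++ (K+1) :: t.map (fun x => x + (K+2))) := List.perm_middle.symm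
  have p3 : (s.map Nat.succ ++ (K+1) :: t.map (fun x => x + (K+2))).Perm
      (List.map Nat.succ (List.range K) ++ (K+1) :: List.map (fun x => K+2+x) (List.range M)) :=
    hX.append (hY.cons (K+1))
  have p4 : 0 :: (List.map Nat.succ (List.range K) ++ (K+1) :: List.map (fun x => K+2+x) (List.range M))
      = 0 :: (List.map Nat.succ (List.range K) ++ [K+1]) ++ List.map (fun x => K+2+x) (List.range M) := by
    simp
  refine (p1.trans (List.Perm.cons 0 (p2.trans p3))).trans ?_
  rw [p4]

lemma osl (p : ℕ → Bool) (r : List ℕ)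
    (h : ∀ i j, i < j → j < r.length → p (nth r j) = true → p (nth r i) = true) :
    r = r.filter p ++ r.filter (fun x => !(p x)) := by
  induction r with
  | nil => rfl
  | cons x r ih =>
    cases hx : p x with
    | true =>
      rw [List.filter_cons_of_pos hx, List.filter_cons_of_neg (by simp [hx])]
      have := ih (fun i j hij hj hpj => h (i+1) (j+1) (by omega) (by simpa using Nat.add_lt_add_right hj 1) hpj)
      rw [List.cons_append, ← this]
    | false =>
      have hall : ∀ a ∈ x :: r, ¬ p a = true := by
        intro a ha
        rcases List.mem_cons.mp ha with rfl | ha'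
        · simp [hx]
        · obtain ⟨j, hj, rfl⟩ := List.mem_iff_getElem.mp ha'
          rw [← nth_eq_getElem _ _ hj]
          intro hpj
          have := h 0 (j+1) (by omega) (by simpa using Nat.add_lt_add_right hj 1)
            (by rwa [nth_cons_succ])
          rw [nth_cons_zero] at this
          simp [hx] at this
      rw [List.filter_eq_nil_iff.mpr hall, List.filter_eq_self.mpr (by
        intro a ha; simpa using hall a ha), List.nil_append]


instance finiteT (m : ℕ) : Finite (T m) := by
  have h1 : Finite {l : List ℕ // l.Perm (List.range m)} := by
    refine Finite.of_surjective
      (f := fun π : Equiv.Perm (Fin m) => (⟨F π, F_perm π⟩ : {l // l.Perm (List.range m)})) ?_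
    rintro ⟨l, hl⟩
    obtain ⟨π, rfl⟩ := F_surj hl
    exact ⟨π, rfl⟩
  exact Finite.of_injective (fun x : T m => (⟨x.1, x.2.1⟩ : {l // l.Perm (List.range m)}))
    (fun x y h => by
      have h2 := congrArg Subtype.val h
      exact Subtype.ext h2)

instance uniqueT0 : Unique (T 0) where
  default := ⟨[], List.Perm.refl _,
    fun k h => by obtain ⟨a, b, c, _, _, hc, _⟩ := h; simp at hc,
    fun h => by obtain ⟨a, b, c, _, _, hc, _⟩ := h; simp at hc⟩
  uniq := fun x => Subtype.ext (by simpa using x.2.1)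

def fwd {n : ℕ} : (T n ⊕ (Σ k : Fin n, T k.1 × T (n - 1 - k.1))) → T (n+1)
  | Sum.inl s => ⟨consA s.1, consA_perm s.1 n s.2.1, (sim_consA s.1).mpr s.2.2.1,
      fun h => s.2.2.2 ((has231_consA s.1).mp h)⟩
  | Sum.inr x =>
    ⟨consB x.1.1 x.2.1.1 x.2.2.1,
     by have := consB_perm x.1.1 (n-1-x.1.1) x.2.1.1 x.2.2.1 x.2.1.2.1 x.2.2.2.1
        rwa [show x.1.1 + (n-1-x.1.1) + 2 = n+1 from by have := x.1.2; omega] at this,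
     (sim_consB x.1.1 x.2.1.1 x.2.2.1
        (fun y hy => by simpa using x.2.1.2.1.mem_iff.mp hy)).mpr ⟨x.2.1.2.2.1, x.2.2.2.2.1⟩,
     fun h => by
       rcases (has231_consB x.1.1 x.2.1.1 x.2.2.1
        (fun y hy => by simpa using x.2.1.2.1.mem_iff.mp hy)).mp h with h' | h'
       exacts [x.2.1.2.2.2 h', x.2.2.2.2.2 h']⟩

lemma fwd_injective (n : ℕ) : Function.Injective (@fwd n) := by
  rintro (s | ⟨k, ⟨s, hs⟩, ⟨t, ht⟩⟩) (s' | ⟨k', ⟨s', hs'⟩, ⟨t', ht'⟩⟩) h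
  · have hl : consA s.1 = consA s'.1 := congrArg Subtype.val h
    rw [consA, consA, List.cons.injEq] at hl
    have := List.map_injective_iff.mpr Nat.succ_injective hl.2
    exact congrArg Sum.inl (Subtype.ext this)
  · have h0 : (0:ℕ) = k'.1 + 1 := congrArg (fun L => nth L 0) (congrArg Subtype.val h)
    omega
  · have h0 : k.1 + 1 = (0:ℕ) := congrArg (fun L => nth L 0) (congrArg Subtype.val h)
    omega
  · have h0 : k.1 + 1 = k'.1 + 1 := congrArg (fun L => nth L 0) (congrArg Subtype.val h)
    have hk : k = k' := Fin.ext (by omega)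
    subst hk
    have hl : consB k.1 s t = consB k.1 s' t' := congrArg Subtype.val h
    rw [consB, consB, List.cons.injEq, List.cons.injEq] at hl
    have happ := hl.2.2
    have hlens : s.length = k.1 := by simpa using hs.1.length_eq
    have hlens' : s'.length = k.1 := by simpa using hs'.1.length_eq
    obtain ⟨h1, h2⟩ := List.append_inj happ (by simp [hlens, hlens'])
    have hseq : s = s' := List.map_injective_iff.mpr Nat.succ_injective h1
    have hteq : t = t' := List.map_injective_iff.mpr (fun a b hab => by simpa using hab) h2
    subst hseq
    subst hteq
    rfl

lemma fwd_surjective (n : ℕ) : Function.Surjective (@fwd n) := by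
  rintro ⟨l, hp, hsim, h231⟩
  have hlen : l.length = n + 1 := by simpa using hp.length_eq
  have hnd : l.Nodup := hp.nodup_iff.mpr List.nodup_range
  have hval : ∀ i, i < l.length → nth l i < n+1 := fun i hi => nth_lt_of_perm_range hp i hi
  have hinj : ∀ i j, i < l.length → j < l.length → nth l i = nth l j → i = j := by
    intro i j hi hj hij
    rw [nth_eq_getElem _ _ hi, nth_eq_getElem _ _ hj] at hij
    exact (List.Nodup.getElem_inj_iff hnd).mp hij
  have h0mem : (0:ℕ) ∈ l := hp.mem_iff.mpr (by simp)
  obtain ⟨p, hpl, hp0⟩ := List.mem_iff_getElem.mp h0mem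
  rw [← nth_eq_getElem _ _ hpl] at hp0
  have hple : p ≤ 1 := by
    by_contra hp2
    push_neg at hp2
    have hdec : ∀ i j, i < j → j < p → nth l j < nth l i := by
      intro i j hij hjp
      have hiL : i < l.length := by omega
      have hjL : j < l.length := by omega
      rcases Nat.lt_trichotomy (nth l i) (nth l j) with hlt | heq | hgt
      · exfalso
        refine h231 ⟨i, j, p, hij, hjp, hpl, ?_, hlt⟩
        rw [hp0]
        have : nth l i ≠ 0 := by
          intro h0
          have := hinj i p hiL hpl (by rw [h0, hp0])
          omega
        omega
      · have := hinj i j hiL hjL heq; omega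
      · exact hgt
    have d1 : nth l (p-1) < nth l (p-2) := hdec (p-2) (p-1) (by omega) (by omega)
    have d0 : 0 < nth l (p-1) := by
      have : nth l (p-1) ≠ 0 := by
        intro h0
        have := hinj (p-1) p (by omega) hpl (by rw [h0, hp0])
        omega
      omega
    refine hsim (n+2) ⟨p-2, p-1, p, by omega, by omega, hpl, ?_, ?_, ?_,
      fun m h1 h2 => by omega, fun m h1 h2 => by omega, by rw [hp0]; omega, d1⟩
    · have := hval (p-2) (by omega); omega
    · have := hval (p-1) (by omega); omega
    · have := hval p hpl; omega
  rcases Nat.lt_or_ge p 1 with hp1 | hp1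
  · -- case A : 0 at the front
    have hpz : p = 0 := by omega
    subst hpz
    obtain ⟨x, l', rfl⟩ : ∃ x l', l = x :: l' := by
      cases l with
      | nil => simp at hlen
      | cons x l' => exact ⟨x, l', rfl⟩
    have hx : x = 0 := hp0
    subst hx
    have hl' : l'.Perm (List.map Nat.succ (List.range n)) := by
      have h := hp
      rw [List.range_succ_eq_map] at h
      exact h.cons_inv
    have hge : ∀ y ∈ l', 1 ≤ y := by
      intro y hy
      obtain ⟨a, _, rfl⟩ := List.mem_map.mp (hl'.mem_iff.mp hy)
      exact Nat.succ_le_succ (Nat.zero_le a)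
    have hmap : (l'.map Nat.pred).map Nat.succ = l' := by
      rw [List.map_map]
      exact (List.map_congr_left
        (fun y hy => Nat.succ_pred_eq_of_pos (hge y hy))).trans (List.map_id l')
    have hsperm : (l'.map Nat.pred).Perm (List.range n) := by
      have h := hl'.map Nat.pred
      rw [List.map_map] at h
      refine h.trans ?_
      rw [(List.map_congr_left (fun y _ => rfl : ∀ y ∈ List.range n, (Nat.pred ∘ Nat.succ) y = id y)).trans
        (List.map_id _)]
    have hconsA : (0 : ℕ) :: l' = consA (l'.map Nat.pred) := by
      rw [consA, hmap]
    rw [hconsA] at hsim h231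
    refine ⟨Sum.inl ⟨l'.map Nat.pred, hsperm, (sim_consA _).mp hsim,
      fun h => h231 ((has231_consA _).mpr h)⟩, ?_⟩
    exact Subtype.ext hconsA.symm
  · -- case B
    have hpz : p = 1 := by omega
    subst hpz
    obtain ⟨x, y, r, rfl⟩ : ∃ x y r, l = x :: y :: r := by
      cases l with
      | nil => simp at hlen
      | cons x l0 =>
        cases l0 with
        | nil => simp at hpl
        | cons y r => exact ⟨x, y, r, rfl⟩
    have hy : y = 0 := hp0
    subst hy
    have hxne : x ≠ 0 := by
      intro h0
      have := hinj 0 1 (by simp) (by simp) (by rw [show nth (x::0::r) 0 = x from rfl, h0]; rfl)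
      omega
    have hn1 : 1 ≤ n := by
      simp at hlen; omega
    obtain ⟨K, rfl⟩ : ∃ K, x = K + 1 := ⟨x - 1, by omega⟩
    have hKn : K < n := by
      have := hval 0 (by simp)
      rw [show nth ((K+1)::0::r) 0 = K+1 from rfl] at this
      omega
    set M := n - 1 - K with hM
    -- r is a permutation of the expected multiset
    have hr : r.Perm (List.map Nat.succ (List.range K) ++
        List.map (fun v => v + (K+2)) (List.range M)) := by
      have hc := consB_perm K M (List.range K) (List.range M) (List.Perm.refl _) (List.Perm.refl _)
      have h6 : (consB K (List.range K) (List.range M)).Perm (List.range (n+1)) := by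
        rwa [show K + M + 2 = n + 1 from by omega] at hc
      have h5 := hp.trans h6.symm
      rw [consB] at h5
      exact (h5.cons_inv).cons_inv
    -- separation
    have hsep : ∀ i j, i < j → j < r.length →
        (fun v => decide (v < K+1)) (nth r j) = true →
        (fun v => decide (v < K+1)) (nth r i) = true := by
      intro i j hij hjr hj
      simp only [decide_eq_true_eq] at hj ⊢
      by_contra hi
      push_neg at hi
      have hne : nth r i ≠ K + 1 := by
        intro he
        have : nth ((K+1) :: 0 :: r) (i+2) = nth ((K+1) :: 0 :: r) 0 := by
          rw [show nth ((K+1) :: 0 :: r) (i+2) = nth r i from rfl, he]; rfl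
        have := hinj (i+2) 0 (by simp; omega) (by simp) this
        omega
      refine h231 ⟨0, i+2, j+2, by omega, by omega, by simp; omega, ?_, ?_⟩
      · rw [show nth ((K+1) :: 0 :: r) (j+2) = nth r j from rfl,
          show nth ((K+1) :: 0 :: r) 0 = K+1 from rfl]
        omega
      · rw [show nth ((K+1) :: 0 :: r) (i+2) = nth r i from rfl,
          show nth ((K+1) :: 0 :: r) 0 = K+1 from rfl]
        omega
    have hsplit := osl (fun v => decide (v < K+1)) r hsep
    set A := r.filter (fun v => decide (v < K+1)) with hA_def
    set B := r.filter (fun v => !(decide (v < K+1))) with hB_def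
    -- A and B are permutations of the two blocks
    have hA : A.Perm (List.map Nat.succ (List.range K)) := by
      have h := hr.filter (fun v => decide (v < K+1))
      rw [List.filter_append] at h
      have e1 : (List.map Nat.succ (List.range K)).filter (fun v => decide (v < K+1)) =
          List.map Nat.succ (List.range K) := by
        apply List.filter_eq_self.mpr
        intro a ha
        obtain ⟨y, hy, rfl⟩ := List.mem_map.mp ha
        have := List.mem_range.mp hy
        simp; omega
      have e2 : (List.map (fun v => v + (K+2)) (List.range M)).filter (fun v => decide (v < K+1)) =
          [] := by
        apply List.filter_eq_nil_iff.mpr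
        intro a ha
        obtain ⟨y, hy, rfl⟩ := List.mem_map.mp ha
        simp; omega
      rw [e1, e2, List.append_nil] at h
      exact h
    have hB : B.Perm (List.map (fun v => v + (K+2)) (List.range M)) := by
      have h := hr.filter (fun v => !(decide (v < K+1)))
      rw [List.filter_append] at h
      have e1 : (List.map Nat.succ (List.range K)).filter (fun v => !(decide (v < K+1))) = [] := by
        apply List.filter_eq_nil_iff.mpr
        intro a ha
        obtain ⟨y, hy, rfl⟩ := List.mem_map.mp ha
        have := List.mem_range.mp hy
        simp; omega
      have e2 : (List.map (fun v => v + (K+2)) (List.range M)).filter (fun v => !(decide (v < K+1))) =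
          List.map (fun v => v + (K+2)) (List.range M) := by
        apply List.filter_eq_self.mpr
        intro a ha
        obtain ⟨y, hy, rfl⟩ := List.mem_map.mp ha
        simp; omega
      rw [e1, e2, List.nil_append] at h
      exact h
    have hAge : ∀ y ∈ A, 1 ≤ y := by
      intro y hy
      obtain ⟨a, _, rfl⟩ := List.mem_map.mp (hA.mem_iff.mp hy)
      exact Nat.succ_le_succ (Nat.zero_le a)
    have hBge : ∀ y ∈ B, K + 2 ≤ y := by
      intro y hy
      obtain ⟨a, _, rfl⟩ := List.mem_map.mp (hB.mem_iff.mp hy)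
      omega
    set s := A.map Nat.pred with hs_def
    set t := B.map (fun v => v - (K+2)) with ht_def
    have hmapA : s.map Nat.succ = A := by
      rw [hs_def, List.map_map]
      exact (List.map_congr_left
        (fun y hy => Nat.succ_pred_eq_of_pos (hAge y hy))).trans (List.map_id A)
    have hmapB : t.map (fun v => v + (K+2)) = B := by
      rw [ht_def, List.map_map]
      refine (List.map_congr_left ?_).trans (List.map_id B)
      intro y hy
      have := hBge y hy
      simp; omega
    have hsperm : s.Perm (List.range K) := by
      have h := hA.map Nat.pred
      rw [List.map_map] at h
      refine h.trans ?_
      rw [(List.map_congr_left (fun y _ => rfl : ∀ y ∈ List.range K, (Nat.pred ∘ Nat.succ) y = id y)).trans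
        (List.map_id _)]
    have htperm : t.Perm (List.range M) := by
      have h := hB.map (fun v => v - (K+2))
      rw [List.map_map] at h
      refine h.trans ?_
      rw [(List.map_congr_left (by intro y _; simp :
        ∀ y ∈ List.range M, ((fun v => v - (K+2)) ∘ (fun v => v + (K+2))) y = id y)).trans
        (List.map_id _)]
    have hconsB : (K+1) :: (0:ℕ) :: r = consB K s t := by
      rw [consB, hmapA, hmapB, ← hsplit]
    rw [hconsB] at hsim h231
    have hs' : ∀ z ∈ s, z < K := fun z hz => by simpa using hsperm.mem_iff.mp hz
    have hsims := (sim_consB K s t hs').mp hsim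
    refine ⟨Sum.inr ⟨⟨K, hKn⟩, ⟨s, hsperm, hsims.1, fun h =>
        h231 ((has231_consB K s t hs').mpr (Or.inl h))⟩,
      ⟨t, htperm, hsims.2, fun h => h231 ((has231_consB K s t hs').mpr (Or.inr h))⟩⟩, ?_⟩
    exact Subtype.ext hconsB.symm

lemma card_T_rec (n : ℕ) :
    Nat.card (T (n+1)) = Nat.card (T n) +
      ∑ k ∈ (Finset.range n).attach, Nat.card (T k.1) * Nat.card (T (n - 1 - k.1)) := by
  rw [← Nat.card_eq_of_bijective (@fwd n) ⟨fwd_injective n, fwd_surjective n⟩]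
  letI : ∀ m : ℕ, Fintype (T m) := fun m => Fintype.ofFinite _
  rw [Nat.card_sum]
  congr 1
  rw [Nat.card_eq_fintype_card, Fintype.card_sigma]
  have : ∀ k : Fin n, Fintype.card (T k.1 × T (n - 1 - k.1)) =
      Nat.card (T k.1) * Nat.card (T (n - 1 - k.1)) := by
    intro k
    rw [Fintype.card_prod, Nat.card_eq_fintype_card, Nat.card_eq_fintype_card]
  rw [Finset.sum_congr rfl (fun k _ => this k)]
  rw [Finset.sum_attach (Finset.range n) (fun k => Nat.card (T k) * Nat.card (T (n - 1 - k)))]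
  exact Fin.sum_univ_eq_sum_range (fun k => Nat.card (T k) * Nat.card (T (n - 1 - k))) n

lemma card_T_eq_motzkin (n : ℕ) : Nat.card (T n) = motzkin n := by
  induction n using Nat.strong_induction_on with
  | _ n ih =>
    match n with
    | 0 => rw [Nat.card_unique]; simp [motzkin]
    | n + 1 =>
      rw [card_T_rec, motzkin]
      congr 1
      · exact ih n (by omega)
      · refine Finset.sum_congr rfl ?_
        intro k hk
        have hk' : k.1 < n := Finset.mem_range.mp k.2
        rw [ih k.1 (by omega), ih (n - 1 - k.1) (by omega)]

end SimsunAux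

/-- The number of simsun permutations of `{1, …, n}` avoiding the pattern 231
equals the Motzkin number `M n`. -/


theorem simsun_avoid231_count (n : ℕ) :
    Nat.card {π : Equiv.Perm (Fin n) // IsSimsun π ∧ ¬ Contains231 π} = motzkin n := by
  rw [SimsunAux.card_T, SimsunAux.card_T_eq_motzkin]
end

section
/- For every n ≥ 0 and every permutation π of {1,…,n} avoiding the pattern 231, the following are equivalent: (i) π is simsun; (ii) π has no double descent (no index i with π_i > π_{i+1} > π_{i+2}); (iii) π avoids the generalized pattern 3̂2̂1 (there is no pair of indices i, j with i+1 < j and π_i > π_{i+1} > π_j). -/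
lemma dd_not_simsun {n : ℕ} (π : Equiv.Perm (Fin n)) (h : HasDoubleDescent π) :
    ¬ IsSimsun π := by
  obtain ⟨i, h2, hcb, hba⟩ := h
  intro hs
  exact hs n ⟨⟨i, by omega⟩, ⟨i+1, by omega⟩, ⟨i+2, h2⟩,
    by simp [Fin.lt_def], by simp [Fin.lt_def],
    (π _).isLt, (π _).isLt, (π _).isLt,
    fun m hm1 hm2 => by simp [Fin.lt_def] at hm1 hm2; omega,
    fun m hm1 hm2 => by simp [Fin.lt_def] at hm1 hm2; omega,
    hcb, hba⟩

lemma not_simsun_dd {n : ℕ} (π : Equiv.Perm (Fin n)) (h231 : ¬ Contains231 π)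
    (h : ¬ IsSimsun π) : HasDoubleDescent π := by
  simp only [IsSimsun, not_forall, not_not] at h
  obtain ⟨k, a, b, c, hab, hbc, hak, hbk, hck, gap1, gap2, hcb, hba⟩ := h
  have hb : b.val = a.val + 1 := by
    by_contra hne
    have hlt : a.val + 1 < b.val := by
      have := Fin.lt_def.mp hab; omega
    set m : Fin n := ⟨a.val + 1, by omega⟩ with hm
    have h1 : a < m := by simp [Fin.lt_def, hm]
    have h2 : m < b := by simp [Fin.lt_def, hm]; omega
    have := gap1 m h1 h2
    exact h231 ⟨a, m, b, h1, h2, Fin.lt_def.mpr (by omega), Fin.lt_def.mpr (by omega)⟩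
  have hc : c.val = b.val + 1 := by
    by_contra hne
    have hlt : b.val + 1 < c.val := by
      have := Fin.lt_def.mp hbc; omega
    set m : Fin n := ⟨b.val + 1, by omega⟩ with hm
    have h1 : b < m := by simp [Fin.lt_def, hm]
    have h2 : m < c := by simp [Fin.lt_def, hm]; omega
    have := gap2 m h1 h2
    exact h231 ⟨b, m, c, h1, h2, Fin.lt_def.mpr (by omega), Fin.lt_def.mpr (by omega)⟩
  refine ⟨a.val, by omega, ?_, ?_⟩
  · have e1 : (⟨a.val + 2, by omega⟩ : Fin n) = c := Fin.ext (by simp <;> omega)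
    have e2 : (⟨a.val + 1, by omega⟩ : Fin n) = b := Fin.ext (by simp <;> omega)
    rw [e1, e2]; exact Fin.lt_def.mpr hcb
  · have e2 : (⟨a.val + 1, by omega⟩ : Fin n) = b := Fin.ext (by simp <;> omega)
    have e3 : (⟨a.val, by omega⟩ : Fin n) = a := Fin.ext (by simp <;> omega)
    rw [e2, e3]; exact Fin.lt_def.mpr hba

lemma dd_32 {n : ℕ} (π : Equiv.Perm (Fin n)) (h : HasDoubleDescent π) :
    Contains32hat1 π := by
  obtain ⟨i, h2, hcb, hba⟩ := h
  exact ⟨i, i + 2, h2, by omega, hcb, hba⟩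

lemma c32_dd {n : ℕ} (π : Equiv.Perm (Fin n)) (h231 : ¬ Contains231 π)
    (h : Contains32hat1 π) : HasDoubleDescent π := by
  obtain ⟨i, j, hj, hij, hji, hii⟩ := h
  have h2 : i + 2 < n := by omega
  rcases eq_or_lt_of_le (show i + 2 ≤ j by omega) with heq | hlt
  · subst heq
    exact ⟨i, hj, hji, hii⟩
  · rcases lt_trichotomy (π ⟨i + 2, h2⟩) (π ⟨i + 1, by omega⟩) with hx | hx | hx
    · exact ⟨i, h2, hx, hii⟩
    · exact absurd (π.injective hx) (by simp [Fin.ext_iff])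
    · exact absurd ⟨⟨i + 1, by omega⟩, ⟨i + 2, h2⟩, ⟨j, hj⟩,
        by simp [Fin.lt_def], by simp [Fin.lt_def]; omega, hji, hx⟩ h231


/-- For a 231-avoiding permutation `π`, the following are equivalent:
(i) `π` is simsun; (ii) `π` has no double descent; (iii) `π` avoids the
generalized pattern 3̂2̂1. -/
theorem simsun_tfae_of_avoids231 (n : ℕ) (π : Equiv.Perm (Fin n))
    (h231 : ¬ Contains231 π) :
    (IsSimsun π ↔ ¬ HasDoubleDescent π) ∧
      (IsSimsun π ↔ ¬ Contains32hat1 π) := by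
  constructor
  · exact ⟨fun hs hdd => dd_not_simsun π hdd hs,
      fun hnd => by_contra fun hns => hnd (not_simsun_dd π h231 hns)⟩
  · constructor
    · exact fun hs hc => dd_not_simsun π (c32_dd π h231 hc) hs
    · exact fun hnc => by_contra fun hns => hnc (dd_32 π (not_simsun_dd π h231 hns))
end

section
/- For every n ≥ 1, the number of simsun permutations of {1,…,n} that avoid the pattern 312 equals 2^{n−1}. -/
/-- `π` contains the pattern 312. -/
def Contains312 {n : ℕ} (π : Equiv.Perm (Fin n)) : Prop :=
  ∃ a b c : Fin n, a < b ∧ b < c ∧ π b < π c ∧ π c < π a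


open Finset

/-- The key structural condition: every entry exceeds its (0-based) position by at most 1. -/
def CondLE {n : ℕ} (π : Equiv.Perm (Fin n)) : Prop :=
  ∀ i : Fin n, (π i : ℕ) ≤ (i : ℕ) + 1

lemma card_filter_lt {n : ℕ} (π : Equiv.Perm (Fin n)) (t : Fin n) :
    (Finset.univ.filter fun p : Fin n => (π p : ℕ) < (t : ℕ)).card = (t : ℕ) := by
  have h : (Finset.univ.filter fun p : Fin n => (π p : ℕ) < (t : ℕ)).card
      = (Finset.range (t : ℕ)).card := by
    apply Finset.card_bij (fun p _ => (π p : ℕ))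
    · intro p hp
      simp only [Finset.mem_filter] at hp
      exact Finset.mem_range.2 hp.2
    · intro p hp q hq h
      exact π.injective (Fin.val_injective h)
    · intro v hv
      rw [Finset.mem_range] at hv
      have hv' : v < n := lt_trans hv t.isLt
      refine ⟨π.symm ⟨v, hv'⟩, ?_, ?_⟩
      · simp only [Finset.mem_filter, Finset.mem_univ, true_and, Equiv.apply_symm_apply]
        exact hv
      · simp only [Equiv.apply_symm_apply]
  rwa [Finset.card_range] at h

lemma card_filter_pos_lt {n : ℕ} (t : Fin n) :
    (Finset.univ.filter fun p : Fin n => (p : ℕ) < (t : ℕ)).card = (t : ℕ) := by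
  simpa using card_filter_lt (Equiv.refl (Fin n)) t

lemma two_after {n : ℕ} (π : Equiv.Perm (Fin n)) (a : Fin n)
    (ha : (a : ℕ) + 2 ≤ (π a : ℕ)) :
    2 ≤ (Finset.univ.filter fun p : Fin n => a < p ∧ (π p : ℕ) < (π a : ℕ)).card := by
  classical
  set S := Finset.univ.filter fun p : Fin n => a < p ∧ (π p : ℕ) < (π a : ℕ) with hS
  have hT : (Finset.univ.filter fun p : Fin n => (π p : ℕ) < (π a : ℕ)).card = (π a : ℕ) :=
    card_filter_lt π (π a)
  have hsub : (Finset.univ.filter fun p : Fin n => (π p : ℕ) < (π a : ℕ)) ⊆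
      S ∪ (Finset.univ.filter fun p : Fin n => (p : ℕ) < (a : ℕ)) := by
    intro p hp
    simp only [Finset.mem_filter, Finset.mem_univ, true_and] at hp
    rcases lt_trichotomy a p with h | h | h
    · refine Finset.mem_union_left _ ?_
      simp only [hS, Finset.mem_filter, Finset.mem_univ, true_and]
      exact ⟨h, hp⟩
    · exfalso
      subst h
      omega
    · refine Finset.mem_union_right _ ?_
      simp only [Finset.mem_filter, Finset.mem_univ, true_and]
      exact h
  have h1 := Finset.card_le_card hsub
  have h2 := Finset.card_union_le S (Finset.univ.filter fun p : Fin n => (p : ℕ) < (a : ℕ))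
  have h3 := card_filter_pos_lt a
  omega

lemma no_two_after {n : ℕ} (π : Equiv.Perm (Fin n)) (h : CondLE π) (a b c : Fin n)
    (hab : a < b) (hbc : b < c) (hb : (π b : ℕ) < (π a : ℕ)) (hc : (π c : ℕ) < (π a : ℕ)) :
    False := by
  classical
  set T := Finset.univ.filter fun p : Fin n => (π p : ℕ) < (π a : ℕ) with hTdef
  have hT : T.card = (π a : ℕ) := card_filter_lt π (π a)
  set A := Finset.univ.filter fun p : Fin n => (p : ℕ) < (a : ℕ) ∧ (π a : ℕ) ≤ (π p : ℕ) with hAdef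
  set T1 := Finset.univ.filter fun p : Fin n => (p : ℕ) < (a : ℕ) ∧ (π p : ℕ) < (π a : ℕ) with hT1def
  have hA : A.card ≤ (a : ℕ) - (π a : ℕ) := by
    have hcard : A.card ≤ (Finset.Ioc ((π a : ℕ)) ((a : ℕ))).card := by
      apply Finset.card_le_card_of_injOn (fun p => (π p : ℕ))
      · intro p hp
        simp only [Finset.mem_coe, hAdef, Finset.mem_filter, Finset.mem_univ, true_and] at hp
        have hne : (π p : ℕ) ≠ (π a : ℕ) := by
          intro hv
          have : p = a := π.injective (Fin.val_injective hv)
          omega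
        have hple := h p
        simp only [Finset.mem_coe, Finset.mem_Ioc]
        omega
      · intro p hp q hq hpq
        exact π.injective (Fin.val_injective hpq)
    simpa [Nat.card_Ioc] using hcard
  -- every position < a lies in A or T1
  have hPsub : (Finset.univ.filter fun p : Fin n => (p : ℕ) < (a : ℕ)) ⊆ A ∪ T1 := by
    intro p hp
    simp only [Finset.mem_filter, Finset.mem_univ, true_and] at hp
    rcases le_or_gt ((π a : ℕ)) ((π p : ℕ)) with hle | hlt
    · refine Finset.mem_union_left _ ?_
      simp only [hAdef, Finset.mem_filter, Finset.mem_univ, true_and]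
      exact ⟨hp, hle⟩
    · refine Finset.mem_union_right _ ?_
      simp only [hT1def, Finset.mem_filter, Finset.mem_univ, true_and]
      exact ⟨hp, hlt⟩
  have hP := card_filter_pos_lt a
  have hPcard := Finset.card_le_card hPsub
  have hPU := Finset.card_union_le A T1
  -- T1 ∪ {b, c} ⊆ T, disjoint
  have hbcne : b ≠ c := ne_of_lt hbc
  have hsub2 : T1 ∪ {b, c} ⊆ T := by
    intro p hp
    rcases Finset.mem_union.1 hp with hp | hp
    · simp only [hT1def, Finset.mem_filter, Finset.mem_univ, true_and] at hp
      simp only [hTdef, Finset.mem_filter, Finset.mem_univ, true_and]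
      exact hp.2
    · simp only [Finset.mem_insert, Finset.mem_singleton] at hp
      simp only [hTdef, Finset.mem_filter, Finset.mem_univ, true_and]
      rcases hp with rfl | rfl
      · exact hb
      · exact hc
  have hdisj : Disjoint T1 ({b, c} : Finset (Fin n)) := by
    rw [Finset.disjoint_right]
    intro p hp hpT1
    simp only [Finset.mem_insert, Finset.mem_singleton] at hp
    simp only [hT1def, Finset.mem_filter, Finset.mem_univ, true_and] at hpT1
    have hab' : (a : ℕ) < (b : ℕ) := hab
    have hbc' : (b : ℕ) < (c : ℕ) := hbc
    rcases hp with rfl | rfl <;> omega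
  have hcard2 : T1.card + 2 ≤ T.card := by
    have h2 : ({b, c} : Finset (Fin n)).card = 2 := by
      rw [Finset.card_insert_of_notMem (by simpa using hbcne), Finset.card_singleton]
    have := Finset.card_le_card hsub2
    rw [Finset.card_union_of_disjoint hdisj, h2] at this
    exact this
  have hha := h a
  omega

lemma simsun_avoid_iff {n : ℕ} (π : Equiv.Perm (Fin n)) :
    (IsSimsun π ∧ ¬ Contains312 π) ↔ CondLE π := by
  constructor
  · rintro ⟨hs, h312⟩ i
    by_contra hcon
    push_neg at hcon
    have hi2 : (i : ℕ) + 2 ≤ (π i : ℕ) := hcon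
    classical
    set S := Finset.univ.filter fun p : Fin n => i < p ∧ (π p : ℕ) < (π i : ℕ) with hSdef
    have hS : 2 ≤ S.card := two_after π i hi2
    have hne : S.Nonempty := Finset.card_pos.1 (by omega)
    set b := S.min' hne with hbdef
    have hbS : b ∈ S := S.min'_mem hne
    have hne2 : (S.erase b).Nonempty := by
      rw [← Finset.card_pos, Finset.card_erase_of_mem hbS]; omega
    set c := (S.erase b).min' hne2 with hcdef
    have hcS' : c ∈ S.erase b := Finset.min'_mem _ hne2
    have hcS : c ∈ S := Finset.mem_of_mem_erase hcS'
    have hcb : c ≠ b := Finset.ne_of_mem_erase hcS'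
    have hbprop : i < b ∧ (π b : ℕ) < (π i : ℕ) := by
      simpa [hSdef] using hbS
    have hcprop : i < c ∧ (π c : ℕ) < (π i : ℕ) := by
      simpa [hSdef] using hcS
    have hbc : b < c := lt_of_le_of_ne (S.min'_le c hcS) (Ne.symm hcb)
    have hπcb : (π c : ℕ) < (π b : ℕ) := by
      rcases lt_trichotomy ((π c : ℕ)) ((π b : ℕ)) with hh | hh | hh
      · exact hh
      · exact absurd (π.injective (Fin.val_injective hh)) hcb
      · exact absurd ⟨i, b, c, hbprop.1, hbc, Fin.lt_def.2 hh, Fin.lt_def.2 hcprop.2⟩ h312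
    apply hs ((π i : ℕ) + 1)
    refine ⟨i, b, c, hbprop.1, hbc, by omega, by omega, by omega, ?_, ?_, hπcb, hbprop.2⟩
    · intro m him hmb
      by_contra hc2
      push_neg at hc2
      have hne3 : (π m : ℕ) ≠ (π i : ℕ) := by
        intro hv
        have : m = i := π.injective (Fin.val_injective hv)
        subst this
        exact lt_irrefl m him
      have hmS : m ∈ S := by
        simp only [hSdef, Finset.mem_filter, Finset.mem_univ, true_and]
        exact ⟨him, by omega⟩
      exact absurd (S.min'_le m hmS) (not_le.2 hmb)
    · intro m hbm hmc
      by_contra hc2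
      push_neg at hc2
      have hne3 : (π m : ℕ) ≠ (π i : ℕ) := by
        intro hv
        have : m = i := π.injective (Fin.val_injective hv)
        subst this
        exact lt_irrefl m (lt_trans hbprop.1 hbm)
      have hmS : m ∈ S.erase b := by
        rw [Finset.mem_erase]
        refine ⟨ne_of_gt hbm, ?_⟩
        simp only [hSdef, Finset.mem_filter, Finset.mem_univ, true_and]
        exact ⟨lt_trans hbprop.1 hbm, by omega⟩
      exact absurd ((S.erase b).min'_le m hmS) (not_le.2 hmc)
  · intro h
    constructor
    · rintro k ⟨a, b, c, hab, hbc, _, _, _, _, _, hcb, hba⟩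
      exact no_two_after π h a b c hab hbc hba (lt_trans hcb hba)
    · rintro ⟨a, b, c, hab, hbc, hbc', hca⟩
      have h1 : (π c : ℕ) < (π a : ℕ) := hca
      have h2 : (π b : ℕ) < (π c : ℕ) := hbc'
      exact no_two_after π h a b c hab hbc (lt_trans h2 h1) h1

lemma condLE_decompose {n : ℕ} (x : Fin (n + 1) × Equiv.Perm (Fin n)) :
    CondLE (Equiv.Perm.decomposeFin.symm x) ↔ ((x.1 : ℕ) ≤ 1 ∧ CondLE x.2) := by
  obtain ⟨p, e⟩ := x
  show CondLE (Equiv.Perm.decomposeFin.symm (p, e)) ↔ ((p : ℕ) ≤ 1 ∧ CondLE e)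
  constructor
  · intro h
    have hp : (p : ℕ) ≤ 1 := by simpa using h 0
    refine ⟨hp, fun i => ?_⟩
    have hi := h i.succ
    rw [Equiv.Perm.decomposeFin_symm_apply_succ] at hi
    by_cases hpe : (e i).succ = p
    · have : (e i : ℕ) + 1 = (p : ℕ) := by
        rw [← hpe]; simp [Fin.val_succ]
      omega
    · rw [Equiv.swap_apply_of_ne_of_ne (Fin.succ_ne_zero _) hpe] at hi
      simp only [Fin.val_succ] at hi
      have : (i.succ : ℕ) = (i : ℕ) + 1 := Fin.val_succ i
      omega
  · rintro ⟨hp, he⟩ i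
    refine Fin.cases ?_ (fun j => ?_) i
    · simpa using hp
    · rw [Equiv.Perm.decomposeFin_symm_apply_succ]
      by_cases hpe : (e j).succ = p
      · rw [hpe, Equiv.swap_apply_right]
        simp
      · rw [Equiv.swap_apply_of_ne_of_ne (Fin.succ_ne_zero _) hpe]
        have h1 := he j
        have h2 : ((e j).succ : ℕ) = (e j : ℕ) + 1 := Fin.val_succ _
        have h3 : (j.succ : ℕ) = (j : ℕ) + 1 := Fin.val_succ j
        omega

lemma card_le_one_fin : ∀ n : ℕ, Nat.card {p : Fin (n + 1) // (p : ℕ) ≤ 1} = min 2 (n + 1) := by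
  intro n
  match n with
  | 0 =>
    rw [Nat.card_eq_fintype_card]
    decide
  | m + 1 =>
    have e : {p : Fin (m + 2) // (p : ℕ) ≤ 1} ≃ Fin 2 :=
      { toFun := fun p => ⟨(p.1 : ℕ), by omega⟩
        invFun := fun i => ⟨⟨(i : ℕ), by omega⟩, by
          show (i : ℕ) ≤ 1
          omega⟩
        left_inv := fun p => Subtype.ext (Fin.ext rfl)
        right_inv := fun i => Fin.ext rfl }
    rw [Nat.card_congr e, Nat.card_eq_fintype_card, Fintype.card_fin]
    omega

lemma card_condLE : ∀ n : ℕ, Nat.card {π : Equiv.Perm (Fin n) // CondLE π} = 2 ^ (n - 1) := by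
  intro n
  induction n with
  | zero =>
    have hall : ∀ π : Equiv.Perm (Fin 0), CondLE π := fun π i => i.elim0
    rw [Nat.card_congr (Equiv.subtypeUnivEquiv hall), Nat.card_eq_fintype_card]
    simp
  | succ n ih =>
    have e1 : {π : Equiv.Perm (Fin (n + 1)) // CondLE π} ≃
        {x : Fin (n + 1) × Equiv.Perm (Fin n) // (x.1 : ℕ) ≤ 1 ∧ CondLE x.2} := by
      refine Equiv.subtypeEquiv Equiv.Perm.decomposeFin (fun π => ?_)
      conv_lhs => rw [show π = Equiv.Perm.decomposeFin.symm (Equiv.Perm.decomposeFin π) from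
        (Equiv.symm_apply_apply _ _).symm]
      exact condLE_decompose _
    have e2 : {x : Fin (n + 1) × Equiv.Perm (Fin n) // (x.1 : ℕ) ≤ 1 ∧ CondLE x.2} ≃
        {p : Fin (n + 1) // (p : ℕ) ≤ 1} × {e : Equiv.Perm (Fin n) // CondLE e} :=
      Equiv.subtypeProdEquivProd (p := fun p : Fin (n + 1) => (p : ℕ) ≤ 1)
        (q := fun e : Equiv.Perm (Fin n) => CondLE e)
    rw [Nat.card_congr (e1.trans e2), Nat.card_prod, ih, card_le_one_fin]
    rcases n with _ | m
    · norm_num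
    · have : min 2 (m + 1 + 1) = 2 := by omega
      rw [this]
      rw [show m + 1 + 1 - 1 = (m + 1 - 1) + 1 by omega, pow_succ]
      ring

/-- For `n ≥ 1`, the number of simsun permutations of `{1, …, n}` avoiding the
pattern 312 equals `2 ^ (n - 1)`. -/
theorem simsun_avoid312_count (n : ℕ) (hn : 1 ≤ n) :
    Nat.card {π : Equiv.Perm (Fin n) // IsSimsun π ∧ ¬ Contains312 π} =
      2 ^ (n - 1) := by
  rw [Nat.card_congr (Equiv.subtypeEquivRight (fun π => simsun_avoid_iff π))]
  exact card_condLE n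
end
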